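/- arXiv:1607.05428 — 4 statements merged into one kernel-verified Lean document; each statement's English description precedes it below -/
import Mathlib

section
/- Let F be a polyhedral multifunction from X to Y, i.e., the graph of F, gph F = {(x,y) ∈ X × Y : y ∈ F(x)}, is the union of finitely many polyhedral convex sets. Then there exists a common modulus κ ≥ 0 such that F satisfies the error bound condition for every point y ∈ Y with F⁻¹(y) ≠ ∅; that is, for each such y there exists ε > 0 such that whenever x ∈ X satisfies dist(y, F(x)) ≤ ε, one has dist(x, F⁻¹(y)) ≤ κ · dist(y, F(x)). -/
/- STATEMENT 0: A polyhedral multifunction (graph is a finite union of polyhedral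
convex sets) satisfies the error bound condition for every point `y` with
`F⁻¹(y) ≠ ∅`, with a common modulus `κ ≥ 0`. -/

open Set

/-- A set is polyhedral if it is the intersection of finitely many closed half-spaces. -/
def IsPolyhedral {E : Type*} [NormedAddCommGroup E] [NormedSpace ℝ E] (C : Set E) : Prop :=
  ∃ s : Finset ((E →ₗ[ℝ] ℝ) × ℝ), C = {x | ∀ q ∈ s, q.1 x ≤ q.2}

open scoped RealInnerProductSpace

set_option linter.unusedSectionVars false

section Cone

variable {E : Type*} [NormedAddCommGroup E] [InnerProductSpace ℝ E] [FiniteDimensional ℝ E]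

/-- nonnegative combinations of elements of a finite set -/
def coneSet (u : Finset E) : Set E :=
  {x | ∃ μ : E → ℝ, (∀ v ∈ u, 0 ≤ μ v) ∧ ∑ v ∈ u, μ v • v = x}

/-- independence of a finite set of vectors -/
def FinIndep (w : Finset E) : Prop :=
  LinearIndependent ℝ (fun v : ((w : Set E) : Type _) => (v : E))

lemma zero_mem_coneSet (u : Finset E) : (0 : E) ∈ coneSet u :=
  ⟨0, fun _ _ => le_rfl, by simp⟩

lemma coneSet_mono {u w : Finset E} (h : u ⊆ w) : coneSet u ⊆ coneSet w := by
  classical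
  rintro x ⟨μ, hμ, hsum⟩
  refine ⟨fun v => if v ∈ u then μ v else 0, ?_, ?_⟩
  · intro v _; dsimp only; split
    · exact hμ _ ‹_›
    · exact le_rfl
  · rw [← hsum]
    simp only [ite_smul, zero_smul, Finset.sum_ite_mem]
    rw [Finset.inter_eq_right.2 h]

lemma mem_coneSet_self {u : Finset E} {v : E} (h : v ∈ u) : v ∈ coneSet u := by
  classical
  refine ⟨fun z => if z = v then 1 else 0, ?_, ?_⟩
  · intro z _; dsimp only; split <;> norm_num
  · have h2 : ∀ z ∈ u, (if z = v then (1:ℝ) else 0) • z = if z = v then z else 0 := by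
      intro z _; split <;> simp
    calc ∑ z ∈ u, (fun z => if z = v then (1:ℝ) else 0) z • z
        = ∑ z ∈ u, if z = v then z else 0 := Finset.sum_congr rfl h2
      _ = v := by rw [Finset.sum_ite_eq' u v (fun z => z), if_pos h]

lemma coneSet_caratheodory_aux : ∀ (n : ℕ) (u : Finset E), u.card = n → ∀ x ∈ coneSet u,
    ∃ w : Finset E, w ⊆ u ∧ FinIndep w ∧ x ∈ coneSet w := by
  classical
  intro n
  induction n using Nat.strong_induction_on with
  | _ n ih =>
  intro u hn x hx
  by_cases hli : FinIndep u
  · exact ⟨u, subset_rfl, hli, hx⟩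
  · -- extract a nontrivial dependence
    rw [FinIndep, linearIndependent_subtype_iff, linearIndepOn_iff] at hli
    push_neg at hli
    obtain ⟨l, hlsupp, hl0, hlne⟩ := hli
    have hsuppsub : l.support ⊆ u := by
      simpa [Finsupp.mem_supported] using hlsupp
    have hcsum : ∑ v ∈ u, l v • v = 0 := by
      rw [← Finset.sum_subset hsuppsub (fun v _ hv => by
        simp [Finsupp.notMem_support_iff.1 hv])]
      simpa [Finsupp.linearCombination_apply, Finsupp.sum] using hl0
    obtain ⟨v₀, hv₀⟩ : ∃ v₀, l v₀ ≠ 0 := by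
      by_contra h; push_neg at h; exact hlne (Finsupp.ext h)
    have hv₀u : v₀ ∈ u := hsuppsub (Finsupp.mem_support_iff.2 hv₀)
    -- make the positive-part nonempty
    obtain ⟨c, hcs, hcpos⟩ : ∃ c : E → ℝ, (∑ v ∈ u, c v • v = 0) ∧ ∃ v ∈ u, 0 < c v := by
      by_cases hp : ∃ v ∈ u, 0 < l v
      · exact ⟨l, hcsum, hp⟩
      · push_neg at hp
        refine ⟨fun v => -l v, by simpa using congrArg Neg.neg hcsum, v₀, hv₀u, ?_⟩
        have h1 := hp v₀ hv₀u
        have h2 : l v₀ < 0 := lt_of_le_of_ne h1 hv₀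
        show 0 < -l v₀
        linarith
    obtain ⟨μ, hμ0, hμsum⟩ := hx
    set T := u.filter (fun v => 0 < c v) with hT
    have hTne : T.Nonempty := by
      obtain ⟨v, hvu, hvc⟩ := hcpos
      exact ⟨v, Finset.mem_filter.2 ⟨hvu, hvc⟩⟩
    set g : E → ℝ := fun v => μ v / c v with hg
    obtain ⟨v₁, hv₁T, hv₁min⟩ := Finset.exists_mem_eq_inf' hTne g
    have hv₁u : v₁ ∈ u := (Finset.mem_filter.1 hv₁T).1
    have hv₁c : 0 < c v₁ := (Finset.mem_filter.1 hv₁T).2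
    set τ := T.inf' hTne g with hτ
    have hτ0 : 0 ≤ τ := by
      rw [hv₁min]; exact div_nonneg (hμ0 _ hv₁u) hv₁c.le
    set μ' : E → ℝ := fun v => μ v - τ * c v with hμ'
    have hμ'0 : ∀ v ∈ u, 0 ≤ μ' v := by
      intro v hv
      by_cases hcv : 0 < c v
      · have hle : τ ≤ g v := Finset.inf'_le g (Finset.mem_filter.2 ⟨hv, hcv⟩)
        have : τ * c v ≤ μ v := by
          rw [hg] at hle; simp only at hle
          calc τ * c v ≤ (μ v / c v) * c v := by
                exact mul_le_mul_of_nonneg_right hle hcv.le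
            _ = μ v := div_mul_cancel₀ _ hcv.ne'
        simp [hμ']; linarith
      · push_neg at hcv
        have : τ * c v ≤ 0 := mul_nonpos_of_nonneg_of_nonpos hτ0 hcv
        have := hμ0 v hv
        simp [hμ']; linarith
    have hμ'sum : ∑ v ∈ u, μ' v • v = x := by
      simp only [hμ', sub_smul, Finset.sum_sub_distrib, hμsum, mul_smul]
      rw [← Finset.smul_sum, hcs, smul_zero, sub_zero]
    have hμ'v₁ : μ' v₁ = 0 := by
      simp only [hμ', hv₁min, hg]
      field_simp
      simp
    have hxer : x ∈ coneSet (u.erase v₁) := by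
      refine ⟨μ', fun v hv => hμ'0 v (Finset.mem_of_mem_erase hv), ?_⟩
      rw [← hμ'sum]
      rw [← Finset.add_sum_erase u _ hv₁u, hμ'v₁, zero_smul, zero_add]
    have hcard : (u.erase v₁).card < u.card := Finset.card_erase_lt_of_mem hv₁u
    rw [hn] at hcard
    obtain ⟨w, hw1, hw2, hw3⟩ := ih _ hcard _ rfl x hxer
    exact ⟨w, hw1.trans (Finset.erase_subset _ _), hw2, hw3⟩

lemma coneSet_caratheodory (u : Finset E) {x : E} (hx : x ∈ coneSet u) :
    ∃ w : Finset E, w ⊆ u ∧ FinIndep w ∧ x ∈ coneSet w :=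
  coneSet_caratheodory_aux u.card u rfl x hx

lemma coneSet_eq_image (w : Finset E) :
    coneSet w = (Fintype.linearCombination ℝ (fun v : ((w : Set E) : Type _) => (v : E))) ''
      {μ : ((w : Set E) : Type _) → ℝ | ∀ i, 0 ≤ μ i} := by
  classical
  ext x
  constructor
  · rintro ⟨μ, hμ0, hsum⟩
    refine ⟨fun i => μ i, fun i => hμ0 _ i.2, ?_⟩
    rw [Fintype.linearCombination_apply, ← hsum]
    exact Finset.sum_finset_coe (fun v => μ v • v) w
  · rintro ⟨ν, hν, rfl⟩
    refine ⟨fun v => if h : v ∈ w then ν ⟨v, h⟩ else 0, ?_, ?_⟩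
    · intro v hv; dsimp only; rw [dif_pos hv]; exact hν _
    · rw [Fintype.linearCombination_apply, ← Finset.sum_finset_coe (fun v => _ • v) w]
      refine Finset.sum_congr rfl (fun i _ => ?_)
      rw [dif_pos (Finset.mem_coe.mp i.2)]

lemma finIndep_ker_bot {w : Finset E} (h : FinIndep w) :
    LinearMap.ker (Fintype.linearCombination ℝ
      (fun v : ((w : Set E) : Type _) => (v : E))) = ⊥ := by
  rw [LinearMap.ker_eq_bot']
  intro m hm
  rw [Fintype.linearCombination_apply] at hm
  exact funext (Fintype.linearIndependent_iff.1 h m hm)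

lemma coneSet_indep_isClosed {w : Finset E} (h : FinIndep w) : IsClosed (coneSet w) := by
  rw [coneSet_eq_image]
  set L := Fintype.linearCombination ℝ (fun v : ((w : Set E) : Type _) => (v : E)) with hL
  obtain ⟨K, -, hK⟩ := L.exists_antilipschitzWith (finIndep_ker_bot h)
  have hcont : UniformContinuous L :=
    (LinearMap.toContinuousLinearMap L).uniformContinuous
  have hemb := hK.isClosedEmbedding hcont
  apply hemb.isClosedMap
  have : {μ : ((w : Set E) : Type _) → ℝ | ∀ i, 0 ≤ μ i} = ⋂ i, {μ | 0 ≤ μ i} := by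
    ext; simp [Set.mem_iInter]
  rw [this]
  exact isClosed_iInter fun i => isClosed_le continuous_const (continuous_apply i)

lemma coneSet_isClosed (u : Finset E) : IsClosed (coneSet u) := by
  classical
  have : coneSet u = ⋃ w ∈ {w : Finset E | w ⊆ u ∧ FinIndep w}, coneSet w := by
    ext x
    simp only [Set.mem_iUnion, Set.mem_setOf_eq]
    constructor
    · intro hx
      obtain ⟨w, h1, h2, h3⟩ := coneSet_caratheodory u hx
      exact ⟨w, ⟨h1, h2⟩, h3⟩
    · rintro ⟨w, ⟨h1, -⟩, h3⟩
      exact coneSet_mono h1 h3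
  rw [this]
  apply Set.Finite.isClosed_biUnion
  · exact (u.powerset.finite_toSet).subset (fun w hw => Finset.mem_coe.2
      (Finset.mem_powerset.2 hw.1))
  · exact fun w hw => coneSet_indep_isClosed hw.2

lemma coneSet_dual_bound {w : Finset E} (h : FinIndep w) :
    ∃ c : ℝ, 0 ≤ c ∧ ∀ μ : E → ℝ, (∑ v ∈ w, μ v) ≤ c * ‖∑ v ∈ w, μ v • v‖ := by
  classical
  set L := Fintype.linearCombination ℝ (fun v : ((w : Set E) : Type _) => (v : E)) with hLdef
  obtain ⟨M, hM⟩ := L.exists_leftInverse_of_injective (finIndep_ker_bot h)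
  set S : (((w : Set E) : Type _) → ℝ) →ₗ[ℝ] ℝ :=
    Fintype.linearCombination ℝ (fun _ : ((w : Set E) : Type _) => (1:ℝ)) with hSdef
  set G := LinearMap.toContinuousLinearMap (S ∘ₗ M) with hGdef
  refine ⟨‖G‖, norm_nonneg _, ?_⟩
  intro μ
  have h1 : ∑ v ∈ w, μ v = S (fun i => μ i) := by
    rw [hSdef, Fintype.linearCombination_apply]
    simp [← Finset.sum_finset_coe (fun v => μ v) w]
  have h2 : L (fun i => μ i) = ∑ v ∈ w, μ v • v := by
    rw [hLdef, Fintype.linearCombination_apply]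
    exact Finset.sum_finset_coe (fun v => μ v • v) w
  have h3 : S (fun i => μ i) = G (∑ v ∈ w, μ v • v) := by
    rw [← h2, hGdef]
    change S _ = (S ∘ₗ M) (L _)
    rw [LinearMap.comp_apply, ← LinearMap.comp_apply M L, hM, LinearMap.id_apply]
  rw [h1, h3]
  calc G (∑ v ∈ w, μ v • v) ≤ |G (∑ v ∈ w, μ v • v)| := le_abs_self _
    _ = ‖G (∑ v ∈ w, μ v • v)‖ := rfl
    _ ≤ ‖G‖ * ‖∑ v ∈ w, μ v • v‖ := G.le_opNorm _

end Cone

section Hoffman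

variable {E : Type*} [NormedAddCommGroup E] [InnerProductSpace ℝ E] [FiniteDimensional ℝ E]

/-- Hoffman's error bound with constant independent of the right-hand side. -/
theorem hoffman_bound {ι : Type*} (s : Finset ι) (A : ι → E →ₗ[ℝ] ℝ) :
    ∃ κ : ℝ, 0 ≤ κ ∧ ∀ b : ι → ℝ,
      {z : E | ∀ q ∈ s, A q z ≤ b q}.Nonempty →
      ∀ x : E, ∀ r : ℝ, 0 ≤ r → (∀ q ∈ s, A q x ≤ b q + r) →
      Metric.infDist x {z : E | ∀ q ∈ s, A q z ≤ b q} ≤ κ * r := by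
  classical
  set a : ι → E := fun q => (InnerProductSpace.toDual ℝ E).symm (LinearMap.toContinuousLinearMap (A q)) with ha
  have hav : ∀ q (z : E), ⟪a q, z⟫ = A q z := by
    intro q z
    rw [ha]
    exact InnerProductSpace.toDual_symm_apply
  set t : Finset E := s.image a with ht
  -- dual bound constant for each subset
  set cf : Finset E → ℝ := fun w =>
    if h : FinIndep w then (coneSet_dual_bound h).choose else 0 with hcf
  have hcf0 : ∀ w, 0 ≤ cf w := by
    intro w; rw [hcf]; dsimp only; split
    · exact (coneSet_dual_bound ‹_›).choose_spec.1
    · exact le_rfl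
  have hcfb : ∀ w, FinIndep w → ∀ μ : E → ℝ,
      (∑ v ∈ w, μ v) ≤ cf w * ‖∑ v ∈ w, μ v • v‖ := by
    intro w hw μ; rw [hcf]; dsimp only; rw [dif_pos hw]
    exact (coneSet_dual_bound hw).choose_spec.2 μ
  have htpne : t.powerset.Nonempty := ⟨∅, Finset.empty_mem_powerset t⟩
  set κ : ℝ := max 0 (t.powerset.sup' htpne cf) with hκ
  refine ⟨κ, le_max_left _ _, ?_⟩
  intro b hne x r hr hres
  set S := {z : E | ∀ q ∈ s, A q z ≤ b q} with hS
  have hconv : Convex ℝ S := by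
    intro z1 h1 z2 h2 p q hp hq hpq
    intro ℓ hℓ
    have e1 := h1 ℓ hℓ
    have e2 := h2 ℓ hℓ
    have : A ℓ (p • z1 + q • z2) = p * A ℓ z1 + q * A ℓ z2 := by
      simp [map_add, map_smul, smul_eq_mul]
    rw [this]
    calc p * A ℓ z1 + q * A ℓ z2 ≤ p * b ℓ + q * b ℓ := by
          exact add_le_add (mul_le_mul_of_nonneg_left e1 hp) (mul_le_mul_of_nonneg_left e2 hq)
      _ = b ℓ := by rw [← add_mul, hpq, one_mul]
  have hclosed : IsClosed S := by
    have : S = ⋂ q ∈ s, {z : E | A q z ≤ b q} := by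
      ext z; simp [hS]
    rw [this]
    exact isClosed_biInter fun q _ =>
      isClosed_le (A q).continuous_of_finiteDimensional continuous_const
  obtain ⟨xb, hxbS, hproj⟩ :=
    exists_norm_eq_iInf_of_complete_convex hne hclosed.isComplete hconv x
  have hchar := (norm_eq_iInf_iff_real_inner_le_zero hconv hxbS).1 hproj
  set v := x - xb with hv
  set act : Finset ι := s.filter (fun q => A q xb = b q) with hact
  set u₀ : Finset E := act.image a with hu₀
  -- KKT: v lies in the cone generated by active gradients
  have hvcone : v ∈ coneSet u₀ := by
    by_contra hnot
    set K : ConvexCone ℝ E := ConvexCone.mk (coneSet u₀)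
      (by rintro c hc y ⟨μ, hμ0, hμs⟩
          exact ⟨fun z => c * μ z, fun z hz => mul_nonneg hc.le (hμ0 z hz), by
            rw [← hμs, Finset.smul_sum]
            exact Finset.sum_congr rfl fun z _ => by rw [smul_smul]⟩)
      (by rintro y1 ⟨μ1, hμ10, hμ1s⟩ y2 ⟨μ2, hμ20, hμ2s⟩
          exact ⟨fun z => μ1 z + μ2 z, fun z hz => add_nonneg (hμ10 z hz) (hμ20 z hz), by
            rw [← hμ1s, ← hμ2s, ← Finset.sum_add_distrib]
            exact Finset.sum_congr rfl fun z _ => by rw [add_smul]⟩) with hK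
    let P : ProperCone ℝ E :=
      { carrier := coneSet u₀
        add_mem' := fun ha hb => K.add_mem ha hb
        zero_mem' := zero_mem_coneSet u₀
        smul_mem' := fun c x hx => by
          obtain ⟨μ, hμ0, hμs⟩ := hx
          exact ⟨fun z => (c : ℝ) * μ z, fun z hz => mul_nonneg c.2 (hμ0 z hz), by
            change _ = (c : ℝ) • x
            rw [← hμs, Finset.smul_sum]
            exact Finset.sum_congr rfl fun z _ => by rw [smul_smul]⟩
        isClosed' := coneSet_isClosed u₀ }
    obtain ⟨y, hy1, hy2⟩ := P.hyperplane_separation' (x₀ := v) (show v ∉ P from hnot)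
    replace hy2 : ⟪y, v⟫ < 0 := by rwa [real_inner_comm]
    set wv := -y with hwv
    have hw1 : ∀ q ∈ act, A q wv ≤ 0 := by
      intro q hq
      have hmem : a q ∈ coneSet u₀ := mem_coneSet_self (Finset.mem_image_of_mem a hq)
      have := hy1 _ hmem
      have : ⟪a q, wv⟫ ≤ 0 := by
        rw [hwv, inner_neg_right]; linarith
      rwa [hav] at this
    have hw2 : 0 < ⟪v, wv⟫ := by
      rw [hwv, inner_neg_right, real_inner_comm]
      linarith
    set ina : Finset ι := s.filter (fun q => ¬ A q xb = b q ∧ 0 < A q wv) with hina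
    set t₀ : ℝ := if h : ina.Nonempty
      then ina.inf' h (fun q => (b q - A q xb) / (A q wv)) else 1 with ht₀
    have ht₀pos : 0 < t₀ := by
      rw [ht₀]; split
      · rw [Finset.lt_inf'_iff]
        intro q hq
        obtain ⟨hq1, hq2, hq3⟩ : q ∈ s ∧ ¬ A q xb = b q ∧ 0 < A q wv := by
          simpa [hina] using hq
        have : A q xb < b q := lt_of_le_of_ne (hxbS q hq1) hq2
        exact div_pos (by linarith) hq3
      · exact one_pos
    have hzS : xb + t₀ • wv ∈ S := by
      intro q hq
      have hval : A q (xb + t₀ • wv) = A q xb + t₀ * A q wv := by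
        simp [map_add, map_smul, smul_eq_mul]
      rw [hval]
      by_cases hqa : A q xb = b q
      · have : A q wv ≤ 0 := hw1 q (Finset.mem_filter.2 ⟨hq, hqa⟩)
        nlinarith
      · have hlt : A q xb < b q := lt_of_le_of_ne (hxbS q hq) hqa
        by_cases hqw : 0 < A q wv
        · have hqina : q ∈ ina := Finset.mem_filter.2 ⟨hq, hqa, hqw⟩
          have hinane : ina.Nonempty := ⟨q, hqina⟩
          have ht₀le : t₀ ≤ (b q - A q xb) / (A q wv) := by
            rw [ht₀, dif_pos hinane]
            exact Finset.inf'_le _ hqina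
          have : t₀ * A q wv ≤ b q - A q xb := by
            rw [← div_mul_cancel₀ (b q - A q xb) hqw.ne']
            exact mul_le_mul_of_nonneg_right ht₀le hqw.le
          linarith
        · push_neg at hqw
          have : t₀ * A q wv ≤ 0 := mul_nonpos_of_nonneg_of_nonpos ht₀pos.le hqw
          linarith
    have := hchar _ hzS
    rw [add_sub_cancel_left, real_inner_smul_right] at this
    nlinarith
  obtain ⟨w, hwsub, hwind, μ, hμ0, hμsum⟩ := coneSet_caratheodory u₀ hvcone
  have hwt : w ∈ t.powerset := by
    refine Finset.mem_powerset.2 (hwsub.trans ?_)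
    rw [hu₀, ht]
    exact Finset.image_subset_image (Finset.filter_subset _ _)
  have hcκ : cf w ≤ κ := le_trans (Finset.le_sup' cf hwt) (le_max_right _ _)
  -- each generator has small inner product with v
  have hgen : ∀ z ∈ w, ⟪z, v⟫ ≤ r := by
    intro z hz
    obtain ⟨q, hqact, rfl⟩ := Finset.mem_image.1 (hwsub hz)
    obtain ⟨hqs, hqeq⟩ := Finset.mem_filter.1 hqact
    rw [hav]
    have h1 : A q x ≤ b q + r := hres q hqs
    have : A q v = A q x - A q xb := by rw [hv, map_sub]
    rw [this, hqeq]
    linarith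
  have hnv2 : ‖v‖ ^ 2 = ∑ z ∈ w, μ z * ⟪z, v⟫ := by
    have h0 : (⟪∑ z ∈ w, μ z • z, v⟫ : ℝ) = ∑ z ∈ w, μ z * ⟪z, v⟫ := by
      rw [sum_inner]
      exact Finset.sum_congr rfl fun z _ => real_inner_smul_left _ _ _
    rw [← real_inner_self_eq_norm_sq, ← h0, hμsum]
  have hkey : ‖v‖ ^ 2 ≤ cf w * ‖v‖ * r := by
    calc ‖v‖ ^ 2 = ∑ z ∈ w, μ z * ⟪z, v⟫ := hnv2
      _ ≤ ∑ z ∈ w, μ z * r :=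
          Finset.sum_le_sum fun z hz =>
            mul_le_mul_of_nonneg_left (hgen z hz) (hμ0 z hz)
      _ = (∑ z ∈ w, μ z) * r := by rw [Finset.sum_mul]
      _ ≤ (cf w * ‖∑ z ∈ w, μ z • z‖) * r :=
          mul_le_mul_of_nonneg_right (hcfb w hwind μ) hr
      _ = cf w * ‖v‖ * r := by rw [hμsum]
  have hdist : Metric.infDist x S ≤ dist x xb := Metric.infDist_le_dist_of_mem hxbS
  have hdxb : dist x xb = ‖v‖ := by rw [dist_eq_norm, hv]
  by_cases hv0 : ‖v‖ = 0
  · rw [hdxb, hv0] at hdist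
    calc Metric.infDist x S ≤ 0 := hdist
      _ ≤ κ * r := mul_nonneg (le_max_left _ _) hr
  · have hvpos : 0 < ‖v‖ := lt_of_le_of_ne (norm_nonneg v) (Ne.symm hv0)
    have hvle : ‖v‖ ≤ cf w * r := by
      have : ‖v‖ * ‖v‖ ≤ (cf w * r) * ‖v‖ := by nlinarith [hkey]
      exact le_of_mul_le_mul_right this hvpos
    calc Metric.infDist x S ≤ ‖v‖ := by rw [← hdxb]; exact hdist
      _ ≤ cf w * r := hvle
      _ ≤ κ * r := mul_le_mul_of_nonneg_right hcκ hr

end Hoffman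

section FM

variable {E : Type*} [NormedAddCommGroup E] [NormedSpace ℝ E]

lemma IsPolyhedral.elim_dir {P : Set E} (hP : IsPolyhedral P) (v : E) :
    IsPolyhedral {z | ∃ t : ℝ, z + t • v ∈ P} := by
  classical
  obtain ⟨s, rfl⟩ := hP
  set s0 := s.filter (fun q => q.1 v = 0) with hs0
  set sp := s.filter (fun q => 0 < q.1 v) with hsp
  set sm := s.filter (fun q => q.1 v < 0) with hsm
  refine ⟨s0 ∪ (sp ×ˢ sm).image (fun qq =>
    ((-qq.2.1 v) • qq.1.1 + (qq.1.1 v) • qq.2.1,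
     (-qq.2.1 v) * qq.1.2 + (qq.1.1 v) * qq.2.2)), ?_⟩
  ext z
  simp only [mem_setOf_eq]
  constructor
  · rintro ⟨t, ht⟩ q hq
    rcases Finset.mem_union.1 hq with hq0 | hqi
    · obtain ⟨hqs, hqv⟩ := Finset.mem_filter.1 hq0
      have := ht q hqs
      have hval : q.1 (z + t • v) = q.1 z + t * q.1 v := by
        simp [map_add, map_smul, smul_eq_mul]
      rw [hval, hqv] at this
      linarith
    · obtain ⟨⟨p, m⟩, hpm, rfl⟩ := Finset.mem_image.1 hqi
      obtain ⟨hp, hm⟩ := Finset.mem_product.1 hpm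
      obtain ⟨hps, hpv⟩ := Finset.mem_filter.1 hp
      obtain ⟨hms, hmv⟩ := Finset.mem_filter.1 hm
      have h1 := ht p hps
      have h2 := ht m hms
      have hval1 : p.1 (z + t • v) = p.1 z + t * p.1 v := by
        simp [map_add, map_smul, smul_eq_mul]
      have hval2 : m.1 (z + t • v) = m.1 z + t * m.1 v := by
        simp [map_add, map_smul, smul_eq_mul]
      rw [hval1] at h1; rw [hval2] at h2
      have e1 : (-m.1 v) * (p.1 z + t * p.1 v) ≤ (-m.1 v) * p.2 :=
        mul_le_mul_of_nonneg_left h1 (by linarith)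
      have e2 : (p.1 v) * (m.1 z + t * m.1 v) ≤ (p.1 v) * m.2 :=
        mul_le_mul_of_nonneg_left h2 hpv.le
      simp only [LinearMap.add_apply, LinearMap.smul_apply, smul_eq_mul]
      nlinarith
  · intro hz
    have hz0 : ∀ q ∈ s0, q.1 z ≤ q.2 := fun q hq => hz q (Finset.mem_union_left _ hq)
    have hpair : ∀ p ∈ sp, ∀ m ∈ sm,
        (-m.1 v) * p.1 z + p.1 v * m.1 z ≤ (-m.1 v) * p.2 + p.1 v * m.2 := by
      intro p hp m hm
      have := hz _ (Finset.mem_union_right _ (Finset.mem_image.2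
        ⟨(p, m), Finset.mem_product.2 ⟨hp, hm⟩, rfl⟩))
      simpa [LinearMap.add_apply, LinearMap.smul_apply, smul_eq_mul] using this
    set ratio : (E →ₗ[ℝ] ℝ) × ℝ → ℝ := fun q => (q.2 - q.1 z) / (q.1 v) with hratio
    have key : ∀ p ∈ sp, ∀ m ∈ sm, ratio m ≤ ratio p := by
      intro p hp m hm
      have hpv : 0 < p.1 v := (Finset.mem_filter.1 hp).2
      have hmv : m.1 v < 0 := (Finset.mem_filter.1 hm).2
      have hpm := hpair p hp m hm
      rw [hratio]
      dsimp only
      have hm' : (m.2 - m.1 z) / (m.1 v) = (m.1 z - m.2) / (-m.1 v) := by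
        rw [← neg_div_neg_eq, neg_sub]
      rw [hm', div_le_div_iff₀ (neg_pos.2 hmv) hpv]
      nlinarith [hpm]
    have hmem_of_t : ∀ t : ℝ, (∀ q ∈ s0, q.1 z ≤ q.2) →
        (∀ q ∈ sp, t ≤ ratio q) → (∀ q ∈ sm, ratio q ≤ t) →
        ∀ q ∈ s, q.1 (z + t • v) ≤ q.2 := by
      intro t h0 hup hlo q hq
      have hval : q.1 (z + t • v) = q.1 z + t * q.1 v := by
        simp [map_add, map_smul, smul_eq_mul]
      rw [hval]
      rcases lt_trichotomy (q.1 v) 0 with hneg | hzero | hpos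
      · have hqm : q ∈ sm := Finset.mem_filter.2 ⟨hq, hneg⟩
        have hle : ratio q ≤ t := hlo q hqm
        have : t * q.1 v ≤ ratio q * q.1 v :=
          mul_le_mul_of_nonpos_right hle hneg.le
        have hcan : ratio q * q.1 v = q.2 - q.1 z := by
          rw [hratio]; dsimp only
          exact div_mul_cancel₀ _ hneg.ne
        linarith [this.trans_eq hcan]
      · have hq0 : q ∈ s0 := Finset.mem_filter.2 ⟨hq, hzero⟩
        rw [hzero]
        have := h0 q hq0
        linarith
      · have hqp : q ∈ sp := Finset.mem_filter.2 ⟨hq, hpos⟩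
        have hle : t ≤ ratio q := hup q hqp
        have : t * q.1 v ≤ ratio q * q.1 v :=
          mul_le_mul_of_nonneg_right hle hpos.le
        have hcan : ratio q * q.1 v = q.2 - q.1 z := by
          rw [hratio]; dsimp only
          exact div_mul_cancel₀ _ hpos.ne'
        linarith [this.trans_eq hcan]
    by_cases hpne : sp.Nonempty
    · refine ⟨sp.inf' hpne ratio, hmem_of_t _ hz0 (fun q hq => Finset.inf'_le _ hq) ?_⟩
      intro q hq
      exact Finset.le_inf' hpne _ (fun p hp => key p hp q hq)
    · by_cases hmne : sm.Nonempty
      · refine ⟨sm.sup' hmne ratio, hmem_of_t _ hz0 ?_ (fun q hq => Finset.le_sup' _ hq)⟩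
        intro q hq
        exact absurd ⟨q, hq⟩ hpne
      · refine ⟨0, hmem_of_t 0 hz0 ?_ ?_⟩
        · intro q hq; exact absurd ⟨q, hq⟩ hpne
        · intro q hq; exact absurd ⟨q, hq⟩ hmne

lemma IsPolyhedral.elim_list {P : Set E} (hP : IsPolyhedral P) (l : List E) :
    IsPolyhedral {z | ∃ w ∈ Submodule.span ℝ {x : E | x ∈ l}, z + w ∈ P} := by
  induction l generalizing P with
  | nil =>
    have : {z | ∃ w ∈ Submodule.span ℝ {x : E | x ∈ ([] : List E)}, z + w ∈ P} = P := by
      ext z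
      simp only [List.not_mem_nil, setOf_false, Submodule.span_empty, Submodule.mem_bot,
        mem_setOf_eq]
      constructor
      · rintro ⟨w, rfl, hw⟩; simpa using hw
      · intro hz; exact ⟨0, rfl, by simpa using hz⟩
    rw [this]; exact hP
  | cons v l ih =>
    have h2 := (ih hP).elim_dir v
    have heq : {z | ∃ w ∈ Submodule.span ℝ {x : E | x ∈ v :: l}, z + w ∈ P} =
        {z | ∃ t : ℝ, z + t • v ∈ {z' | ∃ w ∈ Submodule.span ℝ {x : E | x ∈ l}, z' + w ∈ P}} := by
      have hins : {x : E | x ∈ v :: l} = insert v {x : E | x ∈ l} := by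
        ext x; simp [List.mem_cons]
      ext z
      simp only [mem_setOf_eq, hins]
      constructor
      · rintro ⟨w, hw, hzw⟩
        obtain ⟨a, u, hu, rfl⟩ := Submodule.mem_span_insert.1 hw
        exact ⟨a, u, hu, by rwa [← add_assoc] at hzw⟩
      · rintro ⟨t, w', hw', hzw⟩
        exact ⟨t • v + w', Submodule.mem_span_insert.2 ⟨t, w', hw', rfl⟩, by rwa [← add_assoc]⟩
    rw [heq]; exact h2

lemma IsPolyhedral.elim_submodule [FiniteDimensional ℝ E] {P : Set E} (hP : IsPolyhedral P)
    (W : Submodule ℝ E) : IsPolyhedral {z | ∃ w ∈ W, z + w ∈ P} := by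
  obtain ⟨S, hS⟩ := IsNoetherian.noetherian W
  have hset : {x : E | x ∈ S.toList} = (S : Set E) := by
    ext x; simp [Finset.mem_toList]
  have := hP.elim_list S.toList
  rwa [hset, hS] at this

lemma IsPolyhedral.isClosed [FiniteDimensional ℝ E] {P : Set E} (hP : IsPolyhedral P) :
    IsClosed P := by
  obtain ⟨s, rfl⟩ := hP
  have : {x : E | ∀ q ∈ s, q.1 x ≤ q.2} = ⋂ q ∈ s, {x : E | q.1 x ≤ q.2} := by
    ext x; simp
  rw [this]
  exact isClosed_biInter fun q _ =>
    isClosed_le q.1.continuous_of_finiteDimensional continuous_const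

end FM


lemma infEdist_eq_ofReal {α} [PseudoMetricSpace α] {s : Set α} (h : s.Nonempty) (x : α) :
    EMetric.infEdist x s = ENNReal.ofReal (Metric.infDist x s) :=
  (ENNReal.ofReal_toReal (Metric.infEdist_ne_top h)).symm

theorem polyhedral_multifunction_error_bound
    {X Y : Type*} [NormedAddCommGroup X] [InnerProductSpace ℝ X] [FiniteDimensional ℝ X]
    [NormedAddCommGroup Y] [InnerProductSpace ℝ Y] [FiniteDimensional ℝ Y]
    (F : X → Set Y)
    (hpoly : ∃ (N : ℕ) (C : Fin N → Set (X × Y)),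
      (∀ i, IsPolyhedral (C i)) ∧ {p : X × Y | p.2 ∈ F p.1} = ⋃ i, C i) :
    ∃ κ : ℝ, 0 ≤ κ ∧ ∀ y : Y, {x : X | y ∈ F x}.Nonempty →
      ∃ ε : ℝ, 0 < ε ∧ ∀ x : X,
        EMetric.infEdist y (F x) ≤ ENNReal.ofReal ε →
        EMetric.infEdist x {x' : X | y ∈ F x'} ≤
          ENNReal.ofReal κ * EMetric.infEdist y (F x) := by
  classical
  obtain ⟨N, C, hCpoly, hgraph⟩ := hpoly
  choose s hs using hCpoly
  set A : ((X × Y →ₗ[ℝ] ℝ) × ℝ) → (X →ₗ[ℝ] ℝ) :=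
    fun q => q.1.comp (LinearMap.inl ℝ X Y) with hA
  have hHof := fun i : Fin N => hoffman_bound (s i) A
  choose κh hκh0 hκh using hHof
  set L : Fin N → ℝ := fun i =>
    (((s i).sup fun q => ‖LinearMap.toContinuousLinearMap (q.1.comp (LinearMap.inr ℝ X Y))‖₊ :
      NNReal) : ℝ) with hLdef
  have hL0 : ∀ i, 0 ≤ L i := fun i => NNReal.coe_nonneg _
  have hLb : ∀ i, ∀ q ∈ s i, ∀ u : Y, q.1 ((0 : X), u) ≤ L i * ‖u‖ := by
    intro i q hq u
    set f := LinearMap.toContinuousLinearMap (q.1.comp (LinearMap.inr ℝ X Y)) with hf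
    have h1 : q.1 ((0 : X), u) = f u := by
      rw [hf]; simp
    rw [h1]
    calc f u ≤ |f u| := le_abs_self _
      _ = ‖f u‖ := rfl
      _ ≤ ‖f‖ * ‖u‖ := f.le_opNorm u
      _ ≤ L i * ‖u‖ := by
          refine mul_le_mul_of_nonneg_right ?_ (norm_nonneg u)
          rw [hLdef]
          have : ‖f‖₊ ≤ (s i).sup fun q =>
              ‖LinearMap.toContinuousLinearMap (q.1.comp (LinearMap.inr ℝ X Y))‖₊ :=
            Finset.le_sup (f := fun q =>
              ‖LinearMap.toContinuousLinearMap (q.1.comp (LinearMap.inr ℝ X Y))‖₊) hq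
          calc ‖f‖ = (‖f‖₊ : ℝ) := rfl
            _ ≤ _ := NNReal.coe_le_coe.2 this
  set κ : ℝ := ((Finset.univ.sup fun i : Fin N => Real.toNNReal (κh i * L i) : NNReal) : ℝ)
    with hκdef
  have hκ0 : 0 ≤ κ := NNReal.coe_nonneg _
  have hκb : ∀ i, κh i * L i ≤ κ := by
    intro i
    calc κh i * L i ≤ ((κh i * L i).toNNReal : ℝ) := Real.le_coe_toNNReal _
      _ ≤ κ := NNReal.coe_le_coe.2 (Finset.le_sup (f := fun i => (κh i * L i).toNNReal) (Finset.mem_univ i))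
  refine ⟨κ, hκ0, ?_⟩
  intro y hne
  set Di : Fin N → Set Y := fun i => {y' | ∃ x', ((x', y') : X × Y) ∈ C i} with hDi
  have hDcl : ∀ i, IsClosed (Di i) := by
    intro i
    have hpo : IsPolyhedral (C i) := ⟨s i, hs i⟩
    have h2 := (hpo.elim_submodule (Submodule.prod (⊤ : Submodule ℝ X) (⊥ : Submodule ℝ Y)))
    have heq : Di i = (fun y' : Y => ((0, y') : X × Y)) ⁻¹'
        {z : X × Y | ∃ w ∈ Submodule.prod (⊤ : Submodule ℝ X) (⊥ : Submodule ℝ Y),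
          z + w ∈ C i} := by
      ext y'
      simp only [hDi, mem_setOf_eq, mem_preimage, Submodule.mem_prod, Submodule.mem_top,
        Submodule.mem_bot, true_and]
      constructor
      · rintro ⟨x', hx'⟩
        refine ⟨(x', 0), rfl, ?_⟩
        simpa using hx'
      · rintro ⟨⟨wx, wy⟩, hwy, hmem⟩
        subst hwy
        refine ⟨wx, ?_⟩
        simpa using hmem
    rw [heq]
    exact h2.isClosed.preimage (continuous_const.prodMk continuous_id)
  set bad : Finset (Fin N) := Finset.univ.filter
    (fun i => (¬ ∃ x₀, ((x₀, y) : X × Y) ∈ C i) ∧ (Di i).Nonempty) with hbad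
  have hpos : ∀ i ∈ bad, 0 < Metric.infDist y (Di i) := by
    intro i hi
    obtain ⟨-, hnm, hnee⟩ := Finset.mem_filter.1 hi
    have hy : y ∉ Di i := hnm
    exact ((hDcl i).notMem_iff_infDist_pos hnee).1 hy
  set ε : ℝ := if h : bad.Nonempty
    then (bad.inf' h fun i => Metric.infDist y (Di i)) / 2 else 1 with hε
  have hinfpos : ∀ h : bad.Nonempty, 0 < bad.inf' h fun i => Metric.infDist y (Di i) :=
    fun h => (Finset.lt_inf'_iff h).2 hpos
  have hεpos : 0 < ε := by
    rw [hε]; split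
    · exact half_pos (hinfpos ‹_›)
    · exact one_pos
  have hεlt : ∀ i ∈ bad, ε < Metric.infDist y (Di i) := by
    intro i hi
    have hbne : bad.Nonempty := ⟨i, hi⟩
    rw [hε, dif_pos hbne]
    calc (bad.inf' hbne fun i => Metric.infDist y (Di i)) / 2
        < bad.inf' hbne fun i => Metric.infDist y (Di i) := half_lt_self (hinfpos hbne)
      _ ≤ Metric.infDist y (Di i) := Finset.inf'_le _ hi
  refine ⟨ε, hεpos, ?_⟩
  intro x hx
  set G := {x' : X | y ∈ F x'} with hG
  have hmemgraph : ∀ p : X × Y, p.2 ∈ F p.1 ↔ p ∈ ⋃ i, C i := fun p => Set.ext_iff.1 hgraph p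
  have hpoC : ∀ i, IsPolyhedral (C i) := fun i => ⟨s i, hs i⟩
  have hCcl : ∀ i, IsClosed (C i) := fun i => (hpoC i).isClosed
  have hFcl : IsClosed (F x) := by
    have : F x = (fun y' : Y => ((x, y') : X × Y)) ⁻¹' (⋃ i, C i) := by
      ext y'; exact hmemgraph (x, y')
    rw [this]
    exact (isClosed_iUnion_of_finite hCcl).preimage (continuous_const.prodMk continuous_id)
  have hFne : (F x).Nonempty := by
    by_contra h
    rw [not_nonempty_iff_eq_empty] at h
    rw [h] at hx
    change Metric.infEDist y ∅ ≤ _ at hx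
    rw [EMetric.infEdist_empty] at hx
    exact ENNReal.ofReal_ne_top (top_le_iff.1 hx)
  set d : ℝ := Metric.infDist y (F x) with hd
  have hd0 : 0 ≤ d := Metric.infDist_nonneg
  have hed : EMetric.infEdist y (F x) = ENNReal.ofReal d := infEdist_eq_ofReal hFne y
  have hdε : d ≤ ε := (ENNReal.ofReal_le_ofReal_iff hεpos.le).1 (hed ▸ hx)
  obtain ⟨y', hy'F, hy'd⟩ := hFcl.exists_infDist_eq_dist hFne y
  have hxy' : (x, y') ∈ ⋃ i, C i := (hmemgraph (x, y')).1 hy'F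
  obtain ⟨i, hiC⟩ := Set.mem_iUnion.1 hxy'
  have hgood : ∃ x₀, ((x₀, y) : X × Y) ∈ C i := by
    by_contra hb
    have hibad : i ∈ bad := Finset.mem_filter.2 ⟨Finset.mem_univ _, hb, ⟨y', x, hiC⟩⟩
    have h1 : Metric.infDist y (Di i) ≤ dist y y' := Metric.infDist_le_dist_of_mem ⟨x, hiC⟩
    have h2 := hεlt i hibad
    rw [← hy'd] at h1
    linarith
  obtain ⟨x₀, hx₀⟩ := hgood
  set b : ((X × Y →ₗ[ℝ] ℝ) × ℝ) → ℝ := fun q => q.2 - q.1 ((0 : X), y) with hb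
  set S := {z : X | ∀ q ∈ s i, A q z ≤ b q} with hSdef
  have hsplit : ∀ (q : (X × Y →ₗ[ℝ] ℝ) × ℝ) (z : X) (u : Y),
      q.1 ((z, u) : X × Y) = q.1 (z, (0 : Y)) + q.1 ((0 : X), u) := by
    intro q z u
    rw [← map_add]
    norm_num
  have hAz : ∀ (q : (X × Y →ₗ[ℝ] ℝ) × ℝ) (z : X), A q z = q.1 (z, (0 : Y)) := by
    intro q z; rw [hA]; simp
  have hSeq : S = {x' : X | ((x', y) : X × Y) ∈ C i} := by
    ext z
    rw [hSdef]
    simp only [mem_setOf_eq, hs i]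
    constructor
    · intro h q hq
      have := h q hq
      rw [hAz, hb] at this
      rw [hsplit q z y]
      dsimp only at this ⊢
      linarith
    · intro h q hq
      have := h q hq
      rw [hsplit q z y] at this
      rw [hAz, hb]
      dsimp only
      linarith
  have hSne : S.Nonempty := by
    rw [hSeq]; exact ⟨x₀, hx₀⟩
  have hr0 : 0 ≤ L i * d := mul_nonneg (hL0 i) hd0
  have hres : ∀ q ∈ s i, A q x ≤ b q + L i * d := by
    intro q hq
    have h1 : q.1 ((x, y') : X × Y) ≤ q.2 := by
      have := hs i ▸ hiC
      exact this q hq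
    rw [hsplit q x y'] at h1
    have h2 : q.1 ((0 : X), y) - q.1 ((0 : X), y') = q.1 ((0 : X), y - y') := by
      rw [← map_sub]
      norm_num
    have h3 : q.1 ((0 : X), y - y') ≤ L i * ‖y - y'‖ := hLb i q hq (y - y')
    have h4 : ‖y - y'‖ = d := by rw [← dist_eq_norm, ← hy'd]
    rw [hAz, hb]
    dsimp only
    rw [h4] at h3
    linarith
  have hhof := hκh i b hSne x (L i * d) hr0 hres
  have hSG : S ⊆ G := by
    intro z hz
    have hzC : ((z, y) : X × Y) ∈ C i := by rw [hSeq] at hz; exact hz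
    exact (hmemgraph (z, y)).2 (Set.mem_iUnion.2 ⟨i, hzC⟩)
  have hGd : Metric.infDist x G ≤ κ * d := by
    calc Metric.infDist x G ≤ Metric.infDist x S :=
          Metric.infDist_le_infDist_of_subset hSG hSne
      _ ≤ κh i * (L i * d) := hhof
      _ = (κh i * L i) * d := by ring
      _ ≤ κ * d := mul_le_mul_of_nonneg_right (hκb i) hd0
  rw [infEdist_eq_ofReal hne x, hed, ← ENNReal.ofReal_mul hκ0]
  exact ENNReal.ofReal_le_ofReal hGd
end

section
/- (Global convergence of SSNAL) Suppose Assumption 2 holds and the solution set of (P) is nonempty. Let {(yᵏ, zᵏ, xᵏ)} be the infinite sequence generated by the inexact augmented Lagrangian method: (y^{k+1}, z^{k+1}) approximately minimizes Ψ_k(y,z) := L_{σ_k}(y, z; xᵏ) under stopping criterion (A), and x^{k+1} = xᵏ − σ_k(A*y^{k+1} + z^{k+1} − c), with σ_k ↑ σ_∞ ≤ ∞. Then the sequence {xᵏ} is bounded and converges to an optimal solution of (P), and {(yᵏ, zᵏ)} is bounded and converges to the unique optimal solution (y*, z*) ∈ int(dom h*) × dom p* of (D). -/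
/- STATEMENT 6 (Global convergence of SSNAL): Under Assumption 2 and nonemptiness of the
solution set of (P), the sequence {xᵏ} generated by the inexact augmented Lagrangian method
with stopping criterion (A) is bounded and converges to an optimal solution of (P), and
{(yᵏ, zᵏ)} is bounded and converges to the unique optimal solution (y*, z*) of (D),
which lies in int(dom h*) × dom p*. -/

open Set Filter Topology Classical

noncomputable section

/-- Convexity of an `EReal`-valued function. -/
def EConvex {E : Type*} [AddCommGroup E] [Module ℝ E] (g : E → EReal) : Prop :=
  ∀ u v : E, ∀ a b : ℝ, 0 ≤ a → 0 ≤ b → a + b = 1 →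
    g (a • u + b • v) ≤ (a : EReal) * g u + (b : EReal) * g v

/-- The Fenchel conjugate of a real-valued function. -/
def conjR {E : Type*} [NormedAddCommGroup E] [InnerProductSpace ℝ E]
    (h : E → ℝ) (y : E) : EReal :=
  ⨆ u : E, (((inner ℝ u y : ℝ) - h u : ℝ) : EReal)

/-- The Fenchel conjugate of an `EReal`-valued function. -/
def conjE {E : Type*} [NormedAddCommGroup E] [InnerProductSpace ℝ E]
    (p : E → EReal) (z : E) : EReal :=
  ⨆ u : E, (((inner ℝ u z : ℝ) : EReal) - p u)

variable {X Y : Type*} [NormedAddCommGroup X] [InnerProductSpace ℝ X] [FiniteDimensional ℝ X]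
  [NormedAddCommGroup Y] [InnerProductSpace ℝ Y] [FiniteDimensional ℝ Y]

/-- The augmented Lagrangian function associated with (D):
`L_σ(y,z;x) = h*(y) + p*(z) − ⟨x, A*y + z − c⟩ + (σ/2)‖A*y + z − c‖²`. -/
def ALfun (A : X →L[ℝ] Y) (c : X) (hstar : Y → EReal) (pstar : X → EReal)
    (σ : ℝ) (x : X) (w : Y × X) : EReal :=
  hstar w.1 + pstar w.2 +
    (((σ / 2) * ‖ContinuousLinearMap.adjoint A w.1 + w.2 - c‖ ^ 2 -
        (inner ℝ x (ContinuousLinearMap.adjoint A w.1 + w.2 - c) : ℝ) : ℝ) : EReal)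

set_option maxHeartbeats 1600000
section AuxLemmas


lemma slope_bound {g : ℝ → ℝ} {g' C D : ℝ} (hg : HasDerivAt g g' 0)
    (hb : ∀ t : ℝ, 0 < t → t ≤ 1 → g t ≤ g 0 + t * C + t ^ 2 * D) : g' ≤ C := by
  have hs := hasDerivAt_iff_tendsto_slope.1 hg
  have h1 : Tendsto (slope g 0) (𝓝[>] 0) (𝓝 g') :=
    hs.mono_left (nhdsWithin_mono 0 (fun t ht => ne_of_gt ht))
  have h2 : Tendsto (fun t : ℝ => C + t * D) (𝓝[>] 0) (𝓝 (C + 0 * D)) := by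
    apply Tendsto.mono_left _ nhdsWithin_le_nhds
    exact (tendsto_const_nhds.add ((continuous_id.mul continuous_const).tendsto 0))
  rw [zero_mul, add_zero] at h2
  refine le_of_tendsto_of_tendsto h1 h2 ?_
  filter_upwards [Ioc_mem_nhdsGT_of_mem (Set.left_mem_Ico.2 one_pos)] with t ht
  have ht0 : 0 < t := ht.1
  have := hb t ht.1 ht.2
  have : (g t - g 0) / t ≤ C + t * D := by
    rw [div_le_iff₀ ht0]; ring_nf; nlinarith [hb t ht.1 ht.2]
  simpa [slope_def_field, div_eq_iff ht0.ne'] using this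

lemma exists_min_lsc {E : Type*} [NormedAddCommGroup E] {φ : E → EReal} {s : Set E}
    (hs : IsCompact s) (hφ : LowerSemicontinuous φ) (hne : s.Nonempty) :
    ∃ x ∈ s, ∀ y ∈ s, φ x ≤ φ y := by
  set m := sInf (φ '' s) with hm
  have hle : ∀ y ∈ s, m ≤ φ y := fun y hy => sInf_le ⟨y, hy, rfl⟩
  rcases eq_or_lt_of_le (le_top : m ≤ ⊤) with hm_top | hmlt
  · obtain ⟨x, hx⟩ := hne
    refine ⟨x, hx, fun y hy => ?_⟩
    have h1 : φ x = ⊤ := top_le_iff.1 (hm_top ▸ hle x hx)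
    have h2 : φ y = ⊤ := top_le_iff.1 (hm_top ▸ hle y hy)
    rw [h1, h2]
  · -- index by elements of Ioi m
    have hne' : Nonempty (Ioi m) := ⟨⟨⊤, hmlt⟩⟩
    set t : Ioi m → Set E := fun b => s ∩ {x | φ x ≤ (b : EReal)} with ht
    have hclosed : ∀ b : Ioi m, IsClosed (t b) := fun b =>
      (hs.isClosed.inter (hφ.isClosed_preimage _))
    have hcompact : ∀ b : Ioi m, IsCompact (t b) := fun b =>
      hs.of_isClosed_subset (hclosed b) inter_subset_left
    have hnonempty : ∀ b : Ioi m, (t b).Nonempty := by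
      intro ⟨b, hb⟩
      obtain ⟨v, ⟨y, hy, rfl⟩, hv⟩ := exists_lt_of_csInf_lt (hne.image φ) hb
      exact ⟨y, hy, le_of_lt hv⟩
    have hdir : Directed (fun x1 x2 => x1 ⊇ x2) t := by
      intro ⟨b1, hb1⟩ ⟨b2, hb2⟩
      refine ⟨⟨min b1 b2, (lt_min hb1 hb2 : m < min b1 b2)⟩, ?_, ?_⟩
      · intro x hx
        refine ⟨hx.1, ?_⟩
        show φ x ≤ b1
        exact le_trans (hx.2 : φ x ≤ min b1 b2) (min_le_left _ _)
      · intro x hx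
        refine ⟨hx.1, ?_⟩
        show φ x ≤ b2
        exact le_trans (hx.2 : φ x ≤ min b1 b2) (min_le_right _ _)
    obtain ⟨x, hx⟩ := IsCompact.nonempty_iInter_of_directed_nonempty_isCompact_isClosed
      t hdir hnonempty hcompact hclosed
    simp only [mem_iInter] at hx
    have hxs : x ∈ s := (hx ⟨⊤, hmlt⟩).1
    refine ⟨x, hxs, fun y hy => le_trans ?_ (hle y hy)⟩
    refine le_of_forall_gt_imp_ge_of_dense fun b hb => (hx ⟨b, hb⟩).2

lemma hasDerivAt_line {Y : Type*} [NormedAddCommGroup Y] [InnerProductSpace ℝ Y]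
    [FiniteDimensional ℝ Y] {h : Y → ℝ} {G : Y} {v : Y}
    (hd : HasGradientAt h G v) (d : Y) :
    HasDerivAt (fun t : ℝ => h (v + t • d)) (inner ℝ G d : ℝ) 0 := by
  have hline : HasDerivAt (fun t : ℝ => v + t • d) d 0 := by
    simpa using ((hasDerivAt_id (0:ℝ)).smul_const d).const_add v
  have hF : HasFDerivAt h ((InnerProductSpace.toDual ℝ Y) G) (v + (0:ℝ) • d) := by
    simpa using hd.hasFDerivAt
  have := hF.comp_hasDerivAt 0 hline
  simp only [InnerProductSpace.toDual_apply_apply] at this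
  exact this



lemma grad_ineq {h : Y → ℝ} {Gh : Y → Y} (hconv : ConvexOn ℝ Set.univ h)
    (hdiff : ∀ y, HasGradientAt h (Gh y) y) (v u : Y) :
    h v + inner ℝ (Gh v) (u - v) ≤ h u := by
  have key : (inner ℝ (Gh v) (u - v) : ℝ) ≤ h u - h v := by
    apply slope_bound (hasDerivAt_line (hdiff v) (u - v)) (D := 0)
    intro t ht0 ht1
    have hc := hconv.2 (mem_univ v) (mem_univ u) (by linarith : (0:ℝ) ≤ 1 - t)
      (le_of_lt ht0) (by ring)
    have he : (1 - t) • v + t • u = v + t • (u - v) := by module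
    rw [he] at hc
    simp only [smul_eq_mul] at hc
    simp only [zero_smul, add_zero]
    nlinarith [hc]
  linarith

lemma weak_descent {h : Y → ℝ} {Gh : Y → Y} {αh : ℝ} (hαh : 0 < αh)
    (hconv : ConvexOn ℝ Set.univ h) (hdiff : ∀ y, HasGradientAt h (Gh y) y)
    (hlip : ∀ y y' : Y, ‖Gh y - Gh y'‖ ≤ (1 / αh) * ‖y - y'‖) (v u : Y) :
    h u ≤ h v + inner ℝ (Gh v) (u - v) + (1 / αh) * ‖u - v‖ ^ 2 := by
  have h1 := grad_ineq hconv hdiff u v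
  have h2 : (inner ℝ (Gh u) (v - u) : ℝ) = - inner ℝ (Gh u) (u - v) := by
    rw [← inner_neg_right]; congr 1; abel
  have h3 : (inner ℝ (Gh u) (u - v) : ℝ) = inner ℝ (Gh v) (u - v) + inner ℝ (Gh u - Gh v) (u - v) := by
    rw [inner_sub_left]; ring
  have h4 : (inner ℝ (Gh u - Gh v) (u - v) : ℝ) ≤ ‖Gh u - Gh v‖ * ‖u - v‖ :=
    real_inner_le_norm _ _
  have h5 : ‖Gh u - Gh v‖ * ‖u - v‖ ≤ (1 / αh) * ‖u - v‖ ^ 2 := by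
    have := hlip u v
    nlinarith [norm_nonneg (u - v), norm_nonneg (Gh u - Gh v)]
  nlinarith [h1, h4, h5]

lemma key_algebra {σ : ℝ} (hσ : 0 < σ) (xv ub r : X) :
    (inner ℝ (ub - xv) r : ℝ) + σ / 2 * ‖r‖ ^ 2
      = ‖xv - σ • r - ub‖ ^ 2 / (2 * σ) - ‖ub - xv‖ ^ 2 / (2 * σ) := by
  have e1 : xv - σ • r - ub = (xv - ub) - σ • r := by abel
  rw [e1, norm_sub_sq_real, real_inner_smul_right]
  have e2 : ‖σ • r‖ ^ 2 = σ ^ 2 * ‖r‖ ^ 2 := by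
    rw [norm_smul, Real.norm_eq_abs, mul_pow, sq_abs]
  have e3 : (inner ℝ (ub - xv) r : ℝ) = - inner ℝ (xv - ub) r := by
    rw [← inner_neg_left]; congr 1; abel
  have e4 : ‖ub - xv‖ = ‖xv - ub‖ := by rw [← neg_sub, norm_neg]
  rw [e2, e3, e4]
  field_simp
  ring

lemma ereal_add_cancel {a : EReal} {q s : ℝ} (h : a + (q : EReal) ≤ (s : EReal)) :
    a ≤ ((s - q : ℝ) : EReal) := by
  have h2 := add_le_add_left h ((-q : ℝ) : EReal)
  have e1 : a + (q : EReal) + ((-q : ℝ) : EReal) = a := by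
    rw [add_assoc, ← EReal.coe_add]
    norm_num
  rw [e1] at h2
  have e2 : ((s - q : ℝ) : EReal) = (s : EReal) + ((-q : ℝ) : EReal) := by
    push_cast; rw [sub_eq_add_neg]
  rw [e2]
  exact h2

lemma ereal_pair_eq {a b : EReal} {a0 b0 : ℝ} (ha : (a0 : EReal) ≤ a) (hb : (b0 : EReal) ≤ b)
    (hs : a + b ≤ ((a0 + b0 : ℝ) : EReal)) : a = (a0 : EReal) ∧ b = (b0 : EReal) := by
  have hbb : b ≠ ⊥ := fun hbb => by simp [hbb] at hb
  have hab : a ≠ ⊥ := fun hab => by simp [hab] at ha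
  have hat : a ≠ ⊤ := by
    intro hat
    rw [hat, EReal.top_add_of_ne_bot hbb] at hs
    exact EReal.coe_ne_top _ (top_le_iff.1 hs)
  have hbt : b ≠ ⊤ := by
    intro hbt
    rw [hbt, EReal.add_top_of_ne_bot hab] at hs
    exact EReal.coe_ne_top _ (top_le_iff.1 hs)
  lift a to ℝ using ⟨hat, hab⟩ with ar
  lift b to ℝ using ⟨hbt, hbb⟩ with br
  rw [← EReal.coe_add, EReal.coe_le_coe_iff] at hs
  rw [EReal.coe_le_coe_iff] at ha hb
  constructor <;> · norm_cast; linarith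



lemma conjR_lb (h : Y → ℝ) (y u : Y) : ((inner ℝ u y - h u : ℝ) : EReal) ≤ conjR h y :=
  le_iSup (fun u : Y => (((inner ℝ u y : ℝ) - h u : ℝ) : EReal)) u

lemma conjE_lb (p : X → EReal) (z u : X) : ((inner ℝ u z : ℝ) : EReal) - p u ≤ conjE p z :=
  le_iSup (fun u : X => (((inner ℝ u z : ℝ) : EReal) - p u)) u

lemma conjR_eq_max {h : Y → ℝ} {y v : Y}
    (hmax : ∀ u : Y, (inner ℝ u y : ℝ) - h u ≤ (inner ℝ v y : ℝ) - h v) :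
    conjR h y = ((inner ℝ v y - h v : ℝ) : EReal) :=
  le_antisymm (iSup_le fun u => EReal.coe_le_coe_iff.2 (hmax u)) (conjR_lb h y v)


lemma conjE_eq_subgrad {p : X → EReal} {u0 ζ : X} {pr0 : ℝ} (hp0 : p u0 = ((pr0 : ℝ) : EReal))
    (hsub : ∀ u : X, ((pr0 + inner ℝ ζ (u - u0) : ℝ) : EReal) ≤ p u) :
    conjE p ζ = ((inner ℝ u0 ζ - pr0 : ℝ) : EReal) := by
  apply le_antisymm
  · apply iSup_le
    intro u
    by_cases hpu : p u = ⊤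
    · rw [hpu]
      rw [sub_eq_add_neg]
      simp
    · have hpb : p u ≠ ⊥ := fun hb => by simp [hb] at hsub; exact absurd (hsub u) (by simp [hb])
      lift p u to ℝ using ⟨hpu, hpb⟩ with pu hpu'
      rw [← EReal.coe_sub, EReal.coe_le_coe_iff]
      have h2 := hsub u
      rw [← hpu'] at h2
      have := EReal.coe_le_coe_iff.1 h2
      have hi : (inner ℝ ζ (u - u0) : ℝ) = (inner ℝ u ζ : ℝ) - (inner ℝ u0 ζ : ℝ) := by
        rw [inner_sub_right, real_inner_comm ζ u, real_inner_comm ζ u0]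
      rw [hi] at this
      linarith
  · have := conjE_lb p ζ u0
    rw [hp0, ← EReal.coe_sub] at this
    exact this

lemma subgrad_of_min {p : X → EReal} (pconv : EConvex p) (pbot : ∀ x, p x ≠ ⊥)
    {s : X → ℝ} {u0 g0 : X} {pr0 : ℝ} (hp0 : p u0 = ((pr0 : ℝ) : EReal))
    (hs : ∀ d : X, HasDerivAt (fun t : ℝ => s (u0 + t • d)) ((inner ℝ g0 d : ℝ)) 0)
    (hmin : ∀ u : X, ((pr0 + s u0 : ℝ) : EReal) ≤ p u + ((s u : ℝ) : EReal)) :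
    ∀ u : X, ((pr0 + inner ℝ (-g0) (u - u0) : ℝ) : EReal) ≤ p u := by
  intro u
  by_cases hpu : p u = ⊤
  · rw [hpu]; exact le_top
  have hpb : p u ≠ ⊥ := pbot u
  lift p u to ℝ using ⟨hpu, hpb⟩ with pu hpu'
  rw [EReal.coe_le_coe_iff]
  set d := u - u0 with hd
  have key : -(inner ℝ g0 d : ℝ) ≤ pu - pr0 := by
    apply slope_bound ((hs d).neg) (D := 0)
    intro t ht0 ht1
    have hconv := pconv u0 u (1 - t) t (by linarith) (le_of_lt ht0) (by ring)
    rw [hp0, ← hpu'] at hconv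
    have he : (1 - t) • u0 + t • u = u0 + t • d := by rw [hd]; module
    rw [he] at hconv
    have hc2 : p (u0 + t • d) ≤ (((1 - t) * pr0 + t * pu : ℝ) : EReal) := by
      rw [EReal.coe_add, EReal.coe_mul, EReal.coe_mul]
      exact hconv
    have hm := hmin (u0 + t • d)
    have hcomb : ((pr0 + s u0 : ℝ) : EReal)
        ≤ (((1 - t) * pr0 + t * pu + s (u0 + t • d) : ℝ) : EReal) := by
      calc ((pr0 + s u0 : ℝ) : EReal) ≤ p (u0 + t • d) + ((s (u0 + t • d) : ℝ) : EReal) := hm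
        _ ≤ (((1 - t) * pr0 + t * pu : ℝ) : EReal) + ((s (u0 + t • d) : ℝ) : EReal) :=
            add_le_add_left hc2 _
        _ = _ := by rw [← EReal.coe_add]
    rw [EReal.coe_le_coe_iff] at hcomb
    simp only [Pi.neg_apply, zero_smul, add_zero]
    nlinarith [hcomb]
  have hi : (inner ℝ (-g0) d : ℝ) = -(inner ℝ g0 d : ℝ) := by
    rw [inner_neg_left]
  rw [hd] at hi ⊢
  rw [hi]
  linarith

end AuxLemmas

section Main

variable (A : X →L[ℝ] Y) (c : X) (h : Y → ℝ) (p : X → EReal)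

/-- The primal objective function. -/
def Ffun (u : X) : EReal := ((h (A u) - (inner ℝ c u : ℝ) : ℝ) : EReal) + p u

lemma ereal_coe_add_eq_top_iff (r : ℝ) (a : EReal) : (r : EReal) + a = ⊤ ↔ a = ⊤ := by
  induction a using EReal.rec with
  | bot => simp [EReal.add_bot]
  | coe b => simp [← EReal.coe_add]
  | top => simp [EReal.add_top_of_ne_bot (EReal.coe_ne_bot r)]

lemma Ffun_ne_bot (pbot : ∀ x, p x ≠ ⊥) (u : X) : Ffun A c h p u ≠ ⊥ := by
  unfold Ffun
  intro hb
  rcases EReal.add_eq_bot_iff.1 hb with h1 | h1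
  · exact EReal.coe_ne_bot _ h1
  · exact pbot u h1

lemma Ffun_top_iff (u : X) : Ffun A c h p u = ⊤ ↔ p u = ⊤ :=
  ereal_coe_add_eq_top_iff _ _

lemma Ffun_real {u : X} {r : ℝ} (hp : p u = ((r : ℝ) : EReal)) :
    Ffun A c h p u = ((h (A u) - (inner ℝ c u : ℝ) + r : ℝ) : EReal) := by
  unfold Ffun; rw [hp, ← EReal.coe_add]

lemma Ffun_add_quad (u : X) (q : ℝ) :
    Ffun A c h p u + ((q : ℝ) : EReal)
      = ((h (A u) - (inner ℝ c u : ℝ) + q : ℝ) : EReal) + p u := by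
  unfold Ffun
  have e : ((h (A u) - (inner ℝ c u : ℝ) + q : ℝ) : EReal)
      = ((h (A u) - (inner ℝ c u : ℝ) : ℝ) : EReal) + ((q : ℝ) : EReal) := by
    rw [← EReal.coe_add]
  rw [e]
  abel

lemma sder {Gh : Y → Y} (hdiff : ∀ y, HasGradientAt h (Gh y) y)
    (x u0 d : X) {σ : ℝ} (hσ : 0 < σ) :
    HasDerivAt
      (fun t : ℝ => h (A (u0 + t • d)) - (inner ℝ c (u0 + t • d) : ℝ)
        + ‖u0 + t • d - x‖ ^ 2 / (2 * σ))
      ((inner ℝ (ContinuousLinearMap.adjoint A (Gh (A u0)) - c + σ⁻¹ • (u0 - x)) d : ℝ)) 0 := by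
  have h1 : HasDerivAt (fun t : ℝ => h (A (u0 + t • d))) ((inner ℝ (Gh (A u0)) (A d) : ℝ)) 0 := by
    have hfun : (fun t : ℝ => h (A (u0 + t • d))) = fun t : ℝ => h (A u0 + t • A d) := by
      funext t; rw [map_add, map_smul]
    rw [hfun]
    exact hasDerivAt_line (hdiff (A u0)) (A d)
  have h2 : HasDerivAt (fun t : ℝ => (inner ℝ c (u0 + t • d) : ℝ)) ((inner ℝ c d : ℝ)) 0 := by
    have hfun : (fun t : ℝ => (inner ℝ c (u0 + t • d) : ℝ))
        = fun t : ℝ => (inner ℝ c u0 : ℝ) + t * (inner ℝ c d : ℝ) := by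
      funext t; rw [inner_add_right, real_inner_smul_right]
    rw [hfun]
    simpa using (hasDerivAt_mul_const (inner ℝ c d : ℝ)).const_add (inner ℝ c u0 : ℝ)
  have h3 : HasDerivAt (fun t : ℝ => ‖u0 + t • d - x‖ ^ 2 / (2 * σ))
      ((inner ℝ (u0 - x) d : ℝ) / σ) 0 := by
    have hfun : (fun t : ℝ => ‖u0 + t • d - x‖ ^ 2)
        = fun t : ℝ => ‖u0 - x‖ ^ 2 + 2 * (t * (inner ℝ (u0 - x) d : ℝ)) + t ^ 2 * ‖d‖ ^ 2 := by
      funext t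
      have e : u0 + t • d - x = (u0 - x) + t • d := by abel
      rw [e, norm_add_sq_real, real_inner_smul_right]
      have : ‖t • d‖ ^ 2 = t ^ 2 * ‖d‖ ^ 2 := by
        rw [norm_smul, Real.norm_eq_abs, mul_pow, sq_abs]
      rw [this]
    have hd1 : HasDerivAt (fun t : ℝ => ‖u0 - x‖ ^ 2 + 2 * (t * (inner ℝ (u0 - x) d : ℝ))
        + t ^ 2 * ‖d‖ ^ 2) (2 * (inner ℝ (u0 - x) d : ℝ) + (2 * (0:ℝ) ^ 1) * ‖d‖ ^ 2) 0 := by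
      exact (((hasDerivAt_mul_const _).const_mul 2).const_add _).add
        ((hasDerivAt_pow 2 0).mul_const _)
    have := (hfun ▸ hd1).div_const (2 * σ)
    refine this.congr_deriv ?_
    symm
    field_simp
    ring
  have hcomb := (h1.sub h2).add h3
  refine hcomb.congr_deriv ?_
  symm
  rw [inner_add_left, inner_sub_left, real_inner_smul_left,
    ContinuousLinearMap.adjoint_inner_left]
  field_simp

lemma exists_prox {Gh : Y → Y} (hdiff : ∀ y, HasGradientAt h (Gh y) y)
    (plsc : LowerSemicontinuous p) (pbot : ∀ x, p x ≠ ⊥)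
    {xbar : X} (hxbar : ∀ u : X, Ffun A c h p xbar ≤ Ffun A c h p u)
    (hxtop : Ffun A c h p xbar ≠ ⊤)
    {σ : ℝ} (hσ : 0 < σ) (x : X) :
    ∃ ub : X, ∀ u : X,
      Ffun A c h p ub + ((‖ub - x‖ ^ 2 / (2 * σ) : ℝ) : EReal)
        ≤ Ffun A c h p u + ((‖u - x‖ ^ 2 / (2 * σ) : ℝ) : EReal) := by
  have hxbot : Ffun A c h p xbar ≠ ⊥ := Ffun_ne_bot A c h p pbot xbar
  set fb : ℝ := (Ffun A c h p xbar).toReal with hfb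
  have hfbe : Ffun A c h p xbar = ((fb : ℝ) : EReal) := (EReal.coe_toReal hxtop hxbot).symm
  -- continuity of h
  have hc : Continuous h := continuous_iff_continuousAt.2 fun y =>
    (hdiff y).hasFDerivAt.continuousAt
  set g : X → ℝ := fun u => h (A u) - (inner ℝ c u : ℝ) + ‖u - x‖ ^ 2 / (2 * σ) with hg
  have hgc : Continuous g := by
    apply Continuous.add
    · exact (hc.comp A.continuous).sub (continuous_const.inner continuous_id)
    · exact ((continuous_id.sub continuous_const).norm.pow 2).div_const _
  set φ : X → EReal := fun u => Ffun A c h p u + ((‖u - x‖ ^ 2 / (2 * σ) : ℝ) : EReal) with hφ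
  have hφeq : ∀ u, φ u = ((g u : ℝ) : EReal) + p u := fun u =>
    Ffun_add_quad A c h p u _
  have hlsc : LowerSemicontinuous φ := by
    have : LowerSemicontinuous fun u => ((g u : ℝ) : EReal) + p u := by
      apply LowerSemicontinuous.add'
      · exact (continuous_coe_real_ereal.comp hgc).lowerSemicontinuous
      · exact plsc
      · intro u
        exact EReal.continuousAt_add (Or.inl (EReal.coe_ne_top _)) (Or.inl (EReal.coe_ne_bot _))
    simpa [funext hφeq] using this
  set R : ℝ := ‖xbar - x‖ + 1 with hR
  have hR0 : 0 ≤ R := by positivity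
  have hxbar_mem : xbar ∈ Metric.closedBall x R := by
    rw [Metric.mem_closedBall, dist_eq_norm]
    simp [hR]
  obtain ⟨u0, hu0mem, hu0min⟩ := exists_min_lsc (isCompact_closedBall x R) hlsc
    ⟨xbar, hxbar_mem⟩
  refine ⟨u0, fun u => ?_⟩
  by_cases hu : u ∈ Metric.closedBall x R
  · exact hu0min u hu
  · -- outside the ball
    have hdist : R < ‖u - x‖ := by
      rw [Metric.mem_closedBall, dist_eq_norm, not_le] at hu
      exact hu
    have h1 : φ u0 ≤ φ xbar := hu0min xbar hxbar_mem
    have h2 : φ xbar ≤ ((fb + R ^ 2 / (2 * σ) : ℝ) : EReal) := by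
      rw [hφ]
      simp only []
      rw [hfbe, ← EReal.coe_add, EReal.coe_le_coe_iff]
      have : ‖xbar - x‖ ^ 2 ≤ R ^ 2 := by nlinarith [norm_nonneg (xbar - x)]
      have h2σ : 0 < 2 * σ := by linarith
      gcongr
    have h3 : ((fb + R ^ 2 / (2 * σ) : ℝ) : EReal) ≤ φ u := by
      have hFu : ((fb : ℝ) : EReal) ≤ Ffun A c h p u := hfbe ▸ hxbar u
      calc ((fb + R ^ 2 / (2 * σ) : ℝ) : EReal)
          ≤ ((fb + ‖u - x‖ ^ 2 / (2 * σ) : ℝ) : EReal) := by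
            rw [EReal.coe_le_coe_iff]
            have : R ^ 2 ≤ ‖u - x‖ ^ 2 := by nlinarith
            have h2σ : 0 < 2 * σ := by linarith
            gcongr
        _ = ((fb : ℝ) : EReal) + ((‖u - x‖ ^ 2 / (2 * σ) : ℝ) : EReal) := by
            rw [← EReal.coe_add]
        _ ≤ Ffun A c h p u + ((‖u - x‖ ^ 2 / (2 * σ) : ℝ) : EReal) :=
            add_le_add_left hFu _
    exact h1.trans (h2.trans h3)

end Main

section Main2

variable (A : X →L[ℝ] Y) (c : X) (h : Y → ℝ) (p : X → EReal)

lemma prox_props {Gh : Y → Y} (hconv : ConvexOn ℝ Set.univ h)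
    (hdiff : ∀ y, HasGradientAt h (Gh y) y)
    (pconv : EConvex p) (pbot : ∀ x, p x ≠ ⊥)
    {σ : ℝ} (hσ : 0 < σ) (x : X) {ub : X}
    (hmin : ∀ u : X, Ffun A c h p ub + ((‖ub - x‖ ^ 2 / (2 * σ) : ℝ) : EReal)
        ≤ Ffun A c h p u + ((‖u - x‖ ^ 2 / (2 * σ) : ℝ) : EReal))
    (hubtop : Ffun A c h p ub ≠ ⊤) :
    ∃ pr fr : ℝ, p ub = ((pr : ℝ) : EReal) ∧ Ffun A c h p ub = ((fr : ℝ) : EReal) ∧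
      fr = h (A ub) - (inner ℝ c ub : ℝ) + pr ∧
      (∀ u : X, ((pr + inner ℝ (c - ContinuousLinearMap.adjoint A (Gh (A ub))
          - σ⁻¹ • (ub - x)) (u - ub) : ℝ) : EReal) ≤ p u) ∧
      (∀ u : X, ((fr + inner ℝ (σ⁻¹ • (x - ub)) (u - ub) : ℝ) : EReal) ≤ Ffun A c h p u) := by
  have hpbot : p ub ≠ ⊥ := pbot ub
  have hptop : p ub ≠ ⊤ := fun ht => hubtop ((Ffun_top_iff A c h p ub).2 ht)
  set pr : ℝ := (p ub).toReal with hpr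
  have hp0 : p ub = ((pr : ℝ) : EReal) := (EReal.coe_toReal hptop hpbot).symm
  set fr : ℝ := h (A ub) - (inner ℝ c ub : ℝ) + pr with hfr
  have hf0 : Ffun A c h p ub = ((fr : ℝ) : EReal) := Ffun_real A c h p hp0
  set G : Y := Gh (A ub) with hG
  set B : Y →L[ℝ] X := ContinuousLinearMap.adjoint A with hB
  set ζ : X := c - B G - σ⁻¹ • (ub - x) with hζ
  -- transformed minimality for p + smooth
  have hmin' : ∀ u : X,
      ((pr + (h (A ub) - (inner ℝ c ub : ℝ) + ‖ub - x‖ ^ 2 / (2 * σ)) : ℝ) : EReal)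
        ≤ p u + (((h (A u) - (inner ℝ c u : ℝ) + ‖u - x‖ ^ 2 / (2 * σ)) : ℝ) : EReal) := by
    intro u
    have h1 := hmin u
    rw [Ffun_add_quad, Ffun_add_quad, hp0, ← EReal.coe_add] at h1
    calc ((pr + (h (A ub) - (inner ℝ c ub : ℝ) + ‖ub - x‖ ^ 2 / (2 * σ)) : ℝ) : EReal)
        = ((h (A ub) - (inner ℝ c ub : ℝ) + ‖ub - x‖ ^ 2 / (2 * σ) + pr : ℝ) : EReal) :=
          congrArg (fun r : ℝ => (r : EReal)) (by ring)
      _ ≤ ((h (A u) - (inner ℝ c u : ℝ) + ‖u - x‖ ^ 2 / (2 * σ) : ℝ) : EReal) + p u := h1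
      _ = p u + ((h (A u) - (inner ℝ c u : ℝ) + ‖u - x‖ ^ 2 / (2 * σ) : ℝ) : EReal) := add_comm _ _
  have hsubp : ∀ u : X, ((pr + inner ℝ (-(B G - c + σ⁻¹ • (ub - x))) (u - ub) : ℝ) : EReal)
      ≤ p u := by
    apply subgrad_of_min (s := fun u : X => h (A u) - (inner ℝ c u : ℝ)
        + ‖u - x‖ ^ 2 / (2 * σ)) pconv pbot hp0
    · intro d
      exact sder A c h hdiff x ub d hσ
    · exact hmin'
  have hζeq : ζ = -(B G - c + σ⁻¹ • (ub - x)) := by rw [hζ]; module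
  refine ⟨pr, fr, hp0, hf0, hfr, ?_, ?_⟩
  · intro u
    have := hsubp u
    rw [← hζeq] at this
    exact this
  · intro u
    by_cases hpu : p u = ⊤
    · rw [(Ffun_top_iff A c h p u).2 hpu]
      exact le_top
    have hpub : p u ≠ ⊥ := pbot u
    have hpu' : p u = (((p u).toReal : ℝ) : EReal) := (EReal.coe_toReal hpu hpub).symm
    set pu : ℝ := (p u).toReal with hpudef
    rw [Ffun_real A c h p hpu', EReal.coe_le_coe_iff]
    have hsub := hsubp u
    rw [← hζeq, hpu', EReal.coe_le_coe_iff] at hsub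
    have hgrad := grad_ineq hconv hdiff (A ub) (A u)
    have hadj : (inner ℝ G (A u - A ub) : ℝ) = (inner ℝ (B G) (u - ub) : ℝ) := by
      rw [← map_sub]
      exact (ContinuousLinearMap.adjoint_inner_left A (u - ub) G).symm
    rw [hadj] at hgrad
    have hvec : σ⁻¹ • (x - ub) = B G - c + ζ := by rw [hζ]; module
    have hexp : (inner ℝ (σ⁻¹ • (x - ub)) (u - ub) : ℝ)
        = (inner ℝ (B G) (u - ub) : ℝ) - (inner ℝ c (u - ub) : ℝ) + (inner ℝ ζ (u - ub) : ℝ) := by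
      rw [hvec, inner_add_left, inner_sub_left]
    have hcsplit : (inner ℝ c (u - ub) : ℝ) = (inner ℝ c u : ℝ) - (inner ℝ c ub : ℝ) :=
      inner_sub_right c u ub
    rw [hexp, hcsplit]
    linarith [hgrad, hsub]

end Main2

section Main3

variable (A : X →L[ℝ] Y) (c : X) (h : Y → ℝ) (p : X → EReal)

lemma conjR_ne_bot (y : Y) (u : Y) : conjR h y ≠ ⊥ := fun hb => by
  have := conjR_lb h y u
  rw [hb] at this
  exact (EReal.coe_ne_bot _) (le_bot_iff.1 this)

lemma conjE_ne_bot {ub : X} {pr : ℝ} (hp0 : p ub = ((pr : ℝ) : EReal)) (z : X) :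
    conjE p z ≠ ⊥ := fun hb => by
  have := conjE_lb p z ub
  rw [hb, hp0, ← EReal.coe_sub] at this
  exact (EReal.coe_ne_bot _) (le_bot_iff.1 this)

lemma conjE_lb' {ub : X} {pr : ℝ} (hp0 : p ub = ((pr : ℝ) : EReal)) (z : X) :
    (((inner ℝ ub z : ℝ) - pr : ℝ) : EReal) ≤ conjE p z := by
  have := conjE_lb p z ub
  rw [hp0, ← EReal.coe_sub] at this
  exact this

lemma inner_adj_sum (ub : X) (w1 : Y) (w2 : X) :
    (inner ℝ (A ub) w1 : ℝ) + (inner ℝ ub w2 : ℝ)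
      = (inner ℝ ub (ContinuousLinearMap.adjoint A w1 + w2 - c) : ℝ) + (inner ℝ c ub : ℝ) := by
  have h1 : (inner ℝ ub (ContinuousLinearMap.adjoint A w1 + w2 - c) : ℝ)
      = (inner ℝ ub (ContinuousLinearMap.adjoint A w1) : ℝ) + (inner ℝ ub w2 : ℝ)
        - (inner ℝ ub c : ℝ) := by
    rw [inner_sub_right, inner_add_right]
  have h2 : (inner ℝ (A ub) w1 : ℝ) = (inner ℝ ub (ContinuousLinearMap.adjoint A w1) : ℝ) :=
    calc (inner ℝ (A ub) w1 : ℝ) = (inner ℝ w1 (A ub) : ℝ) := real_inner_comm _ _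
      _ = (inner ℝ (ContinuousLinearMap.adjoint A w1) ub : ℝ) :=
          (ContinuousLinearMap.adjoint_inner_left A ub w1).symm
      _ = (inner ℝ ub (ContinuousLinearMap.adjoint A w1) : ℝ) := real_inner_comm _ _
  have h3 : (inner ℝ ub c : ℝ) = (inner ℝ c ub : ℝ) := real_inner_comm _ _
  linarith

lemma psi_bounds {Gh : Y → Y} (hconv : ConvexOn ℝ Set.univ h)
    (hdiff : ∀ y, HasGradientAt h (Gh y) y)
    {σ : ℝ} (hσ : 0 < σ) (x : X) {ub : X} {pr fr : ℝ}
    (hp0 : p ub = ((pr : ℝ) : EReal))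
    (hfr : fr = h (A ub) - (inner ℝ c ub : ℝ) + pr)
    (hsubp : ∀ u : X, ((pr + inner ℝ (c - ContinuousLinearMap.adjoint A (Gh (A ub))
        - σ⁻¹ • (ub - x)) (u - ub) : ℝ) : EReal) ≤ p u) :
    (ALfun A c (conjR h) (conjE p) σ x
        (Gh (A ub), c - ContinuousLinearMap.adjoint A (Gh (A ub)) - σ⁻¹ • (ub - x))
      ≤ ((-(fr + ‖ub - x‖ ^ 2 / (2 * σ)) : ℝ) : EReal)) ∧
    (∀ w : Y × X,
      ((-(fr + ‖ub - x‖ ^ 2 / (2 * σ))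
          + ‖x - σ • (ContinuousLinearMap.adjoint A w.1 + w.2 - c) - ub‖ ^ 2 / (2 * σ) : ℝ) : EReal)
        ≤ ALfun A c (conjR h) (conjE p) σ x w) := by
  set B : Y →L[ℝ] X := ContinuousLinearMap.adjoint A with hB
  set w1s : Y := Gh (A ub) with hw1s
  set w2s : X := c - B w1s - σ⁻¹ • (ub - x) with hw2s
  have hconj1 : conjR h w1s = (((inner ℝ (A ub) w1s : ℝ) - h (A ub) : ℝ) : EReal) := by
    apply conjR_eq_max
    intro u
    have hg := grad_ineq hconv hdiff (A ub) u
    have he : (inner ℝ w1s (u - A ub) : ℝ) = (inner ℝ w1s u : ℝ) - (inner ℝ w1s (A ub) : ℝ) :=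
      inner_sub_right _ _ _
    rw [he] at hg
    have c1 : (inner ℝ u w1s : ℝ) = (inner ℝ w1s u : ℝ) := real_inner_comm _ _
    have c2 : (inner ℝ (A ub) w1s : ℝ) = (inner ℝ w1s (A ub) : ℝ) := real_inner_comm _ _
    linarith
  have hconj2 : conjE p w2s = (((inner ℝ ub w2s : ℝ) - pr : ℝ) : EReal) :=
    conjE_eq_subgrad hp0 (by intro u; exact hsubp u)
  constructor
  · -- value at the optimal dual pair
    have hrs : B w1s + w2s - c = -(σ⁻¹ • (ub - x)) := by rw [hw2s]; module
    have hzero : x - σ • (B w1s + w2s - c) - ub = 0 := by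
      rw [hrs]
      have : σ • (σ⁻¹ • (ub - x)) = ub - x := by
        rw [smul_smul, mul_inv_cancel₀ (ne_of_gt hσ), one_smul]
      rw [smul_neg, this]
      abel
    show conjR h w1s + conjE p w2s + _ ≤ _
    rw [hconj1, hconj2, ← EReal.coe_add, ← EReal.coe_add, EReal.coe_le_coe_iff]
    have halg := key_algebra hσ x ub (B w1s + w2s - c)
    have hsum := inner_adj_sum A c ub w1s w2s
    have hinner : (inner ℝ ub (B w1s + w2s - c) : ℝ) - (inner ℝ x (B w1s + w2s - c) : ℝ)
        = (inner ℝ (ub - x) (B w1s + w2s - c) : ℝ) := (inner_sub_left _ _ _).symm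
    rw [hzero] at halg
    norm_num at halg
    linarith [halg, hsum, hinner]
  · intro w
    obtain ⟨w1, w2⟩ := w
    show _ ≤ conjR h w1 + conjE p w2 + _
    by_cases hT1 : conjR h w1 = ⊤
    · rw [hT1, EReal.top_add_of_ne_bot (conjE_ne_bot p hp0 w2),
        EReal.top_add_of_ne_bot (EReal.coe_ne_bot _)]
      exact le_top
    by_cases hT2 : conjE p w2 = ⊤
    · rw [hT2, EReal.add_top_of_ne_bot (conjR_ne_bot h w1 (A ub)),
        EReal.top_add_of_ne_bot (EReal.coe_ne_bot _)]
      exact le_top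
    have hH : conjR h w1 = (((conjR h w1).toReal : ℝ) : EReal) :=
      (EReal.coe_toReal hT1 (conjR_ne_bot h w1 (A ub))).symm
    have hP : conjE p w2 = (((conjE p w2).toReal : ℝ) : EReal) :=
      (EReal.coe_toReal hT2 (conjE_ne_bot p hp0 w2)).symm
    set H : ℝ := (conjR h w1).toReal
    set P : ℝ := (conjE p w2).toReal
    have hHlb : (inner ℝ (A ub) w1 : ℝ) - h (A ub) ≤ H := by
      have := conjR_lb h w1 (A ub)
      rw [hH, EReal.coe_le_coe_iff] at this
      exact this
    have hPlb : (inner ℝ ub w2 : ℝ) - pr ≤ P := by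
      have := conjE_lb' p hp0 w2
      rw [hP, EReal.coe_le_coe_iff] at this
      exact this
    rw [hH, hP, ← EReal.coe_add, ← EReal.coe_add, EReal.coe_le_coe_iff]
    have halg := key_algebra hσ x ub (B w1 + w2 - c)
    have hsum := inner_adj_sum A c ub w1 w2
    have hinner : (inner ℝ ub (B w1 + w2 - c) : ℝ) - (inner ℝ x (B w1 + w2 - c) : ℝ)
        = (inner ℝ (ub - x) (B w1 + w2 - c) : ℝ) := (inner_sub_left _ _ _).symm
    linarith [halg, hsum, hinner, hHlb, hPlb]

end Main3

section Main4

variable {h : Y → ℝ} {Gh : Y → Y}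

lemma conj_strong_lb {αh : ℝ} (hαh : 0 < αh) (hconv : ConvexOn ℝ Set.univ h)
    (hdiff : ∀ y, HasGradientAt h (Gh y) y)
    (hlip : ∀ y y' : Y, ‖Gh y - Gh y'‖ ≤ (1 / αh) * ‖y - y'‖) (v0 y : Y) :
    (((inner ℝ v0 (Gh v0) : ℝ) - h v0 + (inner ℝ v0 (y - Gh v0) : ℝ)
        + (αh / 4) * ‖y - Gh v0‖ ^ 2 : ℝ) : EReal) ≤ conjR h y := by
  set d : Y := y - Gh v0 with hd
  set u : Y := v0 + (αh / 2) • d with hu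
  refine le_trans ?_ (conjR_lb h y u)
  rw [EReal.coe_le_coe_iff]
  have hdes := weak_descent hαh hconv hdiff hlip v0 u
  have he : u - v0 = (αh / 2) • d := by rw [hu]; abel
  have hn : ‖u - v0‖ ^ 2 = (αh / 2) ^ 2 * ‖d‖ ^ 2 := by
    rw [he, norm_smul, Real.norm_eq_abs, mul_pow, sq_abs]
  have hiu : (inner ℝ u y : ℝ) = (inner ℝ v0 y : ℝ) + (inner ℝ (u - v0) y : ℝ) := by
    rw [← inner_add_left]; norm_num
  have hgd : (inner ℝ (Gh v0) (u - v0) : ℝ) = (inner ℝ (u - v0) (Gh v0) : ℝ) :=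
    real_inner_comm _ _
  have hud : (inner ℝ (u - v0) y : ℝ) - (inner ℝ (u - v0) (Gh v0) : ℝ)
      = (αh / 2) * ‖d‖ ^ 2 := by
    rw [← inner_sub_right, he, real_inner_smul_left, ← hd, real_inner_self_eq_norm_sq]
  have hv0y : (inner ℝ v0 y : ℝ) = (inner ℝ v0 (Gh v0) : ℝ) + (inner ℝ v0 d : ℝ) := by
    rw [← inner_add_right, hd]; norm_num
  have hcoef : (1 / αh) * ((αh / 2) ^ 2) = αh / 4 := by field_simp; ring
  have hcoef2 : 1 / αh * ‖u - v0‖ ^ 2 = αh / 4 * ‖d‖ ^ 2 := by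
    rw [hn, ← mul_assoc, hcoef]
  linarith [hdes, hiu, hud, hv0y, hgd, hcoef2]

lemma max_grad_eq (hconv : ConvexOn ℝ Set.univ h)
    (hdiff : ∀ y, HasGradientAt h (Gh y) y) {y' v0 : Y}
    (hmax : ∀ u : Y, (inner ℝ u y' : ℝ) - h u ≤ (inner ℝ v0 y' : ℝ) - h v0) : y' = Gh v0 := by
  have key : ∀ dv : Y, (inner ℝ dv y' : ℝ) - (inner ℝ (Gh v0) dv : ℝ) ≤ 0 := by
    intro dv
    have h1 : HasDerivAt (fun t : ℝ => (inner ℝ (v0 + t • dv) y' : ℝ))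
        ((inner ℝ dv y' : ℝ)) 0 := by
      have hfun : (fun t : ℝ => (inner ℝ (v0 + t • dv) y' : ℝ))
          = fun t : ℝ => (inner ℝ v0 y' : ℝ) + t * (inner ℝ dv y' : ℝ) := by
        funext t; rw [inner_add_left, real_inner_smul_left]
      rw [hfun]
      simpa using (hasDerivAt_mul_const (inner ℝ dv y' : ℝ)).const_add (inner ℝ v0 y' : ℝ)
    have h2 := hasDerivAt_line (hdiff v0) dv
    have hg := h1.sub h2
    have := slope_bound (C := 0) (D := 0) hg ?_
    · linarith
    · intro t ht0 ht1
      have := hmax (v0 + t • dv)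
      simp only [Pi.sub_apply, zero_smul, add_zero]
      nlinarith [hmax (v0 + t • dv)]
  have h3 := key (y' - Gh v0)
  have c1 : (inner ℝ (y' - Gh v0) (y' - Gh v0) : ℝ) = ‖y' - Gh v0‖ ^ 2 :=
    real_inner_self_eq_norm_sq _
  have c2 : (inner ℝ (y' - Gh v0) (y' - Gh v0) : ℝ)
      = (inner ℝ (y' - Gh v0) y' : ℝ) - (inner ℝ (y' - Gh v0) (Gh v0) : ℝ) :=
    inner_sub_right _ _ _
  have c3 : (inner ℝ (Gh v0) (y' - Gh v0) : ℝ) = (inner ℝ (y' - Gh v0) (Gh v0) : ℝ) :=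
    real_inner_comm _ _
  have h5 : ‖y' - Gh v0‖ ^ 2 ≤ 0 := by linarith
  have h6 : ‖y' - Gh v0‖ = 0 := by nlinarith [norm_nonneg (y' - Gh v0)]
  rw [← sub_eq_zero]
  exact norm_eq_zero.1 h6

lemma interior_dom_conjR (hconv : ConvexOn ℝ Set.univ h)
    (hdiff : ∀ y, HasGradientAt h (Gh y) y)
    (helsc : ∀ K : Set Y, IsCompact K → Convex ℝ K → ∃ β : ℝ, 0 < β ∧
      ∀ y' ∈ K, ∀ y ∈ K, ∀ l : ℝ, 0 ≤ l → l ≤ 1 →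
        h ((1 - l) • y' + l • y) + β / 2 * l * (1 - l) * ‖y' - y‖ ^ 2 ≤
          (1 - l) * h y' + l * h y) (v0 : Y) :
    Gh v0 ∈ interior {w : Y | conjR h w ≠ ⊤} := by
  obtain ⟨β, hβ, hK⟩ := helsc (Metric.closedBall v0 1) (isCompact_closedBall v0 1)
    (convex_closedBall v0 1)
  set ys : Y := Gh v0 with hys
  have hv0mem : v0 ∈ Metric.closedBall v0 1 := Metric.mem_closedBall_self zero_le_one
  -- pointwise strong convexity bound on the ball
  have hpt : ∀ u ∈ Metric.closedBall v0 1,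
      h v0 + (inner ℝ ys (u - v0) : ℝ) + β / 2 * ‖u - v0‖ ^ 2 ≤ h u := by
    intro u hum
    have key : (inner ℝ ys (u - v0) : ℝ) ≤ h u - h v0 - β / 2 * ‖v0 - u‖ ^ 2 := by
      apply slope_bound (hasDerivAt_line (hdiff v0) (u - v0)) (D := β / 2 * ‖v0 - u‖ ^ 2)
      intro l hl0 hl1
      have := hK v0 hv0mem u hum l (le_of_lt hl0) hl1
      have he : (1 - l) • v0 + l • u = v0 + l • (u - v0) := by module
      rw [he] at this
      simp only [zero_smul, add_zero]
      nlinarith [this]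
    have hnn : ‖v0 - u‖ = ‖u - v0‖ := norm_sub_rev _ _
    rw [hnn] at key
    linarith
  -- ball around the gradient is contained in the domain
  apply mem_interior.2
  refine ⟨Metric.ball ys (β / 2), ?_, Metric.isOpen_ball, Metric.mem_ball_self (by linarith)⟩
  intro y hy
  rw [Metric.mem_ball, dist_eq_norm] at hy
  show conjR h y ≠ ⊤
  have hub : conjR h y ≤ (((inner ℝ v0 y : ℝ) - h v0 + β / 2 : ℝ) : EReal) := by
    apply iSup_le
    intro u
    rw [EReal.coe_le_coe_iff]
    by_cases hmem : u ∈ Metric.closedBall v0 1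
    · have h1 := hpt u hmem
      have hcs : (inner ℝ (u - v0) (y - ys) : ℝ) ≤ ‖u - v0‖ * ‖y - ys‖ :=
        real_inner_le_norm _ _
      have hsplit : (inner ℝ u y : ℝ) = (inner ℝ v0 y : ℝ) + (inner ℝ (u - v0) y : ℝ) := by
        rw [← inner_add_left]; norm_num
      have hsplit2 : (inner ℝ (u - v0) y : ℝ)
          = (inner ℝ (u - v0) ys : ℝ) + (inner ℝ (u - v0) (y - ys) : ℝ) := by
        rw [← inner_add_right]; norm_num
      have hcomm : (inner ℝ ys (u - v0) : ℝ) = (inner ℝ (u - v0) ys : ℝ) := real_inner_comm _ _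
      have hb1 : ‖u - v0‖ ≤ 1 := by
        rw [Metric.mem_closedBall, dist_eq_norm] at hmem; exact hmem
      have hprod : ‖u - v0‖ * ‖y - ys‖ ≤ β / 2 := by
        have h0 : 0 ≤ ‖y - ys‖ := norm_nonneg _
        nlinarith [norm_nonneg (u - v0)]
      nlinarith [sq_nonneg ‖u - v0‖]
    · -- outside the unit ball
      rw [Metric.mem_closedBall, dist_eq_norm, not_le] at hmem
      have hn1 : (1:ℝ) < ‖u - v0‖ := hmem
      have hn0 : (0:ℝ) < ‖u - v0‖ := by linarith
      set t : ℝ := ‖u - v0‖⁻¹ with htdef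
      have ht0 : 0 < t := inv_pos.2 hn0
      have ht1 : t < 1 := by
        rw [htdef]
        exact inv_lt_one_of_one_lt₀ hn1
      have htn : t * ‖u - v0‖ = 1 := inv_mul_cancel₀ (ne_of_gt hn0)
      set u' : Y := v0 + t • (u - v0) with hu'
      have hu'mem : u' ∈ Metric.closedBall v0 1 := by
        rw [Metric.mem_closedBall, dist_eq_norm]
        have : u' - v0 = t • (u - v0) := by rw [hu']; abel
        rw [this, norm_smul, Real.norm_eq_abs, abs_of_pos ht0, htn]
      have hcv : h u' ≤ (1 - t) * h v0 + t * h u := by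
        have := hconv.2 (mem_univ v0) (mem_univ u) (by linarith : (0:ℝ) ≤ 1 - t)
          (le_of_lt ht0) (by ring)
        have he : (1 - t) • v0 + t • u = v0 + t • (u - v0) := by module
        rw [he] at this
        simp only [smul_eq_mul] at this
        rw [hu']
        exact this
      have hpt' := hpt u' hu'mem
      have hiu' : (inner ℝ ys (u' - v0) : ℝ) = t * (inner ℝ ys (u - v0) : ℝ) := by
        have : u' - v0 = t • (u - v0) := by rw [hu']; abel
        rw [this, real_inner_smul_right]
      have hnu' : ‖u' - v0‖ ^ 2 = 1 := by
        have : u' - v0 = t • (u - v0) := by rw [hu']; abel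
        rw [this, norm_smul, Real.norm_eq_abs, abs_of_pos ht0, htn]
        norm_num
      rw [hiu', hnu'] at hpt'
      -- derive h u - h v0 ≥ ⟪ys, u - v0⟫ + (β/2) ‖u - v0‖
      have hdiv : (inner ℝ ys (u - v0) : ℝ) + β / 2 * ‖u - v0‖ ≤ h u - h v0 := by
        have hcomb : h v0 + t * (inner ℝ ys (u - v0) : ℝ) + β / 2 * 1
            ≤ (1 - t) * h v0 + t * h u := le_trans hpt' hcv
        have hmul := mul_le_mul_of_nonneg_left
          (by linarith : t * (inner ℝ ys (u - v0) : ℝ) + β / 2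
            ≤ t * (h u - h v0)) (le_of_lt hn0)
        have e1 : ‖u - v0‖ * (t * (h u - h v0)) = h u - h v0 := by
          rw [← mul_assoc, mul_comm ‖u - v0‖ t, htn, one_mul]
        have e2 : ‖u - v0‖ * (t * (inner ℝ ys (u - v0) : ℝ) + β / 2)
            = (inner ℝ ys (u - v0) : ℝ) + β / 2 * ‖u - v0‖ := by
          rw [mul_add, ← mul_assoc, mul_comm ‖u - v0‖ t, htn, one_mul]
          ring
        rw [e1, e2] at hmul
        exact hmul
      have hcs : (inner ℝ (u - v0) (y - ys) : ℝ) ≤ ‖u - v0‖ * ‖y - ys‖ :=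
        real_inner_le_norm _ _
      have hsplit : (inner ℝ u y : ℝ) = (inner ℝ v0 y : ℝ) + (inner ℝ (u - v0) y : ℝ) := by
        rw [← inner_add_left]; norm_num
      have hsplit2 : (inner ℝ (u - v0) y : ℝ)
          = (inner ℝ (u - v0) ys : ℝ) + (inner ℝ (u - v0) (y - ys) : ℝ) := by
        rw [← inner_add_right]; norm_num
      have hcomm : (inner ℝ ys (u - v0) : ℝ) = (inner ℝ (u - v0) ys : ℝ) := real_inner_comm _ _
      have hprod : ‖u - v0‖ * ‖y - ys‖ ≤ ‖u - v0‖ * (β / 2) :=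
        mul_le_mul_of_nonneg_left (le_of_lt hy) (le_of_lt hn0)
      nlinarith [hβ]
  intro htop
  rw [htop] at hub
  exact (EReal.coe_ne_top _) (top_le_iff.1 hub)

end Main4

-- MAIN CONTEXT PLACEHOLDER5

theorem ssnal_global_convergence
    (A : X →L[ℝ] Y) (c : X)
    (h : Y → ℝ) (Gh : Y → Y) (αh : ℝ) (p : X → EReal)
    -- Assumption 2(a): h convex differentiable with 1/α_h-Lipschitz gradient
    (hαh : 0 < αh)
    (hconv : ConvexOn ℝ Set.univ h)
    (hdiff : ∀ y, HasGradientAt h (Gh y) y)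
    (hlip : ∀ y y' : Y, ‖Gh y - Gh y'‖ ≤ (1 / αh) * ‖y - y'‖)
    -- Assumption 2(b): h is essentially locally strongly convex
    (helsc : ∀ K : Set Y, IsCompact K → Convex ℝ K → ∃ β : ℝ, 0 < β ∧
      ∀ y' ∈ K, ∀ y ∈ K, ∀ l : ℝ, 0 ≤ l → l ≤ 1 →
        h ((1 - l) • y' + l • y) + β / 2 * l * (1 - l) * ‖y' - y‖ ^ 2 ≤
          (1 - l) * h y' + l * h y)
    -- p closed proper convex
    (pconv : EConvex p) (plsc : LowerSemicontinuous p)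
    (pbot : ∀ x, p x ≠ ⊥) (pne : ∃ x, p x ≠ ⊤)
    -- the solution set of (P) is nonempty
    (hsolP : ∃ xbar : X, ∀ x : X,
      (((h (A xbar) - (inner ℝ c xbar : ℝ)) : ℝ) : EReal) + p xbar ≤
        (((h (A x) - (inner ℝ c x : ℝ)) : ℝ) : EReal) + p x)
    -- the iterates of the inexact augmented Lagrangian method
    (x : ℕ → X) (y : ℕ → Y) (z : ℕ → X) (σ : ℕ → ℝ) (ε : ℕ → ℝ)
    (hσpos : ∀ k, 0 < σ k) (hσmono : Monotone σ)
    -- stopping criterion (A)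
    (hεnonneg : ∀ k, 0 ≤ ε k) (hεsum : Summable ε)
    (hcritA : ∀ k : ℕ,
      ALfun A c (conjR h) (conjE p) (σ k) (x k) (y (k + 1), z (k + 1)) ≤
        (⨅ w : Y × X, ALfun A c (conjR h) (conjE p) (σ k) (x k) w) +
          ((ε k ^ 2 / (2 * σ k) : ℝ) : EReal))
    -- multiplier update
    (hupdate : ∀ k : ℕ,
      x (k + 1) = x k - σ k • (ContinuousLinearMap.adjoint A (y (k + 1)) + z (k + 1) - c)) :
    -- conclusions
    Bornology.IsBounded (Set.range x) ∧
    (∃ xopt : X,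
      (∀ x' : X,
        (((h (A xopt) - (inner ℝ c xopt : ℝ)) : ℝ) : EReal) + p xopt ≤
          (((h (A x') - (inner ℝ c x' : ℝ)) : ℝ) : EReal) + p x') ∧
      Tendsto x atTop (𝓝 xopt)) ∧
    Bornology.IsBounded (Set.range fun k => (y k, z k)) ∧
    (∃ (ystar : Y) (zstar : X),
      ystar ∈ interior {w : Y | conjR h w ≠ ⊤} ∧
      conjE p zstar ≠ ⊤ ∧
      ContinuousLinearMap.adjoint A ystar + zstar = c ∧
      (∀ (y' : Y) (z' : X), ContinuousLinearMap.adjoint A y' + z' = c →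
        conjR h ystar + conjE p zstar ≤ conjR h y' + conjE p z') ∧
      (∀ (y' : Y) (z' : X), ContinuousLinearMap.adjoint A y' + z' = c →
        conjR h y' + conjE p z' ≤ conjR h ystar + conjE p zstar →
        (y', z') = (ystar, zstar)) ∧
      Tendsto (fun k => (y k, z k)) atTop (𝓝 (ystar, zstar))) := by
  
  classical
  set B : Y →L[ℝ] X := ContinuousLinearMap.adjoint A with hBdef
  set F : X → EReal := Ffun A c h p with hFdef
  obtain ⟨xbar, hxbar⟩ := hsolP
  have hxbarF : ∀ u : X, F xbar ≤ F u := hxbar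
  have hFbot : ∀ u, F u ≠ ⊥ := Ffun_ne_bot A c h p pbot
  obtain ⟨x0, hx0⟩ := pne
  have hx0top : F x0 ≠ ⊤ := fun ht => hx0 ((Ffun_top_iff A c h p x0).1 ht)
  have hxbar_top : F xbar ≠ ⊤ := by
    intro ht
    exact hx0top (top_le_iff.1 (ht ▸ hxbarF x0))
  set fb : ℝ := (F xbar).toReal with hfbdef
  have hfb : F xbar = ((fb : ℝ) : EReal) := (EReal.coe_toReal hxbar_top (hFbot xbar)).symm
  have hσ0 : 0 < σ 0 := hσpos 0
  have hσk : ∀ k, σ 0 ≤ σ k := fun k => hσmono (Nat.zero_le k)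
  -- prox points
  have hex : ∀ k : ℕ, ∃ ub : X, ∀ u : X,
      F ub + ((‖ub - x k‖ ^ 2 / (2 * σ k) : ℝ) : EReal)
        ≤ F u + ((‖u - x k‖ ^ 2 / (2 * σ k) : ℝ) : EReal) := fun k =>
    exists_prox A c h p hdiff plsc pbot hxbarF hxbar_top (hσpos k) (x k)
  choose ub hub using hex
  have hubtop : ∀ k, F (ub k) ≠ ⊤ := by
    intro k ht
    have h1 := hub k xbar
    rw [ht, hfb, ← EReal.coe_add] at h1
    rw [EReal.top_add_of_ne_bot (EReal.coe_ne_bot _)] at h1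
    exact EReal.coe_ne_top _ (top_le_iff.1 h1)
  have hprops := fun k => prox_props A c h p hconv hdiff pconv pbot (hσpos k) (x k)
    (hub k) (hubtop k)
  choose pr fr hpr hfr hfrdef hsubp hsubF using hprops
  simp only [← hFdef] at hfr hsubF
  set bk : ℕ → ℝ := fun k => ‖x k - ub k‖ with hbkdef
  set Mk : ℕ → ℝ := fun k => fr k + ‖ub k - x k‖ ^ 2 / (2 * σ k) with hMkdef
  -- value comparisons: fb ≤ fr k
  have hfrfb : ∀ k, fb ≤ fr k := by
    intro k
    have := hxbarF (ub k)
    rw [hfb, hfr k, EReal.coe_le_coe_iff] at this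
    exact this
  -- criterion (A) consequences
  have hpsi := fun k => psi_bounds A c h p hconv hdiff (hσpos k) (x k) (hpr k)
    (hfrdef k) (hsubp k)
  set rk : ℕ → X := fun k => B (y (k + 1)) + z (k + 1) - c with hrkdef
  have hPsiUB : ∀ k, ALfun A c (conjR h) (conjE p) (σ k) (x k) (y (k + 1), z (k + 1))
      ≤ ((-(Mk k) + ε k ^ 2 / (2 * σ k) : ℝ) : EReal) := by
    intro k
    have h1 := hcritA k
    have h2 : (⨅ w : Y × X, ALfun A c (conjR h) (conjE p) (σ k) (x k) w)
        ≤ ((-(Mk k) : ℝ) : EReal) := le_trans (iInf_le _ _) (hpsi k).1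
    calc ALfun A c (conjR h) (conjE p) (σ k) (x k) (y (k + 1), z (k + 1))
        ≤ (⨅ w : Y × X, ALfun A c (conjR h) (conjE p) (σ k) (x k) w)
          + ((ε k ^ 2 / (2 * σ k) : ℝ) : EReal) := h1
      _ ≤ ((-(Mk k) : ℝ) : EReal) + ((ε k ^ 2 / (2 * σ k) : ℝ) : EReal) :=
          add_le_add_left h2 _
      _ = _ := by rw [← EReal.coe_add]
  have hclose : ∀ k, ‖x (k + 1) - ub k‖ ≤ ε k := by
    intro k
    have hlb := (hpsi k).2 (y (k + 1), z (k + 1))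
    have hupd : x k - σ k • (B (y (k + 1)) + z (k + 1) - c) = x (k + 1) :=
      (hupdate k).symm
    rw [hupd] at hlb
    have h2 := le_trans hlb (hPsiUB k)
    rw [EReal.coe_le_coe_iff] at h2
    have hMke : Mk k = fr k + ‖ub k - x k‖ ^ 2 / (2 * σ k) := rfl
    rw [hMke] at h2
    have h3 : ‖x (k + 1) - ub k‖ ^ 2 ≤ ε k ^ 2 := by
      have hσp := hσpos k
      have h4 : ‖x (k + 1) - ub k‖ ^ 2 / (2 * σ k) ≤ ε k ^ 2 / (2 * σ k) := by linarith
      have h2σ : (0:ℝ) < 2 * σ k := by linarith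
      calc ‖x (k + 1) - ub k‖ ^ 2 = ‖x (k + 1) - ub k‖ ^ 2 / (2 * σ k) * (2 * σ k) := by
            field_simp
        _ ≤ ε k ^ 2 / (2 * σ k) * (2 * σ k) := by
            apply mul_le_mul_of_nonneg_right h4 (le_of_lt h2σ)
        _ = ε k ^ 2 := by field_simp
    nlinarith [norm_nonneg (x (k + 1) - ub k), hεnonneg k]
  -- subgradient-based monotonicity facts for a general minimizer w
  have hS1 : ∀ (w : X), (∀ u, F w ≤ F u) → ∀ k,
      (0:ℝ) ≤ (inner ℝ (x k - ub k) (ub k - w) : ℝ) := by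
    intro w hw k
    have hfw_top : F w ≠ ⊤ := fun ht => hx0top (top_le_iff.1 (ht ▸ hw x0))
    have hfwc : F w = (((F w).toReal : ℝ) : EReal) := (EReal.coe_toReal hfw_top (hFbot w)).symm
    have h1 := hsubF k w
    rw [hfwc, EReal.coe_le_coe_iff] at h1
    have h2 : F w ≤ F (ub k) := hw (ub k)
    rw [hfwc, hfr k, EReal.coe_le_coe_iff] at h2
    have h3 : (inner ℝ ((σ k)⁻¹ • (x k - ub k)) (w - ub k) : ℝ)
        = (σ k)⁻¹ * (inner ℝ (x k - ub k) (w - ub k) : ℝ) := real_inner_smul_left _ _ _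
    rw [h3] at h1
    have hinv : 0 < (σ k)⁻¹ := inv_pos.2 (hσpos k)
    have h4 : (inner ℝ (x k - ub k) (w - ub k) : ℝ) ≤ 0 := by nlinarith
    have h5 : (inner ℝ (x k - ub k) (ub k - w) : ℝ)
        = -(inner ℝ (x k - ub k) (w - ub k) : ℝ) := by
      rw [← inner_neg_right]
      congr 1
      abel
    rw [h5]
    linarith
  have hS2 : ∀ (w : X), (∀ u, F w ≤ F u) → ∀ k,
      ‖ub k - w‖ ^ 2 ≤ ‖x k - w‖ ^ 2 - bk k ^ 2 := by
    intro w hw k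
    have h1 := hS1 w hw k
    have hsplit : x k - w = (x k - ub k) + (ub k - w) := by abel
    have h2 : ‖x k - w‖ ^ 2 = ‖x k - ub k‖ ^ 2
        + 2 * (inner ℝ (x k - ub k) (ub k - w) : ℝ) + ‖ub k - w‖ ^ 2 := by
      rw [hsplit, norm_add_sq_real]
    have hbk : bk k = ‖x k - ub k‖ := rfl
    rw [hbk]
    nlinarith [h1, h2]
  have hS2' : ∀ (w : X), (∀ u, F w ≤ F u) → ∀ k, ‖ub k - w‖ ≤ ‖x k - w‖ := by
    intro w hw k
    have := hS2 w hw k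
    nlinarith [norm_nonneg (ub k - w), norm_nonneg (x k - w), sq_nonneg (bk k)]
  have hS3 : ∀ (w : X), (∀ u, F w ≤ F u) → ∀ k,
      ‖x (k + 1) - w‖ ≤ ‖x k - w‖ + ε k := by
    intro w hw k
    have h1 : x (k + 1) - w = (x (k + 1) - ub k) + (ub k - w) := by abel
    calc ‖x (k + 1) - w‖ ≤ ‖x (k + 1) - ub k‖ + ‖ub k - w‖ := by
          rw [h1]; exact norm_add_le _ _
      _ ≤ ε k + ‖x k - w‖ := add_le_add (hclose k) (hS2' w hw k)
      _ = ‖x k - w‖ + ε k := by ring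
  -- summability bookkeeping
  set E : ℝ := ∑' k, ε k with hEdef
  have hE0 : 0 ≤ E := tsum_nonneg hεnonneg
  have hεE : ∀ k, ε k ≤ E := fun k => Summable.le_tsum hεsum k (fun j _ => hεnonneg j)
  have hpartE : ∀ n, ∑ i ∈ Finset.range n, ε i ≤ E := fun n =>
    Summable.sum_le_tsum _ (fun i _ => hεnonneg i) hεsum
  set a : ℕ → ℝ := fun k => ‖x k - xbar‖ with hadef
  have hstep : ∀ k, a (k + 1) ≤ a k + ε k := fun k => hS3 xbar hxbarF k
  have hpart : ∀ k, a k ≤ a 0 + ∑ i ∈ Finset.range k, ε i := by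
    intro k
    induction k with
    | zero => simp
    | succ n ih =>
      rw [Finset.sum_range_succ]
      have := hstep n
      linarith
  set C0 : ℝ := a 0 + E with hC0def
  have hC00 : 0 ≤ C0 := by
    have : 0 ≤ a 0 := norm_nonneg _
    linarith
  have habound : ∀ k, a k ≤ C0 := fun k => le_trans (hpart k) (by linarith [hpartE k])
  -- sum of bk^2 is finite
  have hw_b : ∀ k, ‖ub k - xbar‖ ≤ C0 := fun k => le_trans (hS2' xbar hxbarF k) (habound k)
  have hsq : ∀ k, a (k + 1) ^ 2 ≤ a k ^ 2 - bk k ^ 2 + ε k * (2 * C0 + E) := by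
    intro k
    have h1 : a (k + 1) ≤ ‖ub k - xbar‖ + ε k := by
      have he : x (k + 1) - xbar = (x (k + 1) - ub k) + (ub k - xbar) := by abel
      calc a (k + 1) = ‖x (k + 1) - xbar‖ := rfl
        _ ≤ ‖x (k + 1) - ub k‖ + ‖ub k - xbar‖ := by rw [he]; exact norm_add_le _ _
        _ ≤ ε k + ‖ub k - xbar‖ := add_le_add_left (hclose k) _
        _ = ‖ub k - xbar‖ + ε k := by ring
    have h2 := hS2 xbar hxbarF k
    have h3 := hw_b k
    have h4 := hεnonneg k
    have h5 := hεE k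
    have h6 : 0 ≤ a (k + 1) := norm_nonneg _
    nlinarith [norm_nonneg (ub k - xbar)]
  have hsumb : ∀ n, ∑ k ∈ Finset.range n, bk k ^ 2
      ≤ a 0 ^ 2 - a n ^ 2 + (2 * C0 + E) * ∑ k ∈ Finset.range n, ε k := by
    intro n
    induction n with
    | zero => simp
    | succ m ih =>
      rw [Finset.sum_range_succ, Finset.sum_range_succ]
      have := hsq m
      nlinarith
  have hsummable_b2 : Summable (fun k => bk k ^ 2) := by
    apply summable_of_sum_range_le (fun k => sq_nonneg _)
    intro n
    have h1 := hsumb n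
    have h2 := hpartE n
    have h3 : (0:ℝ) ≤ 2 * C0 + E := by linarith
    have h4 : (2 * C0 + E) * ∑ k ∈ Finset.range n, ε k ≤ (2 * C0 + E) * E :=
      mul_le_mul_of_nonneg_left h2 h3
    have h5 : 0 ≤ a n ^ 2 := sq_nonneg _
    calc ∑ k ∈ Finset.range n, bk k ^ 2 ≤ a 0 ^ 2 + (2 * C0 + E) * E := by linarith
      _ = a 0 ^ 2 + (2 * C0 + E) * E := rfl
  have hb2_0 : Tendsto (fun k => bk k ^ 2) atTop (𝓝 0) := hsummable_b2.tendsto_atTop_zero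
  have hb0 : Tendsto bk atTop (𝓝 0) := by
    have h1 : Tendsto (fun k => Real.sqrt (bk k ^ 2)) atTop (𝓝 (Real.sqrt 0)) :=
      hb2_0.sqrt
    rw [Real.sqrt_zero] at h1
    have h2 : (fun k => Real.sqrt (bk k ^ 2)) = bk := by
      funext k
      exact Real.sqrt_sq (norm_nonneg _)
    rwa [h2] at h1
  have hε0 : Tendsto ε atTop (𝓝 0) := hεsum.tendsto_atTop_zero
  -- cluster point
  have hxmem : ∀ n, x n ∈ Metric.closedBall xbar C0 := by
    intro n
    rw [Metric.mem_closedBall, dist_eq_norm]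
    exact habound n
  obtain ⟨xinf, _, φs, hφs, hxsub⟩ :=
    tendsto_subseq_of_bounded (Metric.isBounded_closedBall (x := xbar) (r := C0)) hxmem
  have hxsub' : Tendsto (fun j => x (φs j)) atTop (𝓝 xinf) := hxsub
  have hbsub : Tendsto (fun j => bk (φs j)) atTop (𝓝 0) :=
    hb0.comp hφs.tendsto_atTop
  have hubsub : Tendsto (fun j => ub (φs j)) atTop (𝓝 xinf) := by
    rw [tendsto_iff_norm_sub_tendsto_zero]
    apply squeeze_zero (fun j => norm_nonneg _)
      (g := fun j => bk (φs j) + ‖x (φs j) - xinf‖)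
    · intro j
      have he : ub (φs j) - xinf = -(x (φs j) - ub (φs j)) + (x (φs j) - xinf) := by abel
      calc ‖ub (φs j) - xinf‖ ≤ ‖-(x (φs j) - ub (φs j))‖ + ‖x (φs j) - xinf‖ := by
            rw [he]; exact norm_add_le _ _
        _ = bk (φs j) + ‖x (φs j) - xinf‖ := by rw [norm_neg]
    · have h2 : Tendsto (fun j => ‖x (φs j) - xinf‖) atTop (𝓝 0) :=
        tendsto_iff_norm_sub_tendsto_zero.1 hxsub'
      simpa using hbsub.add h2
  -- F (ub k) values converge to fb
  have hfrub : ∀ k, fr k ≤ fb + (σ 0)⁻¹ * C0 * bk k := by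
    intro k
    have h1 := hsubF k xbar
    rw [hfb, EReal.coe_le_coe_iff] at h1
    have h3 : (inner ℝ ((σ k)⁻¹ • (x k - ub k)) (xbar - ub k) : ℝ)
        = (σ k)⁻¹ * (inner ℝ (x k - ub k) (xbar - ub k) : ℝ) := real_inner_smul_left _ _ _
    rw [h3] at h1
    have hcs : (inner ℝ (x k - ub k) (xbar - ub k) : ℝ) ≥ -(bk k * ‖xbar - ub k‖) := by
      have := real_inner_le_norm (x k - ub k) (-(xbar - ub k))
      rw [inner_neg_right, norm_neg] at this
      have hbk : bk k = ‖x k - ub k‖ := rfl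
      linarith [this]
    have hn1 : ‖xbar - ub k‖ = ‖ub k - xbar‖ := norm_sub_rev _ _
    have hn2 : ‖xbar - ub k‖ ≤ C0 := hn1 ▸ hw_b k
    have hinvk : 0 < (σ k)⁻¹ := inv_pos.2 (hσpos k)
    have hinv_le : (σ k)⁻¹ ≤ (σ 0)⁻¹ := by
      apply inv_anti₀ hσ0 (hσk k)
    have hbk0 : 0 ≤ bk k := norm_nonneg _
    have h6 : (σ k)⁻¹ * (inner ℝ (x k - ub k) (xbar - ub k) : ℝ)
        ≥ -((σ 0)⁻¹ * C0 * bk k) := by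
      have h7 : -(bk k * C0) ≤ (inner ℝ (x k - ub k) (xbar - ub k) : ℝ) := by nlinarith
      have h8 := mul_le_mul_of_nonneg_left h7 (le_of_lt hinvk)
      have h9 := mul_le_mul_of_nonneg_right hinv_le (mul_nonneg hbk0 hC00)
      nlinarith [h8, h9]
    linarith
  have hfrconv : Tendsto (fun j => fr (φs j)) atTop (𝓝 fb) := by
    refine tendsto_of_tendsto_of_tendsto_of_le_of_le (g := fun _ => fb)
      (h := fun j => fb + (σ 0)⁻¹ * C0 * bk (φs j)) tendsto_const_nhds ?_ ?_ ?_
    · have : Tendsto (fun j => (σ 0)⁻¹ * C0 * bk (φs j)) atTop (𝓝 0) := by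
        simpa using hbsub.const_mul ((σ 0)⁻¹ * C0)
      simpa using tendsto_const_nhds.add this
    · intro j; exact hfrfb (φs j)
    · intro j; exact hfrub (φs j)
  -- lower semicontinuity of F and minimality of xinf
  have hFlsc : LowerSemicontinuous F := by
    have hc : Continuous h := continuous_iff_continuousAt.2 fun y =>
      (hdiff y).hasFDerivAt.continuousAt
    have hgc : Continuous (fun u : X => h (A u) - (inner ℝ c u : ℝ)) :=
      (hc.comp A.continuous).sub (continuous_const.inner continuous_id)
    have : LowerSemicontinuous fun u : X =>
        ((h (A u) - (inner ℝ c u : ℝ) : ℝ) : EReal) + p u := by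
      apply LowerSemicontinuous.add'
      · exact (continuous_coe_real_ereal.comp hgc).lowerSemicontinuous
      · exact plsc
      · intro u
        exact EReal.continuousAt_add (Or.inl (EReal.coe_ne_top _)) (Or.inl (EReal.coe_ne_bot _))
    exact this
  have hxinf_min : ∀ u : X, F xinf ≤ F u := by
    have hle : F xinf ≤ ((fb : ℝ) : EReal) := by
      by_contra hgt
      push_neg at hgt
      obtain ⟨rr, hrr1, hrr2⟩ := EReal.exists_between_coe_real hgt
      rw [EReal.coe_lt_coe_iff] at hrr1
      have hev1 : ∀ᶠ u' in 𝓝 xinf, ((rr : ℝ) : EReal) < F u' := hFlsc xinf _ hrr2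
      have hev2 : ∀ᶠ j in atTop, ((rr : ℝ) : EReal) < F (ub (φs j)) :=
        hubsub.eventually hev1
      have hev3 : ∀ᶠ j in atTop, fr (φs j) < rr := by
        have : ∀ᶠ j in atTop, fr (φs j) < fb + (rr - fb) := by
          apply hfrconv.eventually_lt_const
          linarith
        filter_upwards [this] with j hj
        linarith
      obtain ⟨j, hj1, hj2⟩ := (hev2.and hev3).exists
      rw [hfr (φs j), EReal.coe_lt_coe_iff] at hj1
      linarith
    intro u
    calc F xinf ≤ ((fb : ℝ) : EReal) := hle
      _ = F xbar := hfb.symm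
      _ ≤ F u := hxbarF u
  have hxinf_eq : F xinf = ((fb : ℝ) : EReal) :=
    le_antisymm (le_trans (hxinf_min xbar) (le_of_eq hfb)) (hfb ▸ hxbarF xinf)
  -- full convergence of x to xinf
  set a' : ℕ → ℝ := fun k => ‖x k - xinf‖ with ha'def
  have hstep' : ∀ k, a' (k + 1) ≤ a' k + ε k := fun k => hS3 xinf hxinf_min k
  set T : ℕ → ℝ := fun k => ∑' j, ε (j + k) with hTdef
  have hTsum : ∀ k, Summable (fun j => ε (j + k)) := fun k =>
    (summable_nat_add_iff k).2 hεsum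
  have hT0 : ∀ k, 0 ≤ T k := fun k => tsum_nonneg (fun j => hεnonneg _)
  have hTrec : ∀ k, T k = ε k + T (k + 1) := by
    intro k
    have h1 := Summable.tsum_eq_zero_add (hTsum k)
    simp only [zero_add] at h1
    rw [hTdef]
    simp only []
    rw [h1]
    congr 1
    apply tsum_congr
    intro j
    congr 1
    omega
  have hanti : Antitone (fun k => a' k + T k) := by
    apply antitone_nat_of_succ_le
    intro k
    have h1 := hstep' k
    have h2 := hTrec k
    linarith
  have hbdd : BddBelow (Set.range fun k => a' k + T k) := by
    refine ⟨0, ?_⟩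
    rintro v ⟨k, rfl⟩
    have := norm_nonneg (x k - xinf)
    have := hT0 k
    simp only []
    positivity
  have hctend : Tendsto (fun k => a' k + T k) atTop (𝓝 (⨅ k, a' k + T k)) :=
    tendsto_atTop_ciInf hanti hbdd
  have hTtend : Tendsto T atTop (𝓝 0) := tendsto_sum_nat_add ε
  have ha'tend : Tendsto a' atTop (𝓝 (⨅ k, a' k + T k)) := by
    have := hctend.sub hTtend
    simpa using this
  have ha'sub : Tendsto (fun j => a' (φs j)) atTop (𝓝 0) :=
    tendsto_iff_norm_sub_tendsto_zero.1 hxsub'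
  have hL0 : (⨅ k, a' k + T k) = 0 :=
    tendsto_nhds_unique (ha'tend.comp hφs.tendsto_atTop) ha'sub
  have hxconv : Tendsto x atTop (𝓝 xinf) := by
    rw [tendsto_iff_norm_sub_tendsto_zero]
    rw [hL0] at ha'tend
    exact ha'tend
  -- ===== dual part =====
  have hxinf_top : F xinf ≠ ⊤ := by rw [hxinf_eq]; exact EReal.coe_ne_top _
  have hmininf : ∀ u : X,
      F xinf + ((‖xinf - xinf‖ ^ 2 / (2 * 1) : ℝ) : EReal)
        ≤ F u + ((‖u - xinf‖ ^ 2 / (2 * 1) : ℝ) : EReal) := by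
    intro u
    have h1 : ‖xinf - xinf‖ ^ 2 / (2 * 1) = (0:ℝ) := by simp
    rw [h1]
    have h2 : ((0:ℝ) : EReal) ≤ ((‖u - xinf‖ ^ 2 / (2 * 1) : ℝ) : EReal) := by
      rw [EReal.coe_le_coe_iff]
      positivity
    calc F xinf + ((0:ℝ) : EReal) = F xinf := by
          norm_num
      _ ≤ F u := hxinf_min u
      _ = F u + ((0:ℝ) : EReal) := by norm_num
      _ ≤ F u + ((‖u - xinf‖ ^ 2 / (2 * 1) : ℝ) : EReal) := add_le_add_right h2 _
  obtain ⟨pri, fri, hpri, hfri, hfridef, hsubpi, _⟩ :=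
    prox_props A c h p hconv hdiff pconv pbot one_pos xinf hmininf hxinf_top
  simp only [← hFdef] at hfri
  set ystar : Y := Gh (A xinf) with hystardef
  set zstar : X := c - B ystar with hzstardef
  have hfri_fb : fri = fb := by
    have := hfri
    rw [hxinf_eq] at this
    exact (EReal.coe_eq_coe_iff.1 this.symm)
  have hsubpi' : ∀ u : X, ((pri + inner ℝ zstar (u - xinf) : ℝ) : EReal) ≤ p u := by
    intro u
    have h1 := hsubpi u
    have h2 : c - ContinuousLinearMap.adjoint A (Gh (A xinf))
        - (1:ℝ)⁻¹ • (xinf - xinf) = zstar := by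
      rw [hzstardef]
      simp [hBdef, hystardef]
    rw [h2] at h1
    exact h1
  have hconjE_star : conjE p zstar = (((inner ℝ xinf zstar : ℝ) - pri : ℝ) : EReal) :=
    conjE_eq_subgrad hpri hsubpi'
  have hconjR_star : conjR h ystar = (((inner ℝ (A xinf) ystar : ℝ) - h (A xinf) : ℝ) : EReal) := by
    apply conjR_eq_max
    intro u
    have hg := grad_ineq hconv hdiff (A xinf) u
    have he : (inner ℝ ystar (u - A xinf) : ℝ)
        = (inner ℝ ystar u : ℝ) - (inner ℝ ystar (A xinf) : ℝ) := inner_sub_right _ _ _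
    rw [he] at hg
    have c1 : (inner ℝ u ystar : ℝ) = (inner ℝ ystar u : ℝ) := real_inner_comm _ _
    have c2 : (inner ℝ (A xinf) ystar : ℝ) = (inner ℝ ystar (A xinf) : ℝ) := real_inner_comm _ _
    linarith
  have hfeas_star : ContinuousLinearMap.adjoint A ystar + zstar = c := by
    rw [hzstardef, hBdef]
    abel
  set b1 : ℝ := (inner ℝ (A xinf) ystar : ℝ) - h (A xinf) with hb1def
  set b2 : ℝ := (inner ℝ xinf zstar : ℝ) - pri with hb2def
  have hsum_star : b1 + b2 = -fri := by
    have h1 := inner_adj_sum A c xinf ystar zstar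
    have h2 : ContinuousLinearMap.adjoint A ystar + zstar - c = 0 := by
      rw [hfeas_star]; abel
    rw [h2, inner_zero_right] at h1
    have h3 : (inner ℝ c xinf : ℝ) = (inner ℝ c xinf : ℝ) := rfl
    have h4 := hfridef
    have hcomm : (inner ℝ c xinf : ℝ) = (inner ℝ c xinf : ℝ) := rfl
    -- fri = h (A xinf) - ⟪c, xinf⟫ + pri
    rw [hb1def, hb2def]
    linarith [h1, h4]
  -- feasible-pair value computation
  have hfeas_val : ∀ (y' : Y) (z' : X), ContinuousLinearMap.adjoint A y' + z' = c →
      ((inner ℝ (A xinf) y' : ℝ) - h (A xinf)) + ((inner ℝ xinf z' : ℝ) - pri) = -fri := by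
    intro y' z' hfe
    have h1 := inner_adj_sum A c xinf y' z'
    have h2 : ContinuousLinearMap.adjoint A y' + z' - c = 0 := by rw [hfe]; abel
    rw [h2, inner_zero_right] at h1
    have h4 := hfridef
    linarith [h1, h4]
  have hopt_star : ∀ (y' : Y) (z' : X), ContinuousLinearMap.adjoint A y' + z' = c →
      conjR h ystar + conjE p zstar ≤ conjR h y' + conjE p z' := by
    intro y' z' hfe
    have h1 : (((inner ℝ (A xinf) y' : ℝ) - h (A xinf) : ℝ) : EReal) ≤ conjR h y' :=
      conjR_lb h y' (A xinf)
    have h2 : (((inner ℝ xinf z' : ℝ) - pri : ℝ) : EReal) ≤ conjE p z' :=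
      conjE_lb' p hpri z'
    have h3 := hfeas_val y' z' hfe
    calc conjR h ystar + conjE p zstar
        = ((b1 : ℝ) : EReal) + ((b2 : ℝ) : EReal) := by rw [hconjR_star, hconjE_star]
      _ = ((b1 + b2 : ℝ) : EReal) := by rw [← EReal.coe_add]
      _ = (((-fri : ℝ)) : EReal) := by rw [hsum_star]
      _ = (((((inner ℝ (A xinf) y' : ℝ) - h (A xinf)) + ((inner ℝ xinf z' : ℝ) - pri) : ℝ)) : EReal) := by
          rw [h3]
      _ = (((inner ℝ (A xinf) y' : ℝ) - h (A xinf) : ℝ) : EReal)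
          + (((inner ℝ xinf z' : ℝ) - pri : ℝ) : EReal) := by rw [← EReal.coe_add]
      _ ≤ conjR h y' + conjE p z' := add_le_add h1 h2
  have huniq_star : ∀ (y' : Y) (z' : X), ContinuousLinearMap.adjoint A y' + z' = c →
      conjR h y' + conjE p z' ≤ conjR h ystar + conjE p zstar →
      (y', z') = (ystar, zstar) := by
    intro y' z' hfe hle
    have h1 : (((inner ℝ (A xinf) y' : ℝ) - h (A xinf) : ℝ) : EReal) ≤ conjR h y' :=
      conjR_lb h y' (A xinf)
    have h2 : (((inner ℝ xinf z' : ℝ) - pri : ℝ) : EReal) ≤ conjE p z' :=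
      conjE_lb' p hpri z'
    have h3 := hfeas_val y' z' hfe
    have hle2 : conjR h y' + conjE p z'
        ≤ ((((inner ℝ (A xinf) y' : ℝ) - h (A xinf)) + ((inner ℝ xinf z' : ℝ) - pri) : ℝ) : EReal) := by
      calc conjR h y' + conjE p z' ≤ conjR h ystar + conjE p zstar := hle
        _ = ((b1 + b2 : ℝ) : EReal) := by
            rw [hconjR_star, hconjE_star, ← EReal.coe_add]
        _ = _ := by rw [hsum_star, h3]
    obtain ⟨hcy, _⟩ := ereal_pair_eq h1 h2 hle2
    have hmax' : ∀ u : Y, (inner ℝ u y' : ℝ) - h u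
        ≤ (inner ℝ (A xinf) y' : ℝ) - h (A xinf) := by
      intro u
      have := conjR_lb h y' u
      rw [hcy, EReal.coe_le_coe_iff] at this
      exact this
    have hyeq : y' = ystar := max_grad_eq hconv hdiff hmax'
    have hzeq : z' = zstar := by
      have h5 : ContinuousLinearMap.adjoint A ystar + z' = c := by rw [← hyeq]; exact hfe
      have h6 := hfeas_star
      have : z' = c - ContinuousLinearMap.adjoint A ystar := by
        rw [← h5]; abel
      rw [this, hzstardef, hBdef]
    rw [hyeq, hzeq]
  -- convergence of the dual sequence
  have hrk_upd : ∀ k, σ k • rk k = x k - x (k + 1) := by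
    intro k
    rw [hupdate k]
    abel
  have hσrk : ∀ k, ‖σ k • rk k‖ ≤ bk k + ε k := by
    intro k
    rw [hrk_upd k]
    have he : x k - x (k + 1) = (x k - ub k) + -(x (k + 1) - ub k) := by abel
    calc ‖x k - x (k + 1)‖ ≤ ‖x k - ub k‖ + ‖-(x (k + 1) - ub k)‖ := by
          rw [he]; exact norm_add_le _ _
      _ = bk k + ‖x (k + 1) - ub k‖ := by rw [norm_neg]
      _ ≤ bk k + ε k := add_le_add_right (hclose k) _
  have hrknorm : ∀ k, ‖rk k‖ ≤ (bk k + ε k) / σ 0 := by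
    intro k
    have h1 : ‖σ k • rk k‖ = σ k * ‖rk k‖ := by
      rw [norm_smul, Real.norm_eq_abs, abs_of_pos (hσpos k)]
    have h2 : σ 0 * ‖rk k‖ ≤ σ k * ‖rk k‖ :=
      mul_le_mul_of_nonneg_right (hσk k) (norm_nonneg _)
    have h3 := hσrk k
    rw [h1] at h3
    rw [le_div_iff₀ hσ0]
    calc ‖rk k‖ * σ 0 = σ 0 * ‖rk k‖ := mul_comm _ _
      _ ≤ σ k * ‖rk k‖ := h2
      _ ≤ bk k + ε k := h3
  have hrk0 : Tendsto (fun k => ‖rk k‖) atTop (𝓝 0) := by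
    apply squeeze_zero (fun k => norm_nonneg _) hrknorm
    have : Tendsto (fun k => (bk k + ε k) / σ 0) atTop (𝓝 ((0 + 0) / σ 0)) :=
      (hb0.add hε0).div_const _
    simpa using this
  have hxdist0 : Tendsto (fun k => ‖x k - xinf‖) atTop (𝓝 0) :=
    tendsto_iff_norm_sub_tendsto_zero.1 hxconv
  -- the key quantitative dual bound
  have hkey : ∀ k, αh / 4 * ‖y (k + 1) - ystar‖ ^ 2
      ≤ ε k ^ 2 / (2 * σ 0) + ‖x k - xinf‖ * ‖rk k‖ := by
    intro k
    have hL1 := conj_strong_lb hαh hconv hdiff hlip (A xinf) (y (k + 1))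
    have hL2 := conjE_lb' p hpri (z (k + 1))
    -- upper bound on the dual objective value
    have hAL : ALfun A c (conjR h) (conjE p) (σ k) (x k) (y (k + 1), z (k + 1))
        = conjR h (y (k + 1)) + conjE p (z (k + 1))
          + (((σ k / 2) * ‖rk k‖ ^ 2 - (inner ℝ (x k) (rk k) : ℝ) : ℝ) : EReal) := rfl
    have hHP : conjR h (y (k + 1)) + conjE p (z (k + 1))
        ≤ ((-(Mk k) + ε k ^ 2 / (2 * σ k)
            - ((σ k / 2) * ‖rk k‖ ^ 2 - (inner ℝ (x k) (rk k) : ℝ)) : ℝ) : EReal) := by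
      apply ereal_add_cancel
      rw [← hAL]
      exact hPsiUB k
    have hsumlb : (((inner ℝ (A xinf) (Gh (A xinf)) : ℝ) - h (A xinf)
          + (inner ℝ (A xinf) (y (k + 1) - Gh (A xinf)) : ℝ)
          + αh / 4 * ‖y (k + 1) - Gh (A xinf)‖ ^ 2
          + ((inner ℝ xinf (z (k + 1)) : ℝ) - pri) : ℝ) : EReal)
        ≤ conjR h (y (k + 1)) + conjE p (z (k + 1)) := by
      rw [EReal.coe_add]
      exact add_le_add hL1 hL2
    have hreal := le_trans hsumlb hHP
    rw [EReal.coe_le_coe_iff] at hreal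
    -- real-arithmetic assembly
    have hys : Gh (A xinf) = ystar := rfl
    rw [hys] at hreal
    have hMke : Mk k = fr k + ‖ub k - x k‖ ^ 2 / (2 * σ k) := rfl
    have hMklb : fb ≤ Mk k := by
      rw [hMke]
      have := hfrfb k
      have hq : 0 ≤ ‖ub k - x k‖ ^ 2 / (2 * σ k) :=
        div_nonneg (sq_nonneg _) (by linarith [hσpos k])
      linarith
    have hia := inner_adj_sum A c xinf (y (k + 1)) (z (k + 1))
    have hsubr : (inner ℝ (A xinf) (y (k + 1) - ystar) : ℝ)
        = (inner ℝ (A xinf) (y (k + 1)) : ℝ) - (inner ℝ (A xinf) ystar : ℝ) :=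
      inner_sub_right _ _ _
    have hisplit : (inner ℝ (x k) (rk k) : ℝ) - (inner ℝ xinf (rk k) : ℝ)
        = (inner ℝ (x k - xinf) (rk k) : ℝ) := (inner_sub_left _ _ _).symm
    have hcs : (inner ℝ (x k - xinf) (rk k) : ℝ) ≤ ‖x k - xinf‖ * ‖rk k‖ :=
      real_inner_le_norm _ _
    have hdivle : ε k ^ 2 / (2 * σ k) ≤ ε k ^ 2 / (2 * σ 0) := by
      apply div_le_div_of_nonneg_left (sq_nonneg _) (by linarith) (by linarith [hσk k])
    have hq2 : 0 ≤ σ k / 2 * ‖rk k‖ ^ 2 :=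
      mul_nonneg (by linarith [hσpos k]) (sq_nonneg _)
    have hfri2 : fri = h (A xinf) - (inner ℝ c xinf : ℝ) + pri := hfridef
    have hrkv : rk k = ContinuousLinearMap.adjoint A (y (k + 1)) + z (k + 1) - c := rfl
    rw [← hrkv] at hia
    -- combine everything
    clear_value F fb Mk rk bk ystar zstar b1 b2
    have e2 : αh / 4 * ‖y (k + 1) - ystar‖ ^ 2
        ≤ fri - Mk k + ε k ^ 2 / (2 * σ k)
          + ((inner ℝ (x k) (rk k) : ℝ) - (inner ℝ xinf (rk k) : ℝ))
          - σ k / 2 * ‖rk k‖ ^ 2 := by linarith [hreal, hsubr, hia, hfri2]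
    have e3 : (inner ℝ (x k) (rk k) : ℝ) - (inner ℝ xinf (rk k) : ℝ)
        ≤ ‖x k - xinf‖ * ‖rk k‖ := by rw [hisplit]; exact hcs
    have e4 : αh / 4 * ‖y (k + 1) - ystar‖ ^ 2
        ≤ ε k ^ 2 / (2 * σ k)
          + ((inner ℝ (x k) (rk k) : ℝ) - (inner ℝ xinf (rk k) : ℝ)) := by
      linarith [e2, hMklb, hfri_fb, hq2]
    linarith [e4, e3, hdivle]
  have hynorm2 : Tendsto (fun k => ‖y (k + 1) - ystar‖ ^ 2) atTop (𝓝 0) := by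
    apply squeeze_zero (fun k => sq_nonneg _)
      (g := fun k => (4 / αh) * (ε k ^ 2 / (2 * σ 0) + ‖x k - xinf‖ * ‖rk k‖))
    · intro k
      have h1 := hkey k
      have h2 : (0:ℝ) ≤ 4 / αh := div_nonneg (by norm_num) (le_of_lt hαh)
      have h3 := mul_le_mul_of_nonneg_left h1 h2
      have h4 : 4 / αh * (αh / 4 * ‖y (k + 1) - ystar‖ ^ 2)
          = ‖y (k + 1) - ystar‖ ^ 2 := by field_simp
      rw [← h4]
      exact h3
    · have h3 : Tendsto (fun k => ε k ^ 2 / (2 * σ 0)) atTop (𝓝 0) := by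
        have : Tendsto (fun k => ε k * ε k) atTop (𝓝 (0 * 0)) := hε0.mul hε0
        have h4 : Tendsto (fun k => ε k * ε k / (2 * σ 0)) atTop (𝓝 (0 * 0 / (2 * σ 0))) :=
          this.div_const _
        simp only [zero_mul, zero_div] at h4
        convert h4 using 2 with k
        ring
      have h5 : Tendsto (fun k => ‖x k - xinf‖ * ‖rk k‖) atTop (𝓝 (0 * 0)) :=
        hxdist0.mul hrk0
      simp only [zero_mul] at h5
      have h6 := (h3.add h5).const_mul (4 / αh)
      simpa using h6
  have hyconv' : Tendsto (fun k => y (k + 1)) atTop (𝓝 ystar) := by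
    rw [tendsto_iff_norm_sub_tendsto_zero]
    have h1 : Tendsto (fun k => Real.sqrt (‖y (k + 1) - ystar‖ ^ 2)) atTop
        (𝓝 (Real.sqrt 0)) := hynorm2.sqrt
    rw [Real.sqrt_zero] at h1
    have h2 : (fun k => Real.sqrt (‖y (k + 1) - ystar‖ ^ 2))
        = fun k => ‖y (k + 1) - ystar‖ := by
      funext k
      exact Real.sqrt_sq (norm_nonneg _)
    rwa [h2] at h1
  have hyconv : Tendsto y atTop (𝓝 ystar) := (tendsto_add_atTop_iff_nat 1).1 hyconv'
  have hrtend : Tendsto rk atTop (𝓝 0) := by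
    rw [tendsto_zero_iff_norm_tendsto_zero]
    exact hrk0
  have hzconv' : Tendsto (fun k => z (k + 1)) atTop (𝓝 zstar) := by
    have hzeq : ∀ k, z (k + 1) = rk k + c - B (y (k + 1)) := by
      intro k
      show z (k + 1) = B (y (k + 1)) + z (k + 1) - c + c - B (y (k + 1))
      abel
    have h1 : Tendsto (fun k => rk k + c - B (y (k + 1))) atTop
        (𝓝 (0 + c - B ystar)) := by
      apply Tendsto.sub
      · exact hrtend.add tendsto_const_nhds
      · exact (B.continuous.tendsto ystar).comp hyconv'
    have h2 : (0 : X) + c - B ystar = zstar := by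
      rw [hzstardef]
      abel
    rw [h2] at h1
    exact h1.congr (fun k => (hzeq k).symm)
  have hzconv : Tendsto z atTop (𝓝 zstar) := (tendsto_add_atTop_iff_nat 1).1 hzconv'
  have hpair : Tendsto (fun k => (y k, z k)) atTop (𝓝 (ystar, zstar)) :=
    hyconv.prodMk_nhds hzconv
  -- final assembly
  refine ⟨Metric.isBounded_range_of_tendsto x hxconv,
    ⟨xinf, fun x' => hxinf_min x', hxconv⟩,
    Metric.isBounded_range_of_tendsto _ hpair,
    ystar, zstar, ?_, ?_, hfeas_star, hopt_star, huniq_star, hpair⟩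
  · exact interior_dom_conjR hconv hdiff helsc (A xinf)
  · rw [hconjE_star]
    exact EReal.coe_ne_top _
end
end

section
/- Let σ > 0, x̃ ∈ X, and let Ψ(y,z) = L_σ(y,z;x̃). Define ψ(y) = inf_z Ψ(y,z). Then for all y ∈ Y, ψ(y) = h*(y) + p*(Prox_{p*/σ}(x̃/σ − A*y + c)) + (1/(2σ))‖Prox_{σp}(x̃ − σ(A*y − c))‖² − (1/(2σ))‖x̃‖²; ψ is continuously differentiable on int(dom h*) with ∇ψ(y) = ∇h*(y) − A Prox_{σp}(x̃ − σ(A*y − c)); and (ȳ, z̄) is the minimizer of Ψ if and only if ȳ minimizes ψ and z̄ = Prox_{p*/σ}(x̃/σ − A*ȳ + c). -/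
/- STATEMENT 9: For Ψ(y,z) = L_σ(y,z;x̃) and ψ(y) = inf_z Ψ(y,z), one has, for all y,
ψ(y) = h*(y) + p*(Prox_{p*/σ}(x̃/σ − A*y + c)) + (1/2σ)‖Prox_{σp}(x̃ − σ(A*y − c))‖²
       − (1/2σ)‖x̃‖²;
ψ is continuously differentiable on int(dom h*) with
∇ψ(y) = ∇h*(y) − A Prox_{σp}(x̃ − σ(A*y − c)); and (ȳ, z̄) minimizes Ψ iff ȳ minimizes ψ
and z̄ = Prox_{p*/σ}(x̃/σ − A*ȳ + c). -/

open Set Filter Topology Classical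

noncomputable section

variable {X Y : Type*} [NormedAddCommGroup X] [InnerProductSpace ℝ X] [FiniteDimensional ℝ X]
  [NormedAddCommGroup Y] [InnerProductSpace ℝ Y] [FiniteDimensional ℝ Y]

section Core
variable {E : Type*} [NormedAddCommGroup E] [InnerProductSpace ℝ E]

local notation "⟪" a ", " b "⟫" => @inner ℝ _ _ a b

variable {S : Set E} {f : E → ℝ} {τ : ℝ} {P : E → E}

/-- Variational inequality for a minimizer of `τ f + ½‖·−x‖²` over `S`. -/
theorem core_varineq (hτ : 0 < τ) (hfc : ConvexOn ℝ S f) {x u' : E} (hu' : u' ∈ S)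
    (hmin : ∀ u ∈ S, τ * f u' + (1/2)*‖u' - x‖^2 ≤ τ * f u + (1/2)*‖u - x‖^2)
    {u : E} (hu : u ∈ S) :
    f u' + τ⁻¹ * ⟪x - u', u - u'⟫ ≤ f u := by
  have key : ∀ t : ℝ, 0 < t → t ≤ 1 →
      0 ≤ τ * (f u - f u') + ⟪u' - x, u - u'⟫ + (t/2) * ‖u - u'‖^2 := by
    intro t ht ht1
    have hmem : (1-t) • u' + t • u ∈ S := hfc.1 hu' hu (by linarith) (le_of_lt ht) (by ring)
    have hcvx : f ((1-t) • u' + t • u) ≤ (1-t) * f u' + t * f u :=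
      hfc.2 hu' hu (by linarith) (le_of_lt ht) (by ring)
    have hm := hmin _ hmem
    have heq : (1-t) • u' + t • u - x = (u' - x) + t • (u - u') := by
      rw [sub_smul, one_smul, smul_sub]; abel
    have hnorm : ‖(1-t) • u' + t • u - x‖^2
        = ‖u' - x‖^2 + 2 * t * ⟪u' - x, u - u'⟫ + t^2 * ‖u - u'‖^2 := by
      rw [heq, norm_add_sq_real, real_inner_smul_right, norm_smul, Real.norm_eq_abs,
        abs_of_pos ht, mul_pow]
      ring
    nlinarith [hm, hcvx, hnorm]
  have h0 : 0 ≤ τ * (f u - f u') + ⟪u' - x, u - u'⟫ := by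
    refine le_of_forall_pos_le_add fun ε hε => ?_
    rcases le_or_gt (‖u - u'‖^2) 0 with hc | hc
    · have := key 1 one_pos le_rfl
      nlinarith
    · set t := min 1 (2*ε/‖u - u'‖^2) with hts
      have ht : 0 < t := lt_min one_pos (by positivity)
      have := key t ht (min_le_left _ _)
      have htc : (t/2) * ‖u - u'‖^2 ≤ ε := by
        have : t ≤ 2*ε/‖u - u'‖^2 := min_le_right _ _
        rw [div_mul_eq_mul_div, div_le_iff₀ (by norm_num : (0:ℝ) < 2)]
        calc t * ‖u - u'‖^2 ≤ (2*ε/‖u - u'‖^2) * ‖u - u'‖^2 := by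
              exact mul_le_mul_of_nonneg_right this (le_of_lt hc)
          _ = ε * 2 := by rw [div_mul_cancel₀ _ (ne_of_gt hc)]; ring
      linarith
  have hinv : τ⁻¹ * ⟪x - u', u - u'⟫ ≤ f u - f u' := by
    rw [inner_sub_left]
    have h1 : ⟪u' - x, u - u'⟫ = -(⟪x, u - u'⟫ - ⟪u', u - u'⟫) := by
      rw [inner_sub_left]; ring
    have h2 : τ * (f u - f u') ≥ ⟪x, u - u'⟫ - ⟪u', u - u'⟫ := by
      rw [h1] at h0; linarith
    calc τ⁻¹ * (⟪x, u - u'⟫ - ⟪u', u - u'⟫) ≤ τ⁻¹ * (τ * (f u - f u')) :=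
          mul_le_mul_of_nonneg_left h2 (by positivity)
      _ = f u - f u' := by field_simp
  linarith

/-- Uniqueness of minimizers of `τ f + ½‖·−x‖²` over a convex `S`. -/
theorem core_unique (hτ : 0 < τ) (hfc : ConvexOn ℝ S f) {x u' u'' : E}
    (hu' : u' ∈ S) (hu'' : u'' ∈ S)
    (hmin' : ∀ u ∈ S, τ * f u' + (1/2)*‖u' - x‖^2 ≤ τ * f u + (1/2)*‖u - x‖^2)
    (hmin'' : ∀ u ∈ S, τ * f u'' + (1/2)*‖u'' - x‖^2 ≤ τ * f u + (1/2)*‖u - x‖^2) :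
    u' = u'' := by
  have h1 := core_varineq hτ hfc hu' hmin' hu''
  have h2 := core_varineq hτ hfc hu'' hmin'' hu'
  have hadd : τ⁻¹ * ⟪x - u', u'' - u'⟫ + τ⁻¹ * ⟪x - u'', u' - u''⟫ ≤ 0 := by linarith
  have hids : ⟪x - u', u'' - u'⟫ + ⟪x - u'', u' - u''⟫ = ‖u' - u''‖^2 := by
    have e1 : u' - u'' = -(u'' - u') := by abel
    rw [e1, inner_neg_right, ← sub_eq_add_neg, ← inner_sub_left]
    have e2 : x - u' - (x - u'') = u'' - u' := by abel
    rw [e2, real_inner_self_eq_norm_sq, ← norm_neg (u'' - u'), ← e1]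
  have hfin : τ⁻¹ * ‖u' - u''‖^2 ≤ 0 := by rw [← hids]; linarith
  have hn : ‖u' - u''‖^2 ≤ 0 := by nlinarith [inv_pos.mpr hτ]
  have hz : ‖u' - u''‖ = 0 := by nlinarith [norm_nonneg (u' - u'')]
  exact sub_eq_zero.mp (norm_eq_zero.mp hz)

/-- Nonexpansiveness of the proximal map. -/
theorem core_nonexpansive (hτ : 0 < τ) (hfc : ConvexOn ℝ S f)
    (hPS : ∀ x, P x ∈ S)
    (hPmin : ∀ x, ∀ u ∈ S, τ * f (P x) + (1/2)*‖P x - x‖^2 ≤ τ * f u + (1/2)*‖u - x‖^2)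
    (x x' : E) : ‖P x - P x'‖ ≤ ‖x - x'‖ := by
  have h1 := core_varineq hτ hfc (hPS x) (hPmin x) (hPS x')
  have h2 := core_varineq hτ hfc (hPS x') (hPmin x') (hPS x)
  have hadd : 0 ≤ τ⁻¹ * ⟪x - P x, P x' - P x⟫ + τ⁻¹ * ⟪x' - P x', P x - P x'⟫ → False ∨ True :=
    fun _ => Or.inr trivial
  have hkey : ⟪x - P x, P x' - P x⟫ + ⟪x' - P x', P x - P x'⟫ ≤ 0 := by
    have hip : 0 < τ⁻¹ := inv_pos.mpr hτ
    nlinarith [h1, h2]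
  have hin : ‖P x - P x'‖^2 ≤ ⟪x - x', P x - P x'⟫ := by
    have e1 : P x' - P x = -(P x - P x') := by abel
    rw [e1, inner_neg_right, ← sub_eq_neg_add] at hkey
    rw [← inner_sub_left] at hkey
    have e2 : x' - P x' - (x - P x) = (x' - x) - (P x' - P x) := by abel
    rw [e2, inner_sub_left] at hkey
    have e3 : ⟪x' - x, P x - P x'⟫ = -⟪x - x', P x - P x'⟫ := by
      rw [← inner_neg_left]; congr 1; abel
    have e4 : ⟪P x' - P x, P x - P x'⟫ = -‖P x - P x'‖^2 := by
      have : P x' - P x = -(P x - P x') := by abel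
      rw [this, inner_neg_left, real_inner_self_eq_norm_sq]
    rw [e3, e4] at hkey
    linarith
  rcases eq_or_lt_of_le (norm_nonneg (P x - P x')) with hz | hpos
  · rw [← hz]; exact norm_nonneg _
  · have hcs := real_inner_le_norm (x - x') (P x - P x')
    nlinarith

/-- The Moreau-type envelope of the core problem. -/
def coreEnv (f : E → ℝ) (τ : ℝ) (P : E → E) (x : E) : ℝ :=
  τ * f (P x) + (1/2)*‖P x - x‖^2

theorem coreEnv_quad_bound (hτ : 0 < τ) (hfc : ConvexOn ℝ S f)
    (hPS : ∀ x, P x ∈ S)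
    (hPmin : ∀ x, ∀ u ∈ S, τ * f (P x) + (1/2)*‖P x - x‖^2 ≤ τ * f u + (1/2)*‖u - x‖^2)
    (x x' : E) :
    |coreEnv f τ P x' - coreEnv f τ P x - ⟪x - P x, x' - x⟫| ≤ (5/2) * ‖x' - x‖^2 := by
  have upper : ∀ a b : E, coreEnv f τ P b - coreEnv f τ P a
      ≤ ⟪a - P a, b - a⟫ + (1/2)*‖b - a‖^2 := by
    intro a b
    have hle := hPmin b (P a) (hPS a)
    have hexp : ‖P a - b‖^2 = ‖P a - a‖^2 + 2*⟪P a - a, a - b⟫ + ‖a - b‖^2 := by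
      have : P a - b = (P a - a) + (a - b) := by abel
      rw [this, norm_add_sq_real]
    have e1 : ⟪P a - a, a - b⟫ = ⟪a - P a, b - a⟫ := by
      rw [← inner_neg_neg]; congr 1 <;> abel
    have e2 : ‖a - b‖ = ‖b - a‖ := norm_sub_rev a b
    have e2sq : ‖a - b‖^2 = ‖b - a‖^2 := by rw [e2]
    simp only [coreEnv] at *
    linarith [hle]
  have h1 := upper x x'
  have h2 := upper x' x
  have hne := core_nonexpansive hτ hfc hPS hPmin x x'
  -- lower bound
  have hlow : coreEnv f τ P x' - coreEnv f τ P x - ⟪x - P x, x' - x⟫ ≥ -(5/2)*‖x' - x‖^2 := by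
    have e3 : ⟪x' - P x', x - x'⟫ = -⟪x' - P x', x' - x⟫ := by
      rw [← inner_neg_right]; congr 1; abel
    have ediff : ⟪x' - P x', x' - x⟫ - ⟪x - P x, x' - x⟫
        = ⟪(x' - x) - (P x' - P x), x' - x⟫ := by
      rw [← inner_sub_left]; congr 1; abel
    have hbd : ⟪(x' - x) - (P x' - P x), x' - x⟫ ≥ -2*‖x' - x‖^2 := by
      have hcs := abs_real_inner_le_norm ((x' - x) - (P x' - P x)) (x' - x)
      have htri : ‖(x' - x) - (P x' - P x)‖ ≤ ‖x' - x‖ + ‖P x' - P x‖ := norm_sub_le _ _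
      have hne' : ‖P x' - P x‖ ≤ ‖x' - x‖ := core_nonexpansive hτ hfc hPS hPmin x' x
      have := neg_abs_le (⟪(x' - x) - (P x' - P x), x' - x⟫)
      nlinarith [norm_nonneg (x' - x), norm_nonneg ((x' - x) - (P x' - P x))]
    have e2sq : ‖x - x'‖^2 = ‖x' - x‖^2 := by rw [norm_sub_rev]
    linarith [h2]
  have hup : coreEnv f τ P x' - coreEnv f τ P x - ⟪x - P x, x' - x⟫ ≤ (5/2)*‖x' - x‖^2 := by
    nlinarith [h1, sq_nonneg ‖x' - x‖, norm_nonneg (x' - x)]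
  rw [abs_le]
  constructor <;> linarith

theorem coreEnv_hasGradientAt [CompleteSpace E] (hτ : 0 < τ) (hfc : ConvexOn ℝ S f)
    (hPS : ∀ x, P x ∈ S)
    (hPmin : ∀ x, ∀ u ∈ S, τ * f (P x) + (1/2)*‖P x - x‖^2 ≤ τ * f u + (1/2)*‖u - x‖^2)
    (x : E) : HasGradientAt (coreEnv f τ P) (x - P x) x := by
  rw [hasGradientAt_iff_isLittleO]
  rw [Asymptotics.isLittleO_iff]
  intro c hc
  have hball : Metric.ball x (c * (2/5)) ∈ 𝓝 x := Metric.ball_mem_nhds x (by positivity)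
  filter_upwards [hball] with x' hx'
  have hq := coreEnv_quad_bound hτ hfc hPS hPmin x x'
  have hd : ‖x' - x‖ < c * (2/5) := by
    rw [Metric.mem_ball, dist_eq_norm] at hx'; exact hx'
  rw [Real.norm_eq_abs]
  calc |coreEnv f τ P x' - coreEnv f τ P x - ⟪x - P x, x' - x⟫| ≤ (5/2) * ‖x' - x‖^2 := hq
    _ ≤ c * ‖x' - x‖ := by nlinarith [norm_nonneg (x' - x)]

end Core

section Glue
variable {E : Type*} [NormedAddCommGroup E] [InnerProductSpace ℝ E]

local notation "⟪" a ", " b "⟫" => @inner ℝ _ _ a b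

theorem econvex_combo_le {g : E → EReal} (hg : EConvex g) (hb : ∀ u, g u ≠ ⊥)
    {u v : E} (hu : g u ≠ ⊤) (hv : g v ≠ ⊤) {a b : ℝ} (ha : 0 ≤ a) (hb' : 0 ≤ b)
    (hab : a + b = 1) :
    g (a • u + b • v) ≤ ((a * (g u).toReal + b * (g v).toReal : ℝ) : EReal) := by
  have h := hg u v a b ha hb' hab
  rw [show g u = (((g u).toReal : ℝ) : EReal) from (EReal.coe_toReal hu (hb u)).symm,
    show g v = (((g v).toReal : ℝ) : EReal) from (EReal.coe_toReal hv (hb v)).symm] at h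
  rw [← EReal.coe_mul, ← EReal.coe_mul, ← EReal.coe_add] at h
  exact h

theorem econvex_convexOn {g : E → EReal} (hg : EConvex g) (hb : ∀ u, g u ≠ ⊥) :
    Convex ℝ {u | g u ≠ ⊤} ∧ ConvexOn ℝ {u | g u ≠ ⊤} (fun u => (g u).toReal) := by
  have hmem : ∀ u ∈ {u | g u ≠ ⊤}, ∀ v ∈ {u | g u ≠ ⊤}, ∀ (a b : ℝ),
      0 ≤ a → 0 ≤ b → a + b = 1 → a • u + b • v ∈ {u | g u ≠ ⊤} := by
    intro u hu v hv a b ha hb' hab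
    have := econvex_combo_le hg hb hu hv ha hb' hab
    exact fun htop => by
      rw [htop] at this
      exact (not_le.mpr (EReal.coe_lt_top _)) this
  have hcvxS : Convex ℝ {u | g u ≠ ⊤} := fun u hu v hv a b ha hb' hab =>
    hmem u hu v hv a b ha hb' hab
  refine ⟨hcvxS, hcvxS, ?_⟩
  intro u hu v hv a b ha hb' hab
  have h := econvex_combo_le hg hb hu hv ha hb' hab
  have hne := hmem u hu v hv a b ha hb' hab
  have := EReal.toReal_le_toReal h (hb _) (EReal.coe_ne_top _)
  rwa [EReal.toReal_coe] at this

theorem glue_fin {g : E → EReal} {τ : ℝ} (hτ : 0 < τ) (hb : ∀ u, g u ≠ ⊥)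
    {z0 : E} (hz0 : g z0 ≠ ⊤) {x q : E}
    (hm : ∀ u, ((τ : ℝ) : EReal) * g q + (((1/2)*‖q - x‖^2 : ℝ) : EReal) ≤
      ((τ : ℝ) : EReal) * g u + (((1/2)*‖u - x‖^2 : ℝ) : EReal)) : g q ≠ ⊤ := by
  intro htop
  have h := hm z0
  rw [htop] at h
  rw [EReal.mul_top_of_pos (by exact_mod_cast hτ)] at h
  rw [EReal.top_add_of_ne_bot (EReal.coe_ne_bot _)] at h
  rw [show g z0 = (((g z0).toReal : ℝ) : EReal) from (EReal.coe_toReal hz0 (hb z0)).symm,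
    ← EReal.coe_mul, ← EReal.coe_add] at h
  exact (not_le.mpr (EReal.coe_lt_top _)) h

theorem glue_realmin {g : E → EReal} {τ : ℝ} (hτ : 0 < τ) (hb : ∀ u, g u ≠ ⊥)
    {x q : E} (hq : g q ≠ ⊤)
    (hm : ∀ u, ((τ : ℝ) : EReal) * g q + (((1/2)*‖q - x‖^2 : ℝ) : EReal) ≤
      ((τ : ℝ) : EReal) * g u + (((1/2)*‖u - x‖^2 : ℝ) : EReal)) :
    ∀ u, g u ≠ ⊤ →
      τ * (g q).toReal + (1/2)*‖q - x‖^2 ≤ τ * (g u).toReal + (1/2)*‖u - x‖^2 := by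
  intro u hu
  have h := hm u
  rw [show g q = (((g q).toReal : ℝ) : EReal) from (EReal.coe_toReal hq (hb q)).symm,
    show g u = (((g u).toReal : ℝ) : EReal) from (EReal.coe_toReal hu (hb u)).symm,
    ← EReal.coe_mul, ← EReal.coe_add, ← EReal.coe_mul, ← EReal.coe_add,
    EReal.coe_le_coe_iff] at h
  exact h

theorem moreau_decomp {g : E → EReal} (hg : EConvex g) (hb : ∀ u, g u ≠ ⊥)
    {z0 : E} (hz0 : g z0 ≠ ⊤) {σ : ℝ} (hσ : 0 < σ) (Pq Pp : E → E)
    (hPq : ∀ x u, ((σ⁻¹ : ℝ) : EReal) * g (Pq x) + (((1/2)*‖Pq x - x‖^2 : ℝ) : EReal) ≤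
      ((σ⁻¹ : ℝ) : EReal) * g u + (((1/2)*‖u - x‖^2 : ℝ) : EReal))
    (hPp : ∀ x u, ((σ : ℝ) : EReal) * conjE g (Pp x) + (((1/2)*‖Pp x - x‖^2 : ℝ) : EReal) ≤
      ((σ : ℝ) : EReal) * conjE g u + (((1/2)*‖u - x‖^2 : ℝ) : EReal))
    (x : E) : Pp x = x - σ • Pq (σ⁻¹ • x) := by
  obtain ⟨hS, hfc⟩ := econvex_convexOn hg hb
  set f : E → ℝ := fun u => (g u).toReal with hf
  set z : E := Pq (σ⁻¹ • x) with hz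
  have hτ : (0:ℝ) < σ⁻¹ := inv_pos.mpr hσ
  have hzfin : g z ≠ ⊤ := glue_fin hτ hb hz0 (hPq (σ⁻¹ • x))
  have hrm := glue_realmin hτ hb hzfin (hPq (σ⁻¹ • x))
  set γ : ℝ := f z with hγ
  set u : E := x - σ • z with hu
  have hvar : ∀ w, g w ≠ ⊤ → γ + ⟪u, w - z⟫ ≤ f w := by
    intro w hw
    have h := core_varineq hτ hfc hzfin (fun v hv => hrm v hv) hw
    have hsm : σ • (σ⁻¹ • x - z) = u := by
      rw [hu, smul_sub, smul_smul, mul_inv_cancel₀ (ne_of_gt hσ), one_smul]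
    have h' : (σ⁻¹)⁻¹ * ⟪σ⁻¹ • x - z, w - z⟫ = ⟪u, w - z⟫ := by
      rw [inv_inv, ← real_inner_smul_left, hsm]
    rw [h'] at h
    exact h
  have haff : ∀ v, ((⟪v, z⟫ - γ : ℝ) : EReal) ≤ conjE g v := by
    intro v
    have hterm : ((⟪v, z⟫ - γ : ℝ) : EReal) = (((inner ℝ z v : ℝ)) : EReal) - g z := by
      rw [show g z = ((γ : ℝ) : EReal) from (EReal.coe_toReal hzfin (hb z)).symm,
        ← EReal.coe_sub, real_inner_comm v z]
    rw [hterm]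
    exact le_iSup (fun w => (((inner ℝ w v : ℝ)) : EReal) - g w) z
  have hconj_u : conjE g u = ((⟪u, z⟫ - γ : ℝ) : EReal) := by
    refine le_antisymm ?_ (haff u)
    refine iSup_le fun w => ?_
    by_cases hw : g w = ⊤
    · rw [hw]
      simp
    · rw [show g w = ((f w : ℝ) : EReal) from (EReal.coe_toReal hw (hb w)).symm,
        ← EReal.coe_sub, EReal.coe_le_coe_iff]
      have h5 := hvar w hw
      have h6 : ⟪u, w - z⟫ = ⟪u, w⟫ - ⟪u, z⟫ := inner_sub_right u w z
      have h7 : (⟪w, u⟫ : ℝ) = ⟪u, w⟫ := real_inner_comm u w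
      linarith
  set ρ : ℝ := σ * (⟪u, z⟫ - γ) + (1/2)*‖u - x‖^2 with hρ
  have hMu : ((σ : ℝ) : EReal) * conjE g u + (((1/2)*‖u - x‖^2 : ℝ) : EReal) = (ρ : EReal) := by
    rw [hconj_u, ← EReal.coe_mul, ← EReal.coe_add]
  have hlb : ∀ v, ((ρ + (1/2)*‖v - u‖^2 : ℝ) : EReal) ≤
      ((σ : ℝ) : EReal) * conjE g v + (((1/2)*‖v - x‖^2 : ℝ) : EReal) := by
    intro v
    by_cases hv : conjE g v = ⊤
    · rw [hv, EReal.mul_top_of_pos (by exact_mod_cast hσ),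
        EReal.top_add_of_ne_bot (EReal.coe_ne_bot _)]
      exact le_top
    · have hvb : conjE g v ≠ ⊥ := fun hbot => by
        have := haff v
        rw [hbot] at this
        exact (not_le_of_gt (bot_lt_iff_ne_bot.mpr (EReal.coe_ne_bot _)) this).elim
      set pv : ℝ := (conjE g v).toReal with hpv
      rw [show conjE g v = ((pv : ℝ) : EReal) from (EReal.coe_toReal hv hvb).symm,
        ← EReal.coe_mul, ← EReal.coe_add, EReal.coe_le_coe_iff]
      have hpvge : ⟪v, z⟫ - γ ≤ pv := by
        have := haff v
        rw [show conjE g v = ((pv : ℝ) : EReal) from (EReal.coe_toReal hv hvb).symm,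
          EReal.coe_le_coe_iff] at this
        exact this
      -- key real identity
      have hvx : v - x = (v - u) - σ • z := by rw [hu]; abel
      have hnvx : ‖v - x‖^2 = ‖v - u‖^2 - 2*(σ*⟪v - u, z⟫) + σ^2*‖z‖^2 := by
        rw [hvx, norm_sub_sq_real, real_inner_smul_right, norm_smul, Real.norm_eq_abs,
          abs_of_pos hσ, mul_pow]
      have hux : ‖u - x‖^2 = σ^2*‖z‖^2 := by
        rw [show u - x = -(σ • z) by rw [hu]; abel, norm_neg, norm_smul, Real.norm_eq_abs,
          abs_of_pos hσ, mul_pow]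
      have hinu : ⟪v - u, z⟫ = ⟪v, z⟫ - ⟪u, z⟫ := inner_sub_left v u z
      nlinarith [mul_le_mul_of_nonneg_left hpvge (le_of_lt hσ)]
  have h1 := hPp x u
  rw [hMu] at h1
  have h2 := hlb (Pp x)
  have h3 : ((ρ + (1/2)*‖Pp x - u‖^2 : ℝ) : EReal) ≤ ((ρ : ℝ) : EReal) := le_trans h2 h1
  rw [EReal.coe_le_coe_iff] at h3
  have : ‖Pp x - u‖^2 ≤ 0 := by linarith
  have hz' : ‖Pp x - u‖ = 0 := by nlinarith [norm_nonneg (Pp x - u)]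
  have := sub_eq_zero.mp (norm_eq_zero.mp hz')
  rw [this, hu, hz]

end Glue



section GradCont
variable {E : Type*} [NormedAddCommGroup E] [InnerProductSpace ℝ E] [FiniteDimensional ℝ E]

local notation "⟪" a ", " b "⟫" => @inner ℝ _ _ a b

theorem line_hasDerivAt (f : E → ℝ) (g a d : E) (hg : HasGradientAt f g a) :
    HasDerivAt (fun t : ℝ => f (a + t • d)) ⟪g, d⟫ 0 := by
  have hL : HasDerivAt (fun t : ℝ => a + t • d) d 0 := by
    simpa using ((hasDerivAt_id (0:ℝ)).smul_const d).const_add a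
  have h0 : (fun t : ℝ => a + t • d) 0 = a := by simp
  have hF : HasFDerivAt f (InnerProductSpace.toDual ℝ E g) ((fun t : ℝ => a + t • d) 0) := by
    rw [h0]; exact hasGradientAt_iff_hasFDerivAt.mp hg
  have hc := hF.comp_hasDerivAt 0 hL
  simp only [InnerProductSpace.toDual_apply_apply] at hc
  exact hc

/-- Gradient inequality for convex functions. -/
theorem grad_ineq_s9 {S : Set E} {f : E → ℝ} (hfc : ConvexOn ℝ S f) {a : E} (ha : a ∈ S)
    {g : E → E} (hga : HasGradientAt f (g a) a) {b : E} (hb : b ∈ S) :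
    f a + ⟪g a, b - a⟫ ≤ f b := by
  have hder := line_hasDerivAt f (g a) a (b - a) hga
  have hslope : ∀ t ∈ Ioo (0:ℝ) 1, slope (fun t : ℝ => f (a + t • (b - a))) 0 t ≤ f b - f a := by
    intro t ht
    have hcomb : a + t • (b - a) = (1 - t) • a + t • b := by
      rw [sub_smul, one_smul, smul_sub]; abel
    have hcv := hfc.2 ha hb (by linarith [ht.2] : (0:ℝ) ≤ 1 - t) (le_of_lt ht.1) (by ring)
    rw [← hcomb, smul_eq_mul, smul_eq_mul] at hcv
    rw [slope_def_field]
    simp only [sub_zero, zero_smul, add_zero]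
    rw [div_le_iff₀ ht.1]
    nlinarith [hcv]
  have htend := hasDerivAt_iff_tendsto_slope.mp hder
  have htend' : Tendsto (slope (fun t : ℝ => f (a + t • (b - a))) 0) (𝓝[>] (0:ℝ))
      (𝓝 ⟪g a, b - a⟫) :=
    htend.mono_left (nhdsWithin_mono _ (fun x hx => ne_of_gt hx))
  have hle : ⟪g a, b - a⟫ ≤ f b - f a := by
    refine le_of_tendsto htend' ?_
    filter_upwards [Ioo_mem_nhdsGT_of_mem (Set.mem_Ico.mpr ⟨le_refl (0:ℝ), one_pos⟩)] with t ht
    exact hslope t ht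
  linarith

set_option maxHeartbeats 1000000 in
/-- The gradient of a convex differentiable function on an open set is continuous. -/
theorem grad_continuousOn {U : Set E} {f : E → ℝ} {G : E → E} (hU : IsOpen U)
    (hfc : ConvexOn ℝ U f) (hg : ∀ y ∈ U, HasGradientAt f (G y) y) :
    ContinuousOn G U := by
  have hcont : ContinuousOn f U := hfc.continuousOn hU
  intro y0 hy0
  obtain ⟨ε, hε, hball⟩ := Metric.isOpen_iff.mp hU y0 hy0
  set r : ℝ := ε/3 with hrdef
  have hr : 0 < r := by positivity
  have hcb : Metric.closedBall y0 (2*r) ⊆ U := by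
    intro x hx
    apply hball
    rw [Metric.mem_closedBall] at hx
    rw [Metric.mem_ball]
    linarith
  obtain ⟨Cb, hCb⟩ := (isCompact_closedBall y0 (2*r)).exists_bound_of_continuousOn
    (hcont.mono hcb)
  have hCb0 : 0 ≤ Cb := le_trans (norm_nonneg _)
    (hCb y0 (Metric.mem_closedBall_self (by positivity)))
  have hGb : ∀ y ∈ Metric.ball y0 r, ‖G y‖ ≤ 2*Cb/r := by
    intro y hy
    by_cases hG0 : G y = 0
    · rw [hG0, norm_zero]
      exact div_nonneg (by linarith) (le_of_lt hr)
    · have hGpos : 0 < ‖G y‖ := norm_pos_iff.mpr hG0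
      have hGne : ‖G y‖ ≠ 0 := ne_of_gt hGpos
      set u := y + (r/‖G y‖) • G y with hudef
      have hnu : dist u y = r := by
        rw [dist_eq_norm, hudef]
        simp only [add_sub_cancel_left]
        rw [norm_smul, Real.norm_eq_abs, abs_of_pos (div_pos hr hGpos), div_mul_cancel₀ _ hGne]
      have hyU : y ∈ U := hball (Metric.ball_subset_ball (by linarith) hy)
      have humem : u ∈ Metric.closedBall y0 (2*r) := by
        rw [Metric.mem_closedBall]
        calc dist u y0 ≤ dist u y + dist y y0 := dist_triangle _ _ _
          _ ≤ r + r := add_le_add (le_of_eq hnu) (le_of_lt (Metric.mem_ball.mp hy))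
          _ = 2*r := by ring
      have hgi := grad_ineq_s9 hfc hyU (hg y hyU) (hcb humem)
      have hin : ⟪G y, u - y⟫ = r * ‖G y‖ := by
        rw [hudef]
        simp only [add_sub_cancel_left]
        rw [real_inner_smul_right, real_inner_self_eq_norm_sq, pow_two]
        field_simp
      have hfy : ‖f y‖ ≤ Cb := hCb y (Metric.closedBall_subset_closedBall (by linarith)
        (Metric.ball_subset_closedBall hy))
      have hfu : ‖f u‖ ≤ Cb := hCb u humem
      rw [Real.norm_eq_abs] at hfy hfu
      have : r * ‖G y‖ ≤ 2*Cb := by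
        have h1 := abs_le.mp hfy
        have h2 := abs_le.mp hfu
        nlinarith [hgi, hin]
      rw [le_div_iff₀ hr]
      linarith
  -- sequential continuity
  apply tendsto_of_subseq_tendsto
  intro ns hns
  have hmem : ∀ᶠ n in atTop, ns n ∈ U ∧ ns n ∈ Metric.ball y0 r :=
    (hns.eventually_mem self_mem_nhdsWithin).and
      (hns.eventually_mem (nhdsWithin_le_nhds (Metric.ball_mem_nhds _ hr)))
  obtain ⟨N, hN⟩ := eventually_atTop.mp hmem
  set v : ℕ → E := fun n => ns (n + N) with hvdef
  have hvU : ∀ n, v n ∈ U := fun n => (hN (n + N) (Nat.le_add_left N n)).1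
  have hvB : ∀ n, v n ∈ Metric.ball y0 r := fun n => (hN (n + N) (Nat.le_add_left N n)).2
  have hvb : ∀ n, G (v n) ∈ Metric.closedBall (0:E) (2*Cb/r) := by
    intro n
    rw [Metric.mem_closedBall, dist_zero_right]
    exact hGb (v n) (hvB n)
  obtain ⟨gl, _, φ, hφmono, hφt⟩ :=
    tendsto_subseq_of_bounded Metric.isBounded_closedBall hvb
  have hvt : Tendsto (fun n => v (φ n)) atTop (𝓝[U] y0) := by
    have h1 : Tendsto (fun n => n + N) atTop atTop := tendsto_add_atTop_nat N
    exact hns.comp (h1.comp hφmono.tendsto_atTop)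
  have hvty : Tendsto (fun n => v (φ n)) atTop (𝓝 y0) := hvt.mono_right nhdsWithin_le_nhds
  have hsub : ∀ b ∈ U, f y0 + ⟪gl, b - y0⟫ ≤ f b := by
    intro b hb
    have hk : ∀ n, f (v (φ n)) + ⟪G (v (φ n)), b - v (φ n)⟫ ≤ f b := fun n =>
      grad_ineq_s9 hfc (hvU (φ n)) (hg _ (hvU (φ n))) hb
    have hfv : Tendsto (fun n => f (v (φ n))) atTop (𝓝 (f y0)) :=
      (hcont y0 hy0).tendsto.comp hvt
    have hinner : Tendsto (fun n => ⟪G (v (φ n)), b - v (φ n)⟫) atTop (𝓝 ⟪gl, b - y0⟫) :=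
      hφt.inner (tendsto_const_nhds.sub hvty)
    exact le_of_tendsto (hfv.add hinner) (Filter.Eventually.of_forall hk)
  have hgl : gl = G y0 := by
    set d : E := gl - G y0 with hddef
    have hδ : ∃ δ > 0, ∀ t : ℝ, 0 < t → t < δ → y0 + t • d ∈ U := by
      refine ⟨r/(‖d‖+1), by positivity, fun t ht htδ => ?_⟩
      apply hball
      rw [Metric.mem_ball, dist_eq_norm]
      simp only [add_sub_cancel_left]
      rw [norm_smul, Real.norm_eq_abs, abs_of_pos ht]
      calc t * ‖d‖ ≤ t * (‖d‖+1) := by nlinarith [norm_nonneg d]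
        _ < (r/(‖d‖+1)) * (‖d‖+1) := by
            apply mul_lt_mul_of_pos_right htδ; positivity
        _ = r := by field_simp
        _ < ε := by rw [hrdef]; linarith
    obtain ⟨δ, hδ0, hδmem⟩ := hδ
    have hder := line_hasDerivAt f (G y0) y0 d (hg y0 hy0)
    have hslope : ∀ t ∈ Ioo (0:ℝ) δ, ⟪gl, d⟫ ≤ slope (fun t : ℝ => f (y0 + t • d)) 0 t := by
      intro t ht
      have hmem := hδmem t ht.1 ht.2
      have := hsub _ hmem
      simp only [add_sub_cancel_left] at this
      rw [real_inner_smul_right] at this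
      rw [slope_def_field]
      simp only [sub_zero, zero_smul, add_zero]
      rw [le_div_iff₀ ht.1]
      nlinarith [this]
    have htend : Tendsto (slope (fun t : ℝ => f (y0 + t • d)) 0) (𝓝[>] (0:ℝ))
        (𝓝 ⟪G y0, d⟫) :=
      (hasDerivAt_iff_tendsto_slope.mp hder).mono_left
        (nhdsWithin_mono _ (fun x hx => ne_of_gt hx))
    have hle : ⟪gl, d⟫ ≤ ⟪G y0, d⟫ := by
      refine ge_of_tendsto htend ?_
      filter_upwards [Ioo_mem_nhdsGT_of_mem (Set.mem_Ico.mpr ⟨le_refl (0:ℝ), hδ0⟩)] with t ht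
      exact hslope t ht
    have : ⟪d, d⟫ ≤ 0 := by
      rw [hddef]
      have : ⟪gl - G y0, d⟫ = ⟪gl, d⟫ - ⟪G y0, d⟫ := inner_sub_left gl (G y0) d
      rw [hddef] at this
      linarith
    have hd0 : d = 0 := by
      have := real_inner_self_nonneg (x := d)
      have hn : ⟪d, d⟫ = 0 := le_antisymm ‹⟪d, d⟫ ≤ 0› this
      exact inner_self_eq_zero.mp hn
    rw [hddef] at hd0
    exact sub_eq_zero.mp hd0
  refine ⟨fun n => φ n + N, ?_⟩
  rw [← hgl]
  exact hφt

end GradCont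

set_option maxHeartbeats 4000000 in
theorem psi_formula_gradient_and_minimizer
    (A : X →L[ℝ] Y) (c : X) (σ : ℝ) (hσ : 0 < σ) (xt : X)
    (hstar : Y → EReal) (pstar : X → EReal) (Gh : Y → Y) (Pp Pq : X → X)
    -- h* and p* are closed proper convex (conjugates of closed proper convex h and p)
    (hconv : EConvex hstar) (hlsc : LowerSemicontinuous hstar)
    (hbot : ∀ y, hstar y ≠ ⊥) (hne : ∃ y, hstar y ≠ ⊤)
    (pconv : EConvex pstar) (plsc : LowerSemicontinuous pstar)
    (pbot : ∀ z, pstar z ≠ ⊥) (pne : ∃ z, pstar z ≠ ⊤)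
    -- h* is essentially smooth with gradient Gh on int(dom h*)
    (hintne : (interior {y | hstar y ≠ ⊤}).Nonempty)
    (hgrad : ∀ y ∈ interior {y | hstar y ≠ ⊤},
      HasGradientAt (fun w => (hstar w).toReal) (Gh y) y)
    (hblow : ∀ yb ∈ frontier (interior {y | hstar y ≠ ⊤}), ∀ u : ℕ → Y,
      (∀ n, u n ∈ interior {y | hstar y ≠ ⊤}) → Tendsto u atTop (𝓝 yb) →
      Tendsto (fun n => ‖Gh (u n)‖) atTop atTop)
    -- Pp = Prox_{σp}, where p = (p*)* is the function whose conjugate is p*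
    (hPp : ∀ x u : X,
      ((σ : ℝ) : EReal) * conjE pstar (Pp x) + (((1 / 2) * ‖Pp x - x‖ ^ 2 : ℝ) : EReal) ≤
        ((σ : ℝ) : EReal) * conjE pstar u + (((1 / 2) * ‖u - x‖ ^ 2 : ℝ) : EReal))
    -- Pq = Prox_{p*/σ}
    (hPq : ∀ x u : X,
      ((σ⁻¹ : ℝ) : EReal) * pstar (Pq x) + (((1 / 2) * ‖Pq x - x‖ ^ 2 : ℝ) : EReal) ≤
        ((σ⁻¹ : ℝ) : EReal) * pstar u + (((1 / 2) * ‖u - x‖ ^ 2 : ℝ) : EReal)) :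
    -- (a) the closed form expression of ψ(y) = inf_z Ψ(y,z)
    (∀ y : Y,
      (⨅ z : X, ALfun A c hstar pstar σ xt (y, z)) =
        hstar y + pstar (Pq (σ⁻¹ • xt - ContinuousLinearMap.adjoint A y + c)) +
          (((1 / (2 * σ)) * ‖Pp (xt - σ • (ContinuousLinearMap.adjoint A y - c))‖ ^ 2 -
              (1 / (2 * σ)) * ‖xt‖ ^ 2 : ℝ) : EReal)) ∧
    -- (b) ψ is continuously differentiable on int(dom h*) with the stated gradient
    (∀ y ∈ interior {w : Y | hstar w ≠ ⊤},
      HasGradientAt (fun w : Y => (⨅ z : X, ALfun A c hstar pstar σ xt (w, z)).toReal)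
        (Gh y - A (Pp (xt - σ • (ContinuousLinearMap.adjoint A y - c)))) y) ∧
    ContinuousOn (fun y : Y => Gh y - A (Pp (xt - σ • (ContinuousLinearMap.adjoint A y - c))))
      (interior {w : Y | hstar w ≠ ⊤}) ∧
    -- (c) characterization of the minimizer of Ψ
    (∀ (ybar : Y) (zbar : X),
      (∀ w : Y × X, ALfun A c hstar pstar σ xt (ybar, zbar) ≤ ALfun A c hstar pstar σ xt w) ↔
      ((∀ y : Y, (⨅ z : X, ALfun A c hstar pstar σ xt (ybar, z)) ≤
          ⨅ z : X, ALfun A c hstar pstar σ xt (y, z)) ∧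
        zbar = Pq (σ⁻¹ • xt - ContinuousLinearMap.adjoint A ybar + c))) := by
  classical
  have hσinv : (0:ℝ) < σ⁻¹ := inv_pos.mpr hσ
  have hσσ : σ * σ⁻¹ = 1 := mul_inv_cancel₀ (ne_of_gt hσ)
  obtain ⟨z0, hz0⟩ := pne
  obtain ⟨y0', hy0'⟩ := hne
  obtain ⟨hSpconv, hfpc⟩ := econvex_convexOn pconv pbot
  set adj : Y →L[ℝ] X := ContinuousLinearMap.adjoint A with hadj
  set fp : X → ℝ := fun z => (pstar z).toReal with hfp
  set fh : Y → ℝ := fun y => (hstar y).toReal with hfh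
  set s : Y → X := fun y => σ⁻¹ • xt - adj y + c with hs
  set wm : Y → X := fun y => xt - σ • (adj y - c) with hwm
  have hws : ∀ y, wm y = σ • s y := by
    intro y
    rw [hwm, hs]
    simp only [smul_sub, smul_add, smul_smul, hσσ, one_smul]
    abel
  -- Pq facts
  have hqfin : ∀ x, pstar (Pq x) ≠ ⊤ := fun x => glue_fin hσinv pbot hz0 (hPq x)
  have hqrm : ∀ x, ∀ u ∈ {u : X | pstar u ≠ ⊤},
      σ⁻¹ * fp (Pq x) + (1/2)*‖Pq x - x‖^2 ≤ σ⁻¹ * fp u + (1/2)*‖u - x‖^2 :=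
    fun x u hu => glue_realmin hσinv pbot (hqfin x) (hPq x) u hu
  have hPpEq : ∀ x, Pp x = x - σ • Pq (σ⁻¹ • x) := moreau_decomp pconv pbot hz0 hσ Pq Pp hPq hPp
  have hPpw : ∀ y, Pp (wm y) = σ • (s y - Pq (s y)) := by
    intro y
    rw [hPpEq, hws, smul_smul, inv_mul_cancel₀ (ne_of_gt hσ), one_smul, smul_sub]
  have hnormPpw : ∀ y, (1/(2*σ)) * ‖Pp (wm y)‖^2 = (σ/2) * ‖Pq (s y) - s y‖^2 := by
    intro y
    rw [hPpw, norm_smul, Real.norm_eq_abs, abs_of_pos hσ, mul_pow, norm_sub_rev]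
    field_simp
  -- the real quadratic part of the AL function
  set B : Y → X → ℝ := fun y z =>
    (σ / 2) * ‖adj y + z - c‖ ^ 2 - (inner ℝ xt (adj y + z - c) : ℝ) with hB
  have hALz : ∀ y z, ALfun A c hstar pstar σ xt (y, z)
      = hstar y + (pstar z + ((B y z : ℝ) : EReal)) := by
    intro y z
    rw [ALfun, add_assoc]
  have hKey : ∀ y z, B y z = (σ/2) * ‖z - s y‖^2 - (1/(2*σ)) * ‖xt‖^2 := by
    intro y z
    have hrw : adj y + z - c = (z - s y) + σ⁻¹ • xt := by
      simp only [hs]; abel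
    rw [hB]
    simp only
    rw [hrw, norm_add_sq_real, inner_add_right, real_inner_smul_right, real_inner_smul_right,
      norm_smul, Real.norm_eq_abs, abs_of_pos hσinv, mul_pow, real_inner_self_eq_norm_sq,
      real_inner_comm xt (z - s y)]
    field_simp
    ring
  -- minimality of Pq (s y) in z for fixed y
  have hmin_real : ∀ y z, pstar z ≠ ⊤ → fp (Pq (s y)) + B y (Pq (s y)) ≤ fp z + B y z := by
    intro y z hz
    have h := hqrm (s y) z hz
    have h2 := mul_le_mul_of_nonneg_left h (le_of_lt hσ)
    rw [hKey y z, hKey y (Pq (s y))]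
    nlinarith [h2, hσσ]
  have hzminE : ∀ y z, pstar (Pq (s y)) + ((B y (Pq (s y)) : ℝ) : EReal)
      ≤ pstar z + ((B y z : ℝ) : EReal) := by
    intro y z
    by_cases hz : pstar z = ⊤
    · rw [hz, EReal.top_add_of_ne_bot (EReal.coe_ne_bot _)]
      exact le_top
    · rw [show pstar (Pq (s y)) = ((fp (Pq (s y)) : ℝ) : EReal) from
        (EReal.coe_toReal (hqfin (s y)) (pbot _)).symm,
        show pstar z = ((fp z : ℝ) : EReal) from (EReal.coe_toReal hz (pbot _)).symm,
        ← EReal.coe_add, ← EReal.coe_add, EReal.coe_le_coe_iff]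
      exact hmin_real y z hz
  set R : Y → ℝ := fun y => (1 / (2 * σ)) * ‖Pp (wm y)‖ ^ 2 - (1 / (2 * σ)) * ‖xt‖ ^ 2 with hR
  have hconst : ∀ y, R y = B y (Pq (s y)) := by
    intro y
    rw [hR]
    simp only
    rw [hKey y (Pq (s y)), hnormPpw y]
  -- part (a)
  have parta : ∀ y : Y, (⨅ z : X, ALfun A c hstar pstar σ xt (y, z))
      = hstar y + pstar (Pq (s y)) + ((R y : ℝ) : EReal) := by
    intro y
    have h1 : (⨅ z : X, ALfun A c hstar pstar σ xt (y, z))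
        = hstar y + (pstar (Pq (s y)) + ((B y (Pq (s y)) : ℝ) : EReal)) := by
      refine le_antisymm ?_ ?_
      · rw [← hALz]
        exact iInf_le _ (Pq (s y))
      · refine le_iInf fun z => ?_
        rw [hALz]
        exact add_le_add le_rfl (hzminE y z)
    rw [h1, hconst y, add_assoc]
  -- part (c)
  have partc : ∀ (ybar : Y) (zbar : X),
      (∀ w : Y × X, ALfun A c hstar pstar σ xt (ybar, zbar) ≤ ALfun A c hstar pstar σ xt w) ↔
      ((∀ y : Y, (⨅ z : X, ALfun A c hstar pstar σ xt (ybar, z)) ≤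
          ⨅ z : X, ALfun A c hstar pstar σ xt (y, z)) ∧
        zbar = Pq (σ⁻¹ • xt - adj ybar + c)) := by
    intro ybar zbar
    constructor
    · intro hmin
      constructor
      · intro y
        refine le_iInf fun z => ?_
        exact le_trans (iInf_le _ zbar) (hmin (y, z))
      · -- finiteness
        have hfin : ALfun A c hstar pstar σ xt (ybar, zbar) ≠ ⊤ := by
          intro htop
          have h := hmin (y0', z0)
          rw [htop, top_le_iff] at h
          rw [hALz, show hstar y0' = ((fh y0' : ℝ) : EReal) from
            (EReal.coe_toReal hy0' (hbot _)).symm,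
            show pstar z0 = ((fp z0 : ℝ) : EReal) from (EReal.coe_toReal hz0 (pbot _)).symm,
            ← EReal.coe_add, ← EReal.coe_add] at h
          exact EReal.coe_ne_top _ h
        have hhfin : hstar ybar ≠ ⊤ := by
          intro htop
          apply hfin
          rw [hALz, htop, EReal.top_add_of_ne_bot]
          intro hb
          rw [EReal.add_eq_bot_iff] at hb
          rcases hb with hb | hb
          exacts [pbot _ hb, EReal.coe_ne_bot _ hb]
        have hpfin : pstar zbar ≠ ⊤ := by
          intro htop
          apply hfin
          rw [hALz, htop, EReal.top_add_of_ne_bot (EReal.coe_ne_bot _),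
            EReal.add_top_of_ne_bot (hbot _)]
        -- real minimality of zbar
        have hrmin : ∀ z ∈ {u : X | pstar u ≠ ⊤},
            σ⁻¹ * fp zbar + (1/2)*‖zbar - s ybar‖^2
              ≤ σ⁻¹ * fp z + (1/2)*‖z - s ybar‖^2 := by
          intro z hz
          have h := hmin (ybar, z)
          rw [hALz, hALz, show hstar ybar = ((fh ybar : ℝ) : EReal) from
            (EReal.coe_toReal hhfin (hbot _)).symm,
            show pstar zbar = ((fp zbar : ℝ) : EReal) from
            (EReal.coe_toReal hpfin (pbot _)).symm,
            show pstar z = ((fp z : ℝ) : EReal) from (EReal.coe_toReal hz (pbot _)).symm,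
            ← EReal.coe_add, ← EReal.coe_add, ← EReal.coe_add, ← EReal.coe_add,
            EReal.coe_le_coe_iff] at h
          have h' : fp zbar + B ybar zbar ≤ fp z + B ybar z := by linarith
          rw [hKey ybar z, hKey ybar zbar] at h'
          have h2 := mul_le_mul_of_nonneg_left h' (le_of_lt hσinv)
          nlinarith [h2, hσσ]
        exact core_unique hσinv hfpc hpfin (hqfin (s ybar)) hrmin (hqrm (s ybar))
    · rintro ⟨hψmin, hzeq⟩ w
      have h1 : ∀ z, ALfun A c hstar pstar σ xt (ybar, zbar) ≤
          ALfun A c hstar pstar σ xt (ybar, z) := by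
        intro z
        rw [hALz, hALz, hzeq]
        exact add_le_add le_rfl (hzminE ybar z)
      calc ALfun A c hstar pstar σ xt (ybar, zbar)
          ≤ ⨅ z : X, ALfun A c hstar pstar σ xt (ybar, z) := le_iInf h1
        _ ≤ ⨅ z : X, ALfun A c hstar pstar σ xt (w.1, z) := hψmin w.1
        _ ≤ ALfun A c hstar pstar σ xt (w.1, w.2) := iInf_le _ w.2
        _ = ALfun A c hstar pstar σ xt w := by rw [Prod.mk.eta]
  -- part (b): gradient
  set U : Set Y := interior {w : Y | hstar w ≠ ⊤} with hUdef
  have hUopen : IsOpen U := isOpen_interior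
  have hUsub : U ⊆ {w : Y | hstar w ≠ ⊤} := interior_subset
  obtain ⟨hShconv, hfhc⟩ := econvex_convexOn hconv hbot
  have hUconv : Convex ℝ U := hShconv.interior
  have hfhcU : ConvexOn ℝ U fh := hfhc.subset hUsub hUconv
  set C : Y → ℝ := fun y => fp (Pq (s y)) + R y with hC
  have hψeq : ∀ y, hstar y ≠ ⊤ →
      (⨅ z : X, ALfun A c hstar pstar σ xt (y, z)).toReal = fh y + C y := by
    intro y hy
    rw [parta y, show pstar (Pq (s y)) = ((fp (Pq (s y)) : ℝ) : EReal) from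
      (EReal.coe_toReal (hqfin (s y)) (pbot _)).symm, add_assoc, ← EReal.coe_add,
      show hstar y = ((fh y : ℝ) : EReal) from (EReal.coe_toReal hy (hbot _)).symm,
      ← EReal.coe_add, EReal.toReal_coe]
  -- envelope
  set envQ : X → ℝ := coreEnv fp σ⁻¹ Pq with henvQ
  have hCeq : ∀ y, C y = σ * envQ (s y) - (1/(2*σ)) * ‖xt‖^2 := by
    intro y
    rw [hC]
    simp only
    rw [henvQ, coreEnv, hR]
    simp only
    rw [hnormPpw y]
    have : ‖Pq (s y) - s y‖^2 = ‖Pq (s y) - s y‖^2 := rfl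
    field_simp
    ring
  have hgradC : ∀ y0 ∈ U, HasFDerivAt C
      (InnerProductSpace.toDual ℝ Y (-(A (Pp (wm y0))))) y0 := by
    intro y0 _
    have hEnvGrad : HasGradientAt envQ (s y0 - Pq (s y0)) (s y0) :=
      coreEnv_hasGradientAt hσinv hfpc hqfin hqrm (s y0)
    have hEnvFD : HasFDerivAt envQ
        (InnerProductSpace.toDual ℝ X (s y0 - Pq (s y0))) (s y0) :=
      hasGradientAt_iff_hasFDerivAt.mp hEnvGrad
    have hsFD : HasFDerivAt s (-adj : Y →L[ℝ] X) y0 := by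
      have h1 : HasFDerivAt (fun y : Y => σ⁻¹ • xt - adj y) (-adj : Y →L[ℝ] X) y0 := by
        simpa using (adj.hasFDerivAt (x := y0)).const_sub (σ⁻¹ • xt)
      rw [hs]; exact h1.add_const c
    have hcomp : HasFDerivAt (fun y => envQ (s y))
        ((InnerProductSpace.toDual ℝ X (s y0 - Pq (s y0))).comp (-adj : Y →L[ℝ] X)) y0 :=
      hEnvFD.comp y0 hsFD
    have hmul := hcomp.const_mul σ
    have hsub := hmul.sub_const ((1/(2*σ)) * ‖xt‖^2)
    have hfun : (fun y => σ * envQ (s y) - (1/(2*σ)) * ‖xt‖^2) = C := by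
      funext y
      rw [hCeq y]
    rw [hfun] at hsub
    refine hsub.congr_fderiv ?_
    symm
    ext h
    simp only [InnerProductSpace.toDual_apply_apply, ContinuousLinearMap.coe_smul',
      Pi.smul_apply, ContinuousLinearMap.coe_comp', Function.comp_apply,
      ContinuousLinearMap.neg_apply, smul_eq_mul]
    rw [inner_neg_left, hPpw y0, map_smul, real_inner_smul_left, inner_neg_right,
      real_inner_comm (adj h) (s y0 - Pq (s y0)), hadj,
      ContinuousLinearMap.adjoint_inner_left, real_inner_comm (A (s y0 - Pq (s y0))) h]
    ring
  have partb1 : ∀ y0 ∈ U,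
      HasGradientAt (fun y : Y => (⨅ z : X, ALfun A c hstar pstar σ xt (y, z)).toReal)
        (Gh y0 - A (Pp (wm y0))) y0 := by
    intro y0 hy0
    have hfhFD : HasFDerivAt fh (InnerProductSpace.toDual ℝ Y (Gh y0)) y0 :=
      hasGradientAt_iff_hasFDerivAt.mp (hgrad y0 hy0)
    have hsum := hfhFD.add (hgradC y0 hy0)
    have hsum' : HasFDerivAt (fun y => fh y + C y)
        (InnerProductSpace.toDual ℝ Y (Gh y0 - A (Pp (wm y0)))) y0 := by
      rw [sub_eq_add_neg, map_add]
      exact hsum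
    have hev : (fun y : Y => (⨅ z : X, ALfun A c hstar pstar σ xt (y, z)).toReal)
        =ᶠ[𝓝 y0] fun y => fh y + C y := by
      filter_upwards [hUopen.mem_nhds hy0] with y hy
      exact hψeq y (hUsub hy)
    rw [hasGradientAt_iff_hasFDerivAt]
    exact hsum'.congr_of_eventuallyEq hev
  -- part (b): continuity
  have hPqCont : Continuous Pq := by
    have hlip : LipschitzWith 1 Pq := by
      refine LipschitzWith.of_dist_le_mul fun a b => ?_
      rw [dist_eq_norm, dist_eq_norm, NNReal.coe_one, one_mul]
      exact core_nonexpansive hσinv hfpc hqfin hqrm a b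
    exact hlip.continuous
  have hPpCont : Continuous Pp := by
    have : Pp = fun x => x - σ • Pq (σ⁻¹ • x) := funext hPpEq
    rw [this]
    exact continuous_id.sub ((hPqCont.comp (continuous_const_smul σ⁻¹)).const_smul σ)
  have hwmCont : Continuous wm := by
    rw [hwm]
    exact continuous_const.sub ((adj.continuous.sub continuous_const).const_smul σ)
  have partb2 : ContinuousOn (fun y : Y => Gh y - A (Pp (wm y))) U := by
    have hGhCont : ContinuousOn Gh U := grad_continuousOn hUopen hfhcU hgrad
    exact hGhCont.sub ((A.continuous.comp (hPpCont.comp hwmCont)).continuousOn)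
  exact ⟨parta, partb1, partb2, partc⟩
end
end

section
/- (Moreau identity) Let p: X → (−∞, +∞] be a closed proper convex function on a real finite dimensional Euclidean space X, with Fenchel conjugate p*, and let t > 0. Then for every x ∈ X, Prox_{tp}(x) + t · Prox_{p*/t}(x/t) = x. -/
/- STATEMENT 10 (Moreau identity): for a closed proper convex function p with conjugate p*
and t > 0, Prox_{tp}(x) + t·Prox_{p*/t}(x/t) = x for every x. -/

open Set Classical

noncomputable section

lemma aux_limit {A B : ℝ} (hB : 0 ≤ B)
    (h : ∀ s : ℝ, 0 < s → s ≤ 1 → 0 ≤ A + s * B) : 0 ≤ A := by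
  by_contra h'
  push_neg at h'
  set s := min 1 ((-A) / (2 * (B + 1))) with hs
  have hs0 : 0 < s := lt_min one_pos (div_pos (by linarith) (by linarith))
  have h1 := h s hs0 (min_le_left _ _)
  have hsle : s ≤ (-A) / (2 * (B + 1)) := min_le_right _ _
  have hB1 : (0:ℝ) < B + 1 := by linarith
  have key : s * (B + 1) ≤ -A / 2 := by
    have e : ((-A) / (2 * (B + 1))) * (B + 1) = -A / 2 := by field_simp
    nlinarith [mul_le_mul_of_nonneg_right hsle hB1.le]
  nlinarith

theorem moreau_identity
    {X : Type*} [NormedAddCommGroup X] [InnerProductSpace ℝ X] [FiniteDimensional ℝ X]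
    (p : X → EReal) (t : ℝ) (ht : 0 < t)
    -- p closed proper convex
    (pconv : EConvex p) (plsc : LowerSemicontinuous p)
    (pbot : ∀ x, p x ≠ ⊥) (pne : ∃ x, p x ≠ ⊤)
    -- P1 = Prox_{tp} and P2 = Prox_{p*/t}
    (P1 P2 : X → X)
    (hP1 : ∀ x u : X,
      ((t : ℝ) : EReal) * p (P1 x) + (((1 / 2) * ‖P1 x - x‖ ^ 2 : ℝ) : EReal) ≤
        ((t : ℝ) : EReal) * p u + (((1 / 2) * ‖u - x‖ ^ 2 : ℝ) : EReal))
    (hP2 : ∀ x u : X,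
      ((t⁻¹ : ℝ) : EReal) * conjE p (P2 x) + (((1 / 2) * ‖P2 x - x‖ ^ 2 : ℝ) : EReal) ≤
        ((t⁻¹ : ℝ) : EReal) * conjE p u + (((1 / 2) * ‖u - x‖ ^ 2 : ℝ) : EReal)) :
    ∀ x : X, P1 x + t • P2 (t⁻¹ • x) = x := by
  intro x
  obtain ⟨u₀, hu₀⟩ := pne
  set u := P1 x with hu
  set v := t⁻¹ • (x - u) with hv
  have ht' : (0:ℝ) < t⁻¹ := inv_pos.mpr ht
  -- p u is finite
  have hput : p u ≠ ⊤ := by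
    intro htop
    have h1 := hP1 x u₀
    rw [← hu, htop, EReal.coe_mul_top_of_pos ht,
      EReal.top_add_of_ne_bot (EReal.coe_ne_bot _)] at h1
    have h2 : p u₀ = ((p u₀).toReal : EReal) := (EReal.coe_toReal hu₀ (pbot u₀)).symm
    rw [h2, ← EReal.coe_mul, ← EReal.coe_add] at h1
    exact EReal.coe_ne_top _ (top_le_iff.1 h1)
  set r := (p u).toReal with hr
  have hpu : p u = (r : EReal) := (EReal.coe_toReal hput (pbot u)).symm
  -- subgradient inequality: v ∈ ∂p(u)
  have subg : ∀ w : X, ((r + inner ℝ v (w - u) : ℝ) : EReal) ≤ p w := by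
    intro w
    by_cases hw : p w = ⊤
    · rw [hw]; exact le_top
    have hpw : p w = (((p w).toReal : ℝ) : EReal) := (EReal.coe_toReal hw (pbot w)).symm
    set r' := (p w).toReal with hr'
    rw [hpw, EReal.coe_le_coe_iff]
    set d := w - u with hd
    have key : ∀ s : ℝ, 0 < s → s ≤ 1 →
        0 ≤ (t * (r' - r) + (inner ℝ (u - x) d : ℝ)) + s * (‖d‖ ^ 2 / 2) := by
      intro s hs0 hs1
      have h1 := hP1 x (s • w + (1 - s) • u)
      rw [← hu, hpu] at h1
      have hc := pconv w u s (1 - s) hs0.le (by linarith) (by ring)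
      rw [hpu, hpw] at hc
      have hc2 : ((s : ℝ) : EReal) * ((r' : ℝ) : EReal) + (((1 - s : ℝ)) : EReal) * ((r : ℝ) : EReal)
          = ((s * r' + (1 - s) * r : ℝ) : EReal) := by
        rw [← EReal.coe_mul, ← EReal.coe_mul, ← EReal.coe_add]
      rw [hc2] at hc
      have h2 : ((t : ℝ) : EReal) * p (s • w + (1 - s) • u) ≤
          ((t * (s * r' + (1 - s) * r) : ℝ) : EReal) := by
        calc ((t : ℝ) : EReal) * p (s • w + (1 - s) • u)
            ≤ ((t : ℝ) : EReal) * ((s * r' + (1 - s) * r : ℝ) : EReal) :=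
              mul_le_mul_of_nonneg_left hc (by exact_mod_cast ht.le)
          _ = ((t * (s * r' + (1 - s) * r) : ℝ) : EReal) := by rw [← EReal.coe_mul]
      have h3 : ((t * r + (1 / 2) * ‖u - x‖ ^ 2 : ℝ) : EReal) ≤
          ((t * (s * r' + (1 - s) * r) + (1 / 2) * ‖s • w + (1 - s) • u - x‖ ^ 2 : ℝ) : EReal) := by
        calc ((t * r + (1 / 2) * ‖u - x‖ ^ 2 : ℝ) : EReal)
            = ((t : ℝ) : EReal) * ((r : ℝ) : EReal) + (((1 / 2) * ‖u - x‖ ^ 2 : ℝ) : EReal) := by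
              rw [← EReal.coe_mul, ← EReal.coe_add]
          _ ≤ ((t : ℝ) : EReal) * p (s • w + (1 - s) • u) +
              (((1 / 2) * ‖s • w + (1 - s) • u - x‖ ^ 2 : ℝ) : EReal) := h1
          _ ≤ ((t * (s * r' + (1 - s) * r) : ℝ) : EReal) +
              (((1 / 2) * ‖s • w + (1 - s) • u - x‖ ^ 2 : ℝ) : EReal) :=
              add_le_add_left h2 _
          _ = _ := by rw [← EReal.coe_add]
      rw [EReal.coe_le_coe_iff] at h3
      have hpt : s • w + (1 - s) • u - x = (u - x) + s • d := by
        rw [hd]; module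
      rw [hpt] at h3
      have hnorm : ‖(u - x) + s • d‖ ^ 2
          = ‖u - x‖ ^ 2 + 2 * s * (inner ℝ (u - x) d : ℝ) + s ^ 2 * ‖d‖ ^ 2 := by
        rw [norm_add_sq_real, real_inner_smul_right, norm_smul, Real.norm_eq_abs,
          abs_of_pos hs0]
        ring
      rw [hnorm] at h3
      have hG : 0 ≤ s * ((t * (r' - r) + (inner ℝ (u - x) d : ℝ)) + s * (‖d‖ ^ 2 / 2)) := by
        nlinarith
      by_contra hGneg
      push_neg at hGneg
      nlinarith [mul_pos hs0 (neg_pos.mpr hGneg)]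
    have hA : 0 ≤ t * (r' - r) + (inner ℝ (u - x) d : ℝ) := aux_limit (by positivity) key
    have hvd : (inner ℝ v d : ℝ) = t⁻¹ * (inner ℝ (x - u) d : ℝ) := by
      rw [hv, real_inner_smul_left]
    have hneg : (inner ℝ (x - u) d : ℝ) = -(inner ℝ (u - x) d : ℝ) := by
      have e : x - u = -(u - x) := by abel
      rw [e, inner_neg_left]
    have hmul := mul_le_mul_of_nonneg_left hA ht'.le
    rw [mul_zero] at hmul
    have h5 : t⁻¹ * (t * (r' - r) + (inner ℝ (u - x) d : ℝ))
        = (r' - r) + t⁻¹ * (inner ℝ (u - x) d : ℝ) := by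
      field_simp
    rw [h5] at hmul
    rw [hvd, hneg, mul_neg]
    linarith
  -- value of the conjugate at v
  have hconj_lb : ∀ z : X, (((inner ℝ u z : ℝ) - r : ℝ) : EReal) ≤ conjE p z := by
    intro z
    have e : ((inner ℝ u z : ℝ) : EReal) - p u = (((inner ℝ u z : ℝ) - r : ℝ) : EReal) := by
      rw [hpu, ← EReal.coe_sub]
    rw [← e]
    exact le_iSup (fun w => ((inner ℝ w z : ℝ) : EReal) - p w) u
  have hconjv : conjE p v = (((inner ℝ u v : ℝ) - r : ℝ) : EReal) := by
    apply le_antisymm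
    · apply iSup_le
      intro w
      by_cases hw : p w = ⊤
      · rw [hw, EReal.sub_top]; exact bot_le
      have hpw : p w = (((p w).toReal : ℝ) : EReal) := (EReal.coe_toReal hw (pbot w)).symm
      rw [hpw, ← EReal.coe_sub, EReal.coe_le_coe_iff]
      have hs := subg w
      rw [hpw, EReal.coe_le_coe_iff] at hs
      have e : (inner ℝ v (w - u) : ℝ) = (inner ℝ w v : ℝ) - (inner ℝ u v : ℝ) := by
        rw [real_inner_comm (w - u) v, inner_sub_left]
      rw [e] at hs
      linarith
    · exact hconj_lb v
  -- v is "strongly" optimal for the second prox problem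
  have hmin : ∀ w : X,
      ((t⁻¹ * ((inner ℝ u v : ℝ) - r) + (1 / 2) * ‖v - t⁻¹ • x‖ ^ 2
        + (1 / 2) * ‖w - v‖ ^ 2 : ℝ) : EReal) ≤
      ((t⁻¹ : ℝ) : EReal) * conjE p w + (((1 / 2) * ‖w - t⁻¹ • x‖ ^ 2 : ℝ) : EReal) := by
    intro w
    by_cases hw : conjE p w = ⊤
    · rw [hw, EReal.coe_mul_top_of_pos ht',
        EReal.top_add_of_ne_bot (EReal.coe_ne_bot _)]
      exact le_top
    have hwb : conjE p w ≠ ⊥ := by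
      intro hb
      have h := hconj_lb w
      rw [hb, le_bot_iff] at h
      exact EReal.coe_ne_bot _ h
    set s' := (conjE p w).toReal with hs'
    have hcw : conjE p w = (s' : EReal) := (EReal.coe_toReal hw hwb).symm
    have hlb : (inner ℝ u w : ℝ) - r ≤ s' := by
      have h := hconj_lb w
      rw [hcw, EReal.coe_le_coe_iff] at h
      exact h
    rw [hcw, ← EReal.coe_mul, ← EReal.coe_add, EReal.coe_le_coe_iff]
    have e1 : v - t⁻¹ • x = -(t⁻¹ • u) := by rw [hv]; module
    have e2 : w - t⁻¹ • x = (w - v) - t⁻¹ • u := by rw [hv]; module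
    rw [e1, e2, norm_neg, norm_sub_sq_real (w - v) (t⁻¹ • u)]
    have e3 : (inner ℝ (w - v) (t⁻¹ • u) : ℝ) = t⁻¹ * ((inner ℝ u w : ℝ) - (inner ℝ u v : ℝ)) := by
      rw [real_inner_smul_right, inner_sub_left, real_inner_comm u w, real_inner_comm u v]
    rw [e3]
    nlinarith [mul_le_mul_of_nonneg_left hlb ht'.le]
  -- conclude P2 (x/t) = v
  set q := P2 (t⁻¹ • x) with hq
  have h2 := hP2 (t⁻¹ • x) v
  rw [← hq, hconjv, ← EReal.coe_mul, ← EReal.coe_add] at h2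
  have h4 := le_trans (hmin q) h2
  rw [EReal.coe_le_coe_iff] at h4
  have hqv : q = v := by
    have hn : ‖q - v‖ ^ 2 ≤ 0 := by linarith
    have hn0 : ‖q - v‖ = 0 := by nlinarith [norm_nonneg (q - v)]
    rw [← sub_eq_zero]
    exact norm_eq_zero.mp hn0
  rw [hqv, hv, smul_smul, mul_inv_cancel₀ ht.ne', one_smul]
  abel
end
end
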